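/- arXiv:0907.0259 — 6 statements merged into one kernel-verified Lean document; each statement's English description precedes it below -/
import Mathlib

section
/- Let (X,d) be a compact metric space, K : X × X → ℝ a continuous function, μ a Borel probability measure on X, and T : X → X a measure-preserving transformation that is ergodic with respect to μ (T need not be continuous). Then for μ-almost every x ∈ X, (1/n²) ∑_{i=1}^{n} ∑_{j=1}^{n} K(T^i x, T^j x) converges as n → ∞ to ∬_{X×X} K(y,z) dμ(y) dμ(z). -/
set_option linter.unusedSectionVars false
set_option linter.unnecessarySimpa false

open MeasureTheory Filter Topology Finset Function

section Maximal

variable {X : Type*} [MeasurableSpace X] {μ : Measure X} [IsProbabilityMeasure μ]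
  {T : X → X} {g : X → ℝ} {C : ℝ}

/-- running maximum of Birkhoff sums, together with 0. -/
noncomputable def maxS (T : X → X) (g : X → ℝ) : ℕ → X → ℝ
  | 0 => fun _ => 0
  | (n+1) => fun x => max (maxS T g n x) (birkhoffSum T g (n+1) x)

lemma maxS_nonneg (n : ℕ) (x : X) : 0 ≤ maxS T g n x := by
  induction n with
  | zero => simp [maxS]
  | succ n ih => exact le_trans ih (le_max_left _ _)

lemma maxS_mono (x : X) : Monotone (fun n => maxS T g n x) := by
  apply monotone_nat_of_le_succ
  intro n; exact le_max_left _ _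

lemma birkhoffSum_le_maxS : ∀ {n k : ℕ}, k ≤ n → ∀ x : X,
    birkhoffSum T g k x ≤ maxS T g n x := by
  intro n
  induction n with
  | zero => intro k hk x; interval_cases k; simp [maxS]
  | succ n ih =>
      intro k hk x
      rcases Nat.lt_or_ge k (n+1) with h | h
      · exact (ih (Nat.lt_succ_iff.1 h) x).trans (maxS_mono x (Nat.le_succ n))
      · have : k = n + 1 := le_antisymm hk h
        subst this
        exact le_max_right _ _

lemma maxS_le (n : ℕ) (x : X) : maxS T g n x ≤ max 0 (g x + maxS T g n (T x)) := by
  induction n with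
  | zero => simp [maxS]
  | succ n ih =>
      refine max_le ?_ ?_
      · refine ih.trans (max_le_max le_rfl ?_)
        exact add_le_add (le_refl _) (maxS_mono (T x) (Nat.le_succ n))
      · rw [birkhoffSum_succ']
        refine le_max_of_le_right ?_
        exact add_le_add (le_refl _) (birkhoffSum_le_maxS (Nat.le_succ n) (T x))

lemma maxS_pos {n : ℕ} {x : X} (h : 0 < maxS T g n x) :
    ∃ k, 1 ≤ k ∧ k ≤ n ∧ 0 < birkhoffSum T g k x := by
  induction n with
  | zero => simp [maxS] at h
  | succ n ih =>
      rcases lt_max_iff.1 h with h' | h'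
      · obtain ⟨k, h1, h2, h3⟩ := ih h'
        exact ⟨k, h1, h2.trans (Nat.le_succ n), h3⟩
      · exact ⟨n + 1, Nat.succ_le_succ (Nat.zero_le n), le_rfl, h'⟩

lemma measurable_birkhoffSum (hT : Measurable T) (hg : Measurable g) (n : ℕ) :
    Measurable (birkhoffSum T g n) := by
  apply Finset.measurable_sum
  intro i _
  exact hg.comp (hT.iterate i)

lemma maxS_measurable (hT : Measurable T) (hg : Measurable g) (n : ℕ) :
    Measurable (maxS T g n) := by
  induction n with
  | zero => simpa [maxS] using measurable_const
  | succ n ih => exact Measurable.max ih (measurable_birkhoffSum hT hg (n+1))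

lemma abs_birkhoffSum_le (hC : ∀ x, |g x| ≤ C) (n : ℕ) (x : X) :
    |birkhoffSum T g n x| ≤ n * C := by
  calc |birkhoffSum T g n x| ≤ ∑ i ∈ range n, |g (T^[i] x)| := Finset.abs_sum_le_sum_abs _ _
    _ ≤ ∑ i ∈ range n, C := Finset.sum_le_sum fun i _ => hC _
    _ = n * C := by simp [mul_comm]

lemma abs_maxS_le (hC : ∀ x, |g x| ≤ C) (n : ℕ) (x : X) :
    |maxS T g n x| ≤ n * C := by
  rw [abs_of_nonneg (maxS_nonneg n x)]
  induction n with
  | zero => simp [maxS]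
  | succ n ih =>
      refine max_le (ih.trans ?_) ((le_abs_self _).trans (abs_birkhoffSum_le hC (n+1) x))
      have : (0:ℝ) ≤ C := le_trans (abs_nonneg _) (hC x)
      push_cast; nlinarith

lemma integrable_of_bdd {f : X → ℝ} (hf : Measurable f) (hC : ∀ x, |f x| ≤ C) :
    Integrable f μ := by
  refine ⟨hf.aestronglyMeasurable, ?_⟩
  exact MeasureTheory.HasFiniteIntegral.of_bounded (C := C)
    (Filter.Eventually.of_forall (fun x => by simpa [Real.norm_eq_abs] using hC x))

/-- The maximal ergodic lemma (Garsia's argument). -/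
lemma maximal_ergodic (hT : MeasurePreserving T μ μ) (hg : Measurable g)
    (hC : ∀ x, |g x| ≤ C) (n : ℕ) :
    0 ≤ ∫ x in {x | 0 < maxS T g n x}, g x ∂μ := by
  have hTm : Measurable T := hT.measurable
  set E : Set X := {x | 0 < maxS T g n x} with hE
  have hEm : MeasurableSet E := measurableSet_lt measurable_const (maxS_measurable hTm hg n)
  have hMint : Integrable (maxS T g n) μ := integrable_of_bdd (maxS_measurable hTm hg n) (abs_maxS_le hC n)
  have hMTint : Integrable (fun x => maxS T g n (T x)) μ :=
    integrable_of_bdd ((maxS_measurable hTm hg n).comp hTm) (fun x => abs_maxS_le hC n (T x))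
  have hgint : Integrable g μ := integrable_of_bdd hg hC
  -- on E, g x ≥ maxS n x - maxS n (T x)
  have key : ∀ x ∈ E, maxS T g n x - maxS T g n (T x) ≤ g x := by
    intro x hx
    rcases le_max_iff.1 (maxS_le (T := T) (g := g) n x) with h | h
    · exact absurd (lt_of_lt_of_le hx h) (lt_irrefl 0)
    · linarith
  have h1 : ∫ x in E, (maxS T g n x - maxS T g n (T x)) ∂μ ≤ ∫ x in E, g x ∂μ :=
    setIntegral_mono_on (hMint.sub hMTint).integrableOn hgint.integrableOn hEm key
  have h2 : ∫ x in E, (maxS T g n x - maxS T g n (T x)) ∂μ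
      = (∫ x in E, maxS T g n x ∂μ) - ∫ x in E, maxS T g n (T x) ∂μ :=
    integral_sub hMint.integrableOn hMTint.integrableOn
  have h3 : ∫ x in E, maxS T g n x ∂μ = ∫ x, maxS T g n x ∂μ := by
    have hc : ∫ x in Eᶜ, maxS T g n x ∂μ = 0 := by
      apply setIntegral_eq_zero_of_forall_eq_zero
      intro x hx
      have : ¬ (0 < maxS T g n x) := hx
      exact le_antisymm (not_lt.1 this) (maxS_nonneg n x)
    have := integral_add_compl hEm hMint
    linarith
  have h4 : ∫ x in E, maxS T g n (T x) ∂μ ≤ ∫ x, maxS T g n (T x) ∂μ :=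
    setIntegral_le_integral hMTint (Filter.Eventually.of_forall fun x => maxS_nonneg n (T x))
  have h5 : ∫ x, maxS T g n (T x) ∂μ = ∫ x, maxS T g n x ∂μ := by
    conv_rhs => rw [← hT.map_eq]
    rw [integral_map hTm.aemeasurable (maxS_measurable hTm hg n).aestronglyMeasurable]
  linarith

lemma birkhoff_one_sided (hT : Ergodic T μ) (hg : Measurable g) (hC : ∀ x, |g x| ≤ C)
    {c : ℝ} (hc : ∫ x, g x ∂μ < c) :
    ∀ᵐ x ∂μ, ∀ᶠ n : ℕ in atTop, (n:ℝ)⁻¹ * birkhoffSum T g n x < c := by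
  have hTm : Measurable T := hT.toMeasurePreserving.measurable
  set c' : ℝ := ((∫ x, g x ∂μ) + c) / 2 with hc'
  have hc1 : ∫ x, g x ∂μ < c' := by rw [hc']; linarith
  have hc2 : c' < c := by rw [hc']; linarith
  set h : X → ℝ := fun x => g x - c' with hh
  have hhm : Measurable h := hg.sub measurable_const
  set C' : ℝ := C + |c'| with hC'def
  have hhC : ∀ x, |h x| ≤ C' := by
    intro x
    calc |h x| ≤ |g x| + |c'| := abs_sub _ _
      _ ≤ C + |c'| := by have := hC x; linarith
  have hhint : Integrable h μ := integrable_of_bdd hhm hhC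
  have hint_neg : ∫ x, h x ∂μ < 0 := by
    have : ∫ x, h x ∂μ = (∫ x, g x ∂μ) - c' := by
      rw [hh]
      rw [integral_sub (integrable_of_bdd hg hC) (integrable_const _)]
      simp
    rw [this]; linarith
  set A : ℕ → X → ℝ := fun n x => (n:ℝ)⁻¹ * birkhoffSum T h n x with hA
  have hAm : ∀ n, Measurable (A n) := fun n =>
    (measurable_birkhoffSum hTm hhm n).const_mul _
  set L : Set X := ⋃ (q : ℚ), ⋃ (_ : 0 < q), ⋂ (N : ℕ), ⋃ (n : ℕ), ⋃ (_ : N ≤ n),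
      {x | (q:ℝ) < A n x} with hLdef
  have hmemL : ∀ x, x ∈ L ↔ ∃ q : ℚ, 0 < q ∧ ∀ N : ℕ, ∃ n, N ≤ n ∧ (q:ℝ) < A n x := by
    intro x
    simp only [hLdef, Set.mem_iUnion, Set.mem_iInter, Set.mem_setOf_eq, exists_prop]
  have hLm : MeasurableSet L := by
    refine MeasurableSet.iUnion fun q => MeasurableSet.iUnion fun _ =>
      MeasurableSet.iInter fun N => MeasurableSet.iUnion fun n => MeasurableSet.iUnion fun _ => ?_
    exact measurableSet_lt measurable_const (hAm n)
  -- error bound between A n (T x) and A n x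
  have shift : ∀ (n : ℕ) (x : X), |A n (T x) - A n x| ≤ 2 * C' / n := by
    intro n x
    rcases Nat.eq_zero_or_pos n with rfl | hn
    · simp [hA]
    · have hdiff : birkhoffSum T h n (T x) - birkhoffSum T h n x = h (T^[n] x) - h x :=
        birkhoffSum_apply_sub_birkhoffSum _ _ _ _
      have : A n (T x) - A n x = (n:ℝ)⁻¹ * (h (T^[n] x) - h x) := by
        rw [hA]; dsimp only; rw [← mul_sub, hdiff]
      have habs : |h (T^[n] x) - h x| ≤ 2 * C' := by
        calc |h (T^[n] x) - h x| ≤ |h (T^[n] x)| + |h x| := abs_sub _ _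
          _ ≤ C' + C' := add_le_add (hhC _) (hhC _)
          _ = 2 * C' := by ring
      rw [this, abs_mul, abs_of_nonneg (by positivity : (0:ℝ) ≤ (n:ℝ)⁻¹), div_eq_inv_mul]
      exact mul_le_mul_of_nonneg_left habs (by positivity)
  have hC'nonneg : (0:ℝ) ≤ C' := by
    rw [hC'def]
    have : (0:ℝ) ≤ C := by
      by_contra hneg
      push_neg at hneg
      have hne : Nonempty X := by
        by_contra hemp
        rw [not_nonempty_iff] at hemp
        have : (μ Set.univ) = 1 := measure_univ
        rw [Set.univ_eq_empty_iff.2 hemp] at this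
        simp at this
      obtain ⟨x⟩ := hne
      exact absurd (lt_of_le_of_lt (hC x) hneg) (not_lt.2 (abs_nonneg _))
    positivity
  -- key step for invariance
  have step : ∀ (u v : ℕ → ℝ), (∀ n, |u n - v n| ≤ 2 * C' / n) →
      ∀ q : ℚ, 0 < q → (∀ N : ℕ, ∃ n, N ≤ n ∧ (q:ℝ) < u n) →
      (0:ℚ) < q / 2 ∧ ∀ N : ℕ, ∃ n, N ≤ n ∧ ((q / 2 : ℚ) : ℝ) < v n := by
    intro u v herr q hq hfreq
    have hq2 : (0:ℚ) < q / 2 := by positivity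
    refine ⟨hq2, fun N => ?_⟩
    have htend : Tendsto (fun n : ℕ => 2 * C' / n) atTop (𝓝 0) :=
      tendsto_const_div_atTop_nhds_zero_nat _
    have hev : ∀ᶠ n : ℕ in atTop, 2 * C' / n < (q:ℝ) / 2 := by
      have : (0:ℝ) < (q:ℝ) / 2 := by positivity
      exact htend.eventually_lt_const this
    obtain ⟨M, hM⟩ := eventually_atTop.1 hev
    obtain ⟨n, hn1, hn2⟩ := hfreq (max N M)
    refine ⟨n, le_trans (le_max_left _ _) hn1, ?_⟩
    have h1 : |u n - v n| ≤ 2 * C' / n := herr n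
    have h2 : 2 * C' / n < (q:ℝ) / 2 := hM n (le_trans (le_max_right _ _) hn1)
    have : v n ≥ u n - |u n - v n| := by
      have := abs_sub_abs_le_abs_sub (u n) (v n)
      have h3 := le_abs_self (u n - v n)
      linarith
    push_cast
    linarith
  have hinv : T ⁻¹' L = L := by
    ext x
    simp only [Set.mem_preimage, hmemL]
    constructor
    · rintro ⟨q, hq, hfreq⟩
      obtain ⟨h1, h2⟩ := step (fun n => A n (T x)) (fun n => A n x) (fun n => shift n x) q hq hfreq
      exact ⟨q / 2, h1, h2⟩
    · rintro ⟨q, hq, hfreq⟩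
      obtain ⟨h1, h2⟩ := step (fun n => A n x) (fun n => A n (T x))
        (fun n => by simpa [abs_sub_comm] using shift n x) q hq hfreq
      exact ⟨q / 2, h1, h2⟩
  have hL0 : μ L = 0 := by
    rcases hT.toPreErgodic.ae_empty_or_univ hLm hinv with h0 | h1
    · exact ae_eq_empty.mp h0
    · exfalso
      -- L has full measure; L ⊆ D := union of maximal sets; ∫_D h ≥ 0 but ∫ h < 0
      set E : ℕ → Set X := fun n => {x | 0 < maxS T h n x} with hEdef
      have hEm : ∀ n, MeasurableSet (E n) := fun n =>
        measurableSet_lt measurable_const (maxS_measurable hTm hhm n)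
      have hEmono : Monotone E := by
        intro m n hmn x hx
        exact lt_of_lt_of_le hx (maxS_mono x hmn)
      set D : Set X := ⋃ n, E n with hDdef
      have hLD : L ⊆ D := by
        intro x hx
        obtain ⟨q, hq, hfreq⟩ := (hmemL x).1 hx
        obtain ⟨n, hn1, hn2⟩ := hfreq 1
        have hq0 : (0:ℝ) < (q:ℝ) := by exact_mod_cast hq
        have hSpos : 0 < birkhoffSum T h n x := by
          by_contra hS
          push_neg at hS
          have : (n:ℝ)⁻¹ * birkhoffSum T h n x ≤ 0 :=
            mul_nonpos_of_nonneg_of_nonpos (by positivity) hS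
          rw [hA] at hn2; dsimp only at hn2; linarith
        refine Set.mem_iUnion.2 ⟨n, ?_⟩
        exact lt_of_lt_of_le hSpos (birkhoffSum_le_maxS le_rfl x)
      have hDfull : μ Dᶜ = 0 := by
        have h2 : μ Lᶜ = 0 := ae_eq_univ.mp h1
        exact measure_mono_null (Set.compl_subset_compl.2 hLD) h2
      have hrestrict : μ.restrict D = μ := by
        apply Measure.restrict_eq_self_of_ae_mem
        rw [ae_iff]
        exact hDfull
      have htends : Tendsto (fun n => ∫ x in E n, h x ∂μ) atTop (𝓝 (∫ x in D, h x ∂μ)) :=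
        MeasureTheory.tendsto_setIntegral_of_monotone hEm hEmono hhint.integrableOn
      have hge : 0 ≤ ∫ x in D, h x ∂μ :=
        ge_of_tendsto' htends fun n =>
          maximal_ergodic hT.toMeasurePreserving hhm hhC n
      rw [hrestrict] at hge
      linarith
  -- conclude
  have hae : ∀ᵐ x ∂μ, x ∉ L := by
    rw [ae_iff]
    simpa using hL0
  filter_upwards [hae] with x hx
  rw [hmemL] at hx
  push_neg at hx
  obtain ⟨q0, hq0a, hq0b⟩ := exists_rat_btwn (by linarith : (0:ℝ) < c - c')
  have hq0pos : (0:ℚ) < q0 := by exact_mod_cast hq0a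
  obtain ⟨N, hN⟩ := hx q0 hq0pos
  rw [eventually_atTop]
  refine ⟨max N 1, fun n hn => ?_⟩
  have hn1 : 1 ≤ n := le_trans (le_max_right _ _) hn
  have hnN : N ≤ n := le_trans (le_max_left _ _) hn
  have hAle : A n x ≤ (q0:ℝ) := hN n hnN
  have hsum : birkhoffSum T h n x = birkhoffSum T g n x - n * c' := by
    simp only [birkhoffSum, hh]
    rw [Finset.sum_sub_distrib]
    simp [mul_comm]
  have hninv : (n:ℝ)⁻¹ * (n:ℝ) = 1 :=
    inv_mul_cancel₀ (Nat.cast_ne_zero.mpr (by omega))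
  have : A n x = (n:ℝ)⁻¹ * birkhoffSum T g n x - c' := by
    rw [hA]; dsimp only; rw [hsum, mul_sub, ← mul_assoc, hninv, one_mul]
  rw [this] at hAle
  linarith

/-- Pointwise Birkhoff ergodic theorem for bounded measurable functions. -/
lemma birkhoff_ergodic (hT : Ergodic T μ) (hg : Measurable g) (hC : ∀ x, |g x| ≤ C) :
    ∀ᵐ x ∂μ, Tendsto (fun n : ℕ => (n:ℝ)⁻¹ * birkhoffSum T g n x) atTop
      (𝓝 (∫ x, g x ∂μ)) := by
  have H1 : ∀ᵐ x ∂μ, ∀ q : ℚ, (∫ x, g x ∂μ) < q →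
      ∀ᶠ n : ℕ in atTop, (n:ℝ)⁻¹ * birkhoffSum T g n x < q := by
    rw [ae_all_iff]
    intro q
    rcases lt_or_ge (∫ x, g x ∂μ) (q:ℝ) with hq | hq
    · filter_upwards [birkhoff_one_sided hT hg hC hq] with x hx _
      exact hx
    · exact Eventually.of_forall fun x hlt => absurd hlt (not_lt.2 hq)
  have H2 : ∀ᵐ x ∂μ, ∀ q : ℚ, (q:ℝ) < (∫ x, g x ∂μ) →
      ∀ᶠ n : ℕ in atTop, (q:ℝ) < (n:ℝ)⁻¹ * birkhoffSum T g n x := by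
    rw [ae_all_iff]
    intro q
    rcases lt_or_ge (q:ℝ) (∫ x, g x ∂μ) with hq | hq
    · have hneg : ∫ x, (fun y => -g y) x ∂μ < -q := by
        rw [integral_neg]; linarith
      have := birkhoff_one_sided hT hg.neg (C := C)
        (fun x => by simpa using hC x) hneg
      filter_upwards [this] with x hx _
      refine hx.mono fun n hn => ?_
      have hsum : birkhoffSum T (-g) n x = - birkhoffSum T g n x := by
        simp [birkhoffSum]
      rw [hsum] at hn
      nlinarith [hn]
    · exact Eventually.of_forall fun x hlt => absurd hlt (not_lt.2 hq)
  filter_upwards [H1, H2] with x hx1 hx2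
  rw [tendsto_order]
  constructor
  · intro a ha
    obtain ⟨q, hq1, hq2⟩ := exists_rat_btwn ha
    exact (hx2 q hq2).mono fun n hn => lt_trans hq1 hn
  · intro a ha
    obtain ⟨q, hq1, hq2⟩ := exists_rat_btwn ha
    exact (hx1 q hq1).mono fun n hn => lt_trans hn hq2

end Maximal

section Main

variable {X : Type*} [MetricSpace X] [CompactSpace X] [MeasurableSpace X] [BorelSpace X]

theorem stmt_0' (μ : Measure X) [IsProbabilityMeasure μ] (T : X → X) (hT : Ergodic T μ)
    (K : X × X → ℝ) (hK : Continuous K) :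
    ∀ᵐ x ∂μ, Tendsto (fun n : ℕ => ((n : ℝ) ^ 2)⁻¹ *
        ∑ i ∈ Finset.Icc 1 n, ∑ j ∈ Finset.Icc 1 n, K (T^[i] x, T^[j] x))
      atTop (𝓝 (∫ y, ∫ z, K (y, z) ∂μ ∂μ)) := by
  have hTm : Measurable T := hT.toMeasurePreserving.measurable
  have hne : Nonempty X := by
    by_contra hemp
    rw [not_nonempty_iff] at hemp
    have h1 : (μ Set.univ) = 1 := measure_univ
    rw [Set.univ_eq_empty_iff.2 hemp] at h1
    simp at h1
  obtain ⟨C, hC⟩ : ∃ C, ∀ p : X × X, |K p| ≤ C := by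
    obtain ⟨C, hC⟩ := isCompact_univ.exists_bound_of_continuousOn hK.continuousOn
    exact ⟨C, fun p => by simpa [Real.norm_eq_abs] using hC p (Set.mem_univ p)⟩
  have hKym : ∀ y : X, Measurable fun z => K (y, z) :=
    fun y => (hK.comp (Continuous.prodMk_right y)).measurable
  have hKyint : ∀ y : X, Integrable (fun z => K (y, z)) μ :=
    fun y => integrable_of_bdd (hKym y) (fun z => hC (y, z))
  set g : X → ℝ := fun y => ∫ z, K (y, z) ∂μ with hgdef
  have hgc : Continuous g := by
    apply continuous_of_dominated (bound := fun _ => C)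
    · exact fun y => (hKym y).aestronglyMeasurable
    · exact fun y => Eventually.of_forall fun z => by
        simpa [Real.norm_eq_abs] using hC (y, z)
    · exact integrable_const _
    · exact Eventually.of_forall fun z =>
        hK.comp (continuous_id.prodMk continuous_const)
  have hgb : ∀ y, |g y| ≤ C := by
    intro y
    rw [← Real.norm_eq_abs]
    calc ‖∫ z, K (y, z) ∂μ‖ ≤ C * (μ Set.univ).toReal :=
          norm_integral_le_of_norm_le_const
            (Eventually.of_forall fun z => by simpa [Real.norm_eq_abs] using hC (y, z))
      _ = C := by simp
  -- dense sequence
  obtain ⟨u, hu⟩ := TopologicalSpace.exists_dense_seq X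
  -- a.e. Birkhoff for all the centers and for g
  have haeK : ∀ᵐ x ∂μ, ∀ k : ℕ,
      Tendsto (fun n : ℕ => (n:ℝ)⁻¹ * birkhoffSum T (fun z => K (u k, z)) n x) atTop
        (𝓝 (g (u k))) := by
    rw [ae_all_iff]
    intro k
    exact birkhoff_ergodic hT (hKym (u k)) (fun z => hC (u k, z))
  have haeg : ∀ᵐ x ∂μ, Tendsto (fun n : ℕ => (n:ℝ)⁻¹ * birkhoffSum T g n x) atTop
      (𝓝 (∫ y, g y ∂μ)) := birkhoff_ergodic hT hgc.measurable hgb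
  -- main pointwise claim (range sums)
  have Q : ∀ᵐ x ∂μ, Tendsto (fun n : ℕ => ((n : ℝ) ^ 2)⁻¹ *
      ∑ i ∈ Finset.range n, ∑ j ∈ Finset.range n, K (T^[i] x, T^[j] x))
      atTop (𝓝 (∫ y, ∫ z, K (y, z) ∂μ ∂μ)) := by
    filter_upwards [haeK, haeg] with x hxK hxg
    set Φ : ℕ → X → ℝ := fun n y => (n:ℝ)⁻¹ * ∑ j ∈ Finset.range n, K (y, T^[j] x) with hΦ
    set A : ℕ → ℝ := fun n => (n:ℝ)⁻¹ * birkhoffSum T g n x with hAdef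
    set B : ℕ → ℝ := fun n => ((n : ℝ) ^ 2)⁻¹ *
      ∑ i ∈ Finset.range n, ∑ j ∈ Finset.range n, K (T^[i] x, T^[j] x) with hBdef
    have unif : ∀ ε > (0:ℝ), ∀ᶠ n : ℕ in atTop, ∀ y, |Φ n y - g y| < ε := by
      intro ε hε
      set ε' : ℝ := ε / 4 with hε'def
      have hε' : 0 < ε' := by positivity
      have hucK : UniformContinuous K := CompactSpace.uniformContinuous_of_continuous hK
      obtain ⟨δ, hδpos, hδ0⟩ := Metric.uniformContinuous_iff.1 hucK ε' hε'
      have hδ : ∀ y y' : X, dist y y' < δ → ∀ z, |K (y, z) - K (y', z)| ≤ ε' := by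
        intro y y' hyy' z
        have : dist ((y, z) : X × X) (y', z) < δ := by
          rw [Prod.dist_eq]
          simp only [dist_self, max_lt_iff]
          exact ⟨hyy', hδpos⟩
        have := hδ0 this
        rw [Real.dist_eq] at this
        exact le_of_lt this
      have hgδ : ∀ y y' : X, dist y y' < δ → |g y - g y'| ≤ ε' := by
        intro y y' hyy'
        have : g y - g y' = ∫ z, (K (y, z) - K (y', z)) ∂μ := by
          rw [integral_sub (hKyint y) (hKyint y')]
        rw [this, ← Real.norm_eq_abs]
        calc ‖∫ z, (K (y, z) - K (y', z)) ∂μ‖ ≤ ε' * (μ Set.univ).toReal :=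
              norm_integral_le_of_norm_le_const (Eventually.of_forall fun z => by
                simpa [Real.norm_eq_abs] using hδ y y' hyy' z)
          _ = ε' := by simp
      have hcover : (Set.univ : Set X) ⊆ ⋃ k : ℕ, Metric.ball (u k) δ := by
        intro y _
        obtain ⟨k, hk⟩ := hu.exists_dist_lt y hδpos
        exact Set.mem_iUnion.2 ⟨k, by simpa [Metric.mem_ball, dist_comm] using hk⟩
      obtain ⟨t, ht⟩ := isCompact_univ.elim_finite_subcover
        (fun k : ℕ => Metric.ball (u k) δ) (fun k => Metric.isOpen_ball) hcover
      have hev : ∀ᶠ n : ℕ in atTop,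
          (∀ k ∈ t, |Φ n (u k) - g (u k)| < ε') ∧ 1 ≤ n := by
        refine Eventually.and ?_ (eventually_ge_atTop 1)
        rw [eventually_all_finset]
        intro k _
        have htend := hxK k
        have := Metric.tendsto_atTop.1 htend ε' hε'
        obtain ⟨N, hN⟩ := this
        rw [eventually_atTop]
        refine ⟨N, fun n hn => ?_⟩
        have := hN n hn
        rw [Real.dist_eq] at this
        simpa [hΦ, birkhoffSum] using this
      refine hev.mono ?_
      rintro n ⟨hcenters, hn1⟩ y
      obtain ⟨k, hkt, hky⟩ := Set.mem_iUnion₂.1 (ht (Set.mem_univ y))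
      rw [Metric.mem_ball] at hky
      have hninv : (n:ℝ)⁻¹ * (n:ℝ) = 1 :=
        inv_mul_cancel₀ (Nat.cast_ne_zero.mpr (by omega))
      have h1 : |Φ n y - Φ n (u k)| ≤ ε' := by
        have heq : Φ n y - Φ n (u k)
            = (n:ℝ)⁻¹ * ∑ j ∈ Finset.range n, (K (y, T^[j] x) - K (u k, T^[j] x)) := by
          rw [hΦ]; dsimp only
          rw [Finset.sum_sub_distrib, mul_sub]
        rw [heq, abs_mul, abs_of_nonneg (by positivity : (0:ℝ) ≤ (n:ℝ)⁻¹)]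
        calc (n:ℝ)⁻¹ * |∑ j ∈ Finset.range n, (K (y, T^[j] x) - K (u k, T^[j] x))|
            ≤ (n:ℝ)⁻¹ * ∑ j ∈ Finset.range n, |K (y, T^[j] x) - K (u k, T^[j] x)| := by
              exact mul_le_mul_of_nonneg_left (Finset.abs_sum_le_sum_abs _ _) (by positivity)
          _ ≤ (n:ℝ)⁻¹ * ∑ j ∈ Finset.range n, ε' := by
              refine mul_le_mul_of_nonneg_left (Finset.sum_le_sum fun j _ => hδ y (u k) hky _)
                (by positivity)
          _ = (n:ℝ)⁻¹ * ((n:ℝ) * ε') := by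
              simp [mul_comm]
          _ = ε' := by rw [← mul_assoc, hninv, one_mul]
      have h2 := hcenters k hkt
      have h3 : |g (u k) - g y| ≤ ε' := hgδ (u k) y (by rwa [dist_comm])
      have htri : |Φ n y - g y| ≤ |Φ n y - Φ n (u k)| + |Φ n (u k) - g (u k)| + |g (u k) - g y| :=
        abs_sub_le_iff.2 ⟨by
          have := abs_sub_le (Φ n y) (Φ n (u k)) (g y)
          have := abs_sub_le (Φ n (u k)) (g (u k)) (g y)
          nlinarith [le_abs_self (Φ n y - Φ n (u k)), le_abs_self (Φ n (u k) - g (u k)),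
            le_abs_self (g (u k) - g y)], by
          nlinarith [neg_abs_le (Φ n y - Φ n (u k)), neg_abs_le (Φ n (u k) - g (u k)),
            neg_abs_le (g (u k) - g y)]⟩
      have : |Φ n y - g y| ≤ ε' + ε' + ε' := by linarith
      rw [hε'def] at this
      linarith
    have hBA : ∀ n : ℕ, 1 ≤ n → B n - A n
        = (n:ℝ)⁻¹ * ∑ i ∈ Finset.range n, (Φ n (T^[i] x) - g (T^[i] x)) := by
      intro n hn
      rw [hBdef, hAdef, hΦ]
      dsimp only
      rw [Finset.sum_sub_distrib, mul_sub, ← Finset.mul_sum, birkhoffSum]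
      congr 1
      rw [sq, mul_inv, mul_assoc]
    have hdiff : Tendsto (fun n => B n - A n) atTop (𝓝 0) := by
      rw [NormedAddCommGroup.tendsto_nhds_zero]
      intro ε hε
      filter_upwards [unif (ε/2) (by positivity), eventually_ge_atTop 1] with n hn hn1
      have hninv : (n:ℝ)⁻¹ * (n:ℝ) = 1 :=
        inv_mul_cancel₀ (Nat.cast_ne_zero.mpr (by omega))
      rw [Real.norm_eq_abs, hBA n hn1, abs_mul,
        abs_of_nonneg (by positivity : (0:ℝ) ≤ (n:ℝ)⁻¹)]
      calc (n:ℝ)⁻¹ * |∑ i ∈ Finset.range n, (Φ n (T^[i] x) - g (T^[i] x))|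
          ≤ (n:ℝ)⁻¹ * ∑ i ∈ Finset.range n, |Φ n (T^[i] x) - g (T^[i] x)| :=
            mul_le_mul_of_nonneg_left (Finset.abs_sum_le_sum_abs _ _) (by positivity)
        _ ≤ (n:ℝ)⁻¹ * ∑ i ∈ Finset.range n, (ε/2) :=
            mul_le_mul_of_nonneg_left (Finset.sum_le_sum fun i _ => le_of_lt (hn _))
              (by positivity)
        _ = (n:ℝ)⁻¹ * ((n:ℝ) * (ε/2)) := by simp [mul_comm]
        _ = ε/2 := by rw [← mul_assoc, hninv, one_mul]
        _ < ε := by linarith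
    have hfinal : Tendsto B atTop (𝓝 (0 + ∫ y, g y ∂μ)) := by
      have : B = fun n => (B n - A n) + A n := by funext n; ring
      rw [this]
      exact hdiff.add hxg
    rw [zero_add] at hfinal
    exact hfinal
  -- move to base point T x and reindex
  have Q' : ∀ᵐ x ∂μ, Tendsto (fun n : ℕ => ((n : ℝ) ^ 2)⁻¹ *
      ∑ i ∈ Finset.range n, ∑ j ∈ Finset.range n, K (T^[i] (T x), T^[j] (T x)))
      atTop (𝓝 (∫ y, ∫ z, K (y, z) ∂μ ∂μ)) := by
    apply MeasureTheory.ae_of_ae_map (p := fun y => Tendsto (fun n : ℕ => ((n : ℝ) ^ 2)⁻¹ *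
      ∑ i ∈ Finset.range n, ∑ j ∈ Finset.range n, K (T^[i] y, T^[j] y))
      atTop (𝓝 (∫ y, ∫ z, K (y, z) ∂μ ∂μ))) hTm.aemeasurable
    rw [hT.toMeasurePreserving.map_eq]
    exact Q
  filter_upwards [Q'] with x hx
  have heq : (fun n : ℕ => ((n : ℝ) ^ 2)⁻¹ *
      ∑ i ∈ Finset.Icc 1 n, ∑ j ∈ Finset.Icc 1 n, K (T^[i] x, T^[j] x))
      = (fun n : ℕ => ((n : ℝ) ^ 2)⁻¹ *
      ∑ i ∈ Finset.range n, ∑ j ∈ Finset.range n, K (T^[i] (T x), T^[j] (T x))) := by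
    funext n
    congr 1
    rw [← Finset.Ico_add_one_right_eq_Icc, Finset.sum_Ico_eq_sum_range]
    simp only [Nat.add_sub_cancel]
    apply Finset.sum_congr rfl
    intro i _
    rw [Finset.sum_Ico_eq_sum_range]
    simp only [Nat.add_sub_cancel]
    apply Finset.sum_congr rfl
    intro j _
    have hi : T^[1 + i] x = T^[i] (T x) := by
      rw [add_comm, Function.iterate_succ_apply]
    have hj : T^[1 + j] x = T^[j] (T x) := by
      rw [add_comm, Function.iterate_succ_apply]
    rw [hi, hj]
  rw [heq]
  exact hx

end Main

open MeasureTheory Filter Topology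

theorem stmt_0 {X : Type*} [MetricSpace X] [CompactSpace X] [MeasurableSpace X] [BorelSpace X]
    (μ : Measure X) [IsProbabilityMeasure μ] (T : X → X) (hT : Ergodic T μ)
    (K : X × X → ℝ) (hK : Continuous K) :
    ∀ᵐ x ∂μ, Tendsto (fun n : ℕ => ((n : ℝ) ^ 2)⁻¹ *
        ∑ i ∈ Finset.Icc 1 n, ∑ j ∈ Finset.Icc 1 n, K (T^[i] x, T^[j] x))
      atTop (𝓝 (∫ y, ∫ z, K (y, z) ∂μ ∂μ)) := by
  exact stmt_0' μ T hT K hK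
end

section
/- Let (X,d) be a compact metric space, μ a Borel probability measure, T : X → X ergodic and measure-preserving. For x ∈ X and n ≥ 1 let μ_n^x = (1/n²) ∑_{i=1}^n ∑_{j=1}^n δ_{(T^i x, T^j x)} be the empirical measure on X × X. Then for μ-almost every x, μ_n^x converges in the weak-* topology to the product measure μ × μ. -/
open MeasureTheory Filter Topology


/-- limsup of negation -/
lemma my_limsup_neg (u : ℕ → ℝ) :
    limsup (fun n => -u n) atTop = - liminf u atTop := by
  rw [Filter.limsup_eq, Filter.liminf_eq]
  have : {a : ℝ | ∀ᶠ n in atTop, -u n ≤ a} = -{a : ℝ | ∀ᶠ n in atTop, a ≤ u n} := by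
    ext a
    simp only [Set.mem_neg, Set.mem_setOf_eq]
    constructor
    · intro h; exact h.mono fun n hn => by linarith
    · intro h; exact h.mono fun n hn => by linarith
  rw [this, Real.sInf_def, neg_neg]

/-- 3ε approximation lemma -/
lemma tendsto_of_approx (u : ℕ → ℝ) (a : ℝ)
    (h : ∀ ε > (0:ℝ), ∃ v : ℕ → ℝ, ∃ b : ℝ, Tendsto v atTop (𝓝 b) ∧
      (∀ n, |u n - v n| ≤ ε) ∧ |a - b| ≤ ε) :
    Tendsto u atTop (𝓝 a) := by
  rw [Metric.tendsto_atTop]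
  intro ε hε
  obtain ⟨v, b, hv, huv, hab⟩ := h (ε/4) (by linarith)
  rw [Metric.tendsto_atTop] at hv
  obtain ⟨N, hN⟩ := hv (ε/4) (by linarith)
  refine ⟨N, fun n hn => ?_⟩
  have h1 := huv n
  have h2 := hN n hn
  rw [Real.dist_eq] at h2 ⊢
  have : |u n - a| ≤ |u n - v n| + |v n - b| + |b - a| := by
    have := abs_sub_abs_le_abs_sub (u n) (v n)
    calc |u n - a| = |(u n - v n) + (v n - b) + (b - a)| := by ring_nf
      _ ≤ |u n - v n + (v n - b)| + |b - a| := abs_add_le _ _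
      _ ≤ |u n - v n| + |v n - b| + |b - a| := by gcongr; exact abs_add_le _ _
  rw [abs_sub_comm b a] at this
  linarith [le_of_lt h2]

/-- Katznelson–Weiss covering induction. -/
lemma kw_induct {X : Type*} (T : X → X) (g : X → ℝ) (hg0 : ∀ x, 0 ≤ g x)
    {a : ℝ} (ha : 0 ≤ a) (E : Set X) (M : ℕ)
    (hE : ∀ y ∈ E, ∃ n : ℕ, 1 ≤ n ∧ n ≤ M ∧ a * n ≤ birkhoffSum T g n y) :
    ∀ N : ℕ, ∀ x : X, a * N ≤ birkhoffSum T g N x + a * M +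
      a * ∑ k ∈ Finset.range N, Set.indicator Eᶜ (fun _ => (1:ℝ)) (T^[k] x) := by
  intro N
  induction N using Nat.strong_induction_on with
  | _ N IH =>
  intro x
  have hS0 : ∀ (m : ℕ) (y : X), 0 ≤ birkhoffSum T g m y := fun m y =>
    Finset.sum_nonneg fun i _ => hg0 _
  have hind0 : ∀ (m : ℕ) (y : X),
      0 ≤ ∑ k ∈ Finset.range m, Set.indicator Eᶜ (fun _ => (1:ℝ)) (T^[k] y) := fun m y =>
    Finset.sum_nonneg fun i _ => Set.indicator_nonneg (fun _ _ => zero_le_one) _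
  rcases le_or_gt N M with hNM | hNM
  · have : a * N ≤ a * M := by
      apply mul_le_mul_of_nonneg_left _ ha
      exact_mod_cast hNM
    nlinarith [hS0 N x, hind0 N x]
  -- N > M, in particular N ≥ 1
  by_cases hx : x ∈ E
  · obtain ⟨n, hn1, hnM, hSn⟩ := hE x hx
    have hnN : n < N := lt_of_le_of_lt hnM hNM
    have key := IH (N - n) (by omega) (T^[n] x)
    have hsum : birkhoffSum T g N x =
        birkhoffSum T g n x + birkhoffSum T g (N - n) (T^[n] x) := by
      have := birkhoffSum_add T g n (N - n) x
      rw [Nat.add_sub_cancel' hnN.le] at this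
      exact this
    -- indicator sums: sum over range (N-n) at T^[n] x  ≤ sum over range N at x
    have hind : ∑ k ∈ Finset.range (N - n), Set.indicator Eᶜ (fun _ => (1:ℝ)) (T^[k] (T^[n] x))
        ≤ ∑ k ∈ Finset.range N, Set.indicator Eᶜ (fun _ => (1:ℝ)) (T^[k] x) := by
      have h1 : ∀ k, T^[k] (T^[n] x) = T^[k + n] x := by
        intro k; rw [← Function.iterate_add_apply]
      calc ∑ k ∈ Finset.range (N - n), Set.indicator Eᶜ (fun _ => (1:ℝ)) (T^[k] (T^[n] x))
          = ∑ k ∈ Finset.range (N - n), Set.indicator Eᶜ (fun _ => (1:ℝ)) (T^[k + n] x) := by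
            simp_rw [h1]
        _ = ∑ k ∈ Finset.Ico n N, Set.indicator Eᶜ (fun _ => (1:ℝ)) (T^[k] x) := by
            rw [Finset.sum_Ico_eq_sum_range]
            simp_rw [add_comm]
        _ ≤ ∑ k ∈ Finset.range N, Set.indicator Eᶜ (fun _ => (1:ℝ)) (T^[k] x) := by
            apply Finset.sum_le_sum_of_subset_of_nonneg
            · rw [Finset.range_eq_Ico]; exact Finset.Ico_subset_Ico (Nat.zero_le _) le_rfl
            · intro i _ _; exact Set.indicator_nonneg (fun _ _ => zero_le_one) _
    have hcast : (N : ℝ) = (n : ℝ) + ((N - n : ℕ) : ℝ) := by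
      have : ((n + (N - n) : ℕ) : ℝ) = (n:ℝ) + ((N-n:ℕ):ℝ) := by push_cast; ring
      rw [← this, Nat.add_sub_cancel' hnN.le]
    rw [hcast, mul_add]
    have : a * ((N - n : ℕ) : ℝ) ≤ birkhoffSum T g (N - n) (T^[n] x) + a * M +
        a * ∑ k ∈ Finset.range N, Set.indicator Eᶜ (fun _ => (1:ℝ)) (T^[k] x) := by
      refine key.trans ?_
      gcongr
    nlinarith [hsum]
  · -- x ∉ E : step of size 1
    have hN1 : 1 ≤ N := by omega
    have key := IH (N - 1) (by omega) (T x)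
    obtain ⟨m, rfl⟩ : ∃ m, N = m + 1 := ⟨N - 1, by omega⟩
    simp only [Nat.add_sub_cancel] at key
    have hsum : birkhoffSum T g (m + 1) x = g x + birkhoffSum T g m (T x) :=
      birkhoffSum_succ' T g m x
    have hind : ∑ k ∈ Finset.range (m + 1), Set.indicator Eᶜ (fun _ => (1:ℝ)) (T^[k] x)
        = 1 + ∑ k ∈ Finset.range m, Set.indicator Eᶜ (fun _ => (1:ℝ)) (T^[k] (T x)) := by
      rw [Finset.sum_range_succ']
      simp_rw [Function.iterate_succ_apply]
      rw [Function.iterate_zero_apply]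
      rw [Set.indicator_of_mem (Set.mem_compl hx)]
      ring
    have hcast : ((m + 1 : ℕ) : ℝ) = (m : ℝ) + 1 := by push_cast; ring
    rw [hcast, mul_add, mul_one, hsum, hind]
    have hgx := hg0 x
    nlinarith [key]

section Helpers

variable {X : Type*} [MeasurableSpace X]

lemma integrable_bdd (μ : Measure X) [IsProbabilityMeasure μ] {G : X → ℝ} (hm : Measurable G)
    {C : ℝ} (hC : ∀ x, |G x| ≤ C) : Integrable G μ :=
  (integrable_const C).mono' hm.aestronglyMeasurable
    (Filter.Eventually.of_forall (fun x => by simpa using hC x))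

lemma integral_comp_iterate (μ : Measure X) {T : X → X}
    (hT : MeasurePreserving T μ μ) {G : X → ℝ} (hm : Measurable G) (k : ℕ) :
    ∫ x, G (T^[k] x) ∂μ = ∫ x, G x ∂μ := by
  have h : MeasurePreserving T^[k] μ μ := hT.iterate k
  conv_rhs => rw [← h.map_eq]
  rw [integral_map h.measurable.aemeasurable hm.aestronglyMeasurable]

lemma integral_birkhoffSum (μ : Measure X) [IsProbabilityMeasure μ] {T : X → X}
    (hT : MeasurePreserving T μ μ) {G : X → ℝ} (hm : Measurable G)
    {C : ℝ} (hC : ∀ x, |G x| ≤ C) (N : ℕ) :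
    ∫ x, birkhoffSum T G N x ∂μ = N * ∫ x, G x ∂μ := by
  have hint : ∀ k : ℕ, Integrable (fun x => G (T^[k] x)) μ := fun k =>
    integrable_bdd μ (hm.comp (hT.measurable.iterate k)) (fun x => hC _)
  calc ∫ x, birkhoffSum T G N x ∂μ
      = ∑ k ∈ Finset.range N, ∫ x, G (T^[k] x) ∂μ := by
        rw [← integral_finset_sum _ (fun k _ => hint k)]; rfl
    _ = ∑ k ∈ Finset.range N, ∫ x, G x ∂μ := by
        refine Finset.sum_congr rfl fun k _ => integral_comp_iterate μ hT hm k
    _ = N * ∫ x, G x ∂μ := by simp [Finset.sum_const, nsmul_eq_mul]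

lemma integrable_birkhoffSum (μ : Measure X) [IsProbabilityMeasure μ] {T : X → X}
    (hT : MeasurePreserving T μ μ) {G : X → ℝ} (hm : Measurable G)
    {C : ℝ} (hC : ∀ x, |G x| ≤ C) (N : ℕ) :
    Integrable (fun x => birkhoffSum T G N x) μ := by
  have hint : ∀ k : ℕ, Integrable (fun x => G (T^[k] x)) μ := fun k =>
    integrable_bdd μ (hm.comp (hT.measurable.iterate k)) (fun x => hC _)
  have : (fun x => birkhoffSum T G N x) = fun x => ∑ k ∈ Finset.range N, G (T^[k] x) := rfl
  rw [this]
  exact integrable_finset_sum _ (fun k _ => hint k)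

end Helpers

section Key

variable {X : Type*} [MeasurableSpace X]

lemma kw_key (μ : Measure X) [IsProbabilityMeasure μ] {T : X → X}
    (hT : MeasurePreserving T μ μ)
    {G : X → ℝ} (hGm : Measurable G) (hG0 : ∀ x, 0 ≤ G x)
    {C : ℝ} (hC0 : 0 ≤ C) (hGC : ∀ x, G x ≤ C) {c : ℝ}
    (hc : ∀ᵐ x ∂μ, limsup (fun n : ℕ => (n:ℝ)⁻¹ * birkhoffSum T G n x) atTop = c) :
    c ≤ ∫ x, G x ∂μ := by
  have habs : ∀ x, |G x| ≤ C := fun x => abs_le.2 ⟨by linarith [hG0 x], hGC x⟩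
  have hGint : Integrable G μ := integrable_bdd μ hGm habs
  set u : X → ℕ → ℝ := fun x n => (n:ℝ)⁻¹ * birkhoffSum T G n x with hu
  have hSm : ∀ n : ℕ, Measurable (fun x => birkhoffSum T G n x) := fun n =>
    Finset.measurable_sum _ (fun i _ => hGm.comp (hT.measurable.iterate i))
  have hS0 : ∀ (m : ℕ) (y : X), 0 ≤ birkhoffSum T G m y := fun m y =>
    Finset.sum_nonneg fun i _ => hG0 _
  have hlb : ∀ x n, 0 ≤ u x n := fun x n => mul_nonneg (by positivity) (hS0 n x)
  have hub : ∀ x n, u x n ≤ C := by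
    intro x n
    rcases Nat.eq_zero_or_pos n with rfl | hn
    · simpa [hu, birkhoffSum] using hC0
    · have hb : birkhoffSum T G n x ≤ n * C := by
        calc birkhoffSum T G n x ≤ ∑ _k ∈ Finset.range n, C :=
              Finset.sum_le_sum (fun i _ => hGC _)
          _ = n * C := by simp [mul_comm]
      have hn' : (0:ℝ) < n := by exact_mod_cast hn
      calc u x n ≤ (n:ℝ)⁻¹ * (n * C) := by
            exact mul_le_mul_of_nonneg_left hb (by positivity)
        _ = C := by field_simp
  -- c ≤ C
  obtain ⟨x₀, hx₀⟩ := hc.exists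
  have hcC : c ≤ C := by
    rw [← hx₀]
    apply Filter.limsup_le_of_le
      (isCoboundedUnder_le_of_eventually_le atTop (Filter.Eventually.of_forall fun n => hlb x₀ n))
      (Filter.Eventually.of_forall fun n => hub x₀ n)
  have hint0 : (0:ℝ) ≤ ∫ x, G x ∂μ := integral_nonneg hG0
  have main : ∀ ε : ℝ, 0 < ε → c ≤ ∫ x, G x ∂μ + ε * (1 + C) := by
    intro ε hε
    rcases lt_or_ge c ε with hcε | hcε
    · nlinarith
    have ha0 : (0:ℝ) ≤ c - ε := by linarith
    set a : ℝ := c - ε with haeq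
    have haC : a ≤ C := by linarith
    set E : ℕ → Set X := fun M => {y | ∃ n : ℕ, 1 ≤ n ∧ n ≤ M ∧ a * n ≤ birkhoffSum T G n y}
      with hE
    have hEmeas : ∀ M, MeasurableSet (E M) := by
      intro M
      have hEq : E M = ⋃ (n : ℕ) (_ : 1 ≤ n ∧ n ≤ M), {y | a * n ≤ birkhoffSum T G n y} := by
        ext y
        simp only [hE, Set.mem_setOf_eq, Set.mem_iUnion]
        constructor
        · rintro ⟨n, h1, h2, h3⟩; exact ⟨n, ⟨h1, h2⟩, h3⟩
        · rintro ⟨n, ⟨h1, h2⟩, h3⟩; exact ⟨n, h1, h2, h3⟩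
      rw [hEq]
      exact MeasurableSet.iUnion fun n => MeasurableSet.iUnion fun _ =>
        measurableSet_le measurable_const (hSm n)
    have hEmono : Monotone E := fun M M' hMM' y => by
      rintro ⟨n, h1, h2, h3⟩; exact ⟨n, h1, h2.trans hMM', h3⟩
    have hcover : ∀ᵐ y ∂μ, y ∈ ⋃ M, E M := by
      filter_upwards [hc] with y hy
      have hfreq : ∃ᶠ n in atTop, a < u y n :=
        frequently_lt_of_lt_limsup
          (isCoboundedUnder_le_of_eventually_le atTop
            (Filter.Eventually.of_forall fun n => hlb y n))
          (by rw [hy]; linarith)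
      obtain ⟨n, hn1, hn⟩ := (Filter.frequently_atTop.mp hfreq) 1
      have hn0 : (0:ℝ) < n := by exact_mod_cast hn1
      have : a * n ≤ birkhoffSum T G n y := by
        have h2 : a * n ≤ u y n * n := by nlinarith
        have h3 : u y n * n = birkhoffSum T G n y := by
          rw [hu]; field_simp
        linarith [h2, h3.le, h3.ge]
      exact Set.mem_iUnion.2 ⟨n, n, hn1, le_rfl, this⟩
    -- measure of complements tends to 0
    have hnull : μ (⋂ M, (E M)ᶜ) = 0 := by
      have hcompl : (⋂ M, (E M)ᶜ) = (⋃ M, E M)ᶜ := by rw [Set.compl_iUnion]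
      rw [hcompl]
      rw [ae_iff] at hcover
      exact hcover
    have htend : Tendsto (fun M => μ ((E M)ᶜ)) atTop (𝓝 0) := by
      have := tendsto_measure_iInter_atTop
        (μ := μ) (s := fun M => (E M)ᶜ)
        (fun M => ((hEmeas M).compl).nullMeasurableSet)
        (fun M M' hMM' => Set.compl_subset_compl.2 (hEmono hMM'))
        ⟨0, measure_ne_top μ _⟩
      rwa [hnull] at this
    have hev : ∀ᶠ M in atTop, μ ((E M)ᶜ) < ENNReal.ofReal ε :=
      htend.eventually (gt_mem_nhds (by simp [ENNReal.ofReal_pos, hε]))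
    obtain ⟨M, hM⟩ := hev.exists
    set I : ℝ := (μ ((E M)ᶜ)).toReal with hI
    have hIε : I ≤ ε := by
      rw [hI]
      exact ENNReal.toReal_le_of_le_ofReal hε.le hM.le
    have hI0 : 0 ≤ I := ENNReal.toReal_nonneg
    -- apply the covering induction and integrate
    have hker : ∀ y ∈ E M, ∃ n : ℕ, 1 ≤ n ∧ n ≤ M ∧ a * n ≤ birkhoffSum T G n y := fun y hy => hy
    have hpt := kw_induct T G hG0 ha0 (E M) M hker
    -- indicator function
    set ind : X → ℝ := Set.indicator (E M)ᶜ (fun _ => (1:ℝ)) with hind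
    have hindm : Measurable ind := measurable_const.indicator (hEmeas M).compl
    have hindb : ∀ x, |ind x| ≤ 1 := by
      intro x
      rw [hind]
      rcases Set.indicator_eq_zero_or_self (E M)ᶜ (fun _ => (1:ℝ)) x with h | h <;>
        simp [h]
    have hindint : ∫ x, ind x ∂μ = I := by
      rw [hind, integral_indicator ((hEmeas M).compl)]
      simp [hI, measureReal_def]
    have hNineq : ∀ N : ℕ, a * N ≤ N * ∫ x, G x ∂μ + a * M + a * (N * I) := by
      intro N
      have hptN : ∀ x, a * N ≤ birkhoffSum T G N x + a * M + a * birkhoffSum T ind N x := by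
        intro x
        have := hpt N x
        simpa [hind, birkhoffSum] using this
      have hintS := integral_birkhoffSum μ hT hGm habs N
      have hintI := integral_birkhoffSum μ hT hindm hindb N
      rw [hindint] at hintI
      have hInt1 : Integrable (fun x => birkhoffSum T G N x) μ :=
        integrable_birkhoffSum μ hT hGm habs N
      have hInt2 : Integrable (fun x => birkhoffSum T ind N x) μ :=
        integrable_birkhoffSum μ hT hindm hindb N
      have hRHSint : Integrable
          (fun x => birkhoffSum T G N x + a * M + a * birkhoffSum T ind N x) μ :=
        ((hInt1.add (integrable_const _)).add (hInt2.const_mul a))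
      have hmono := integral_mono (integrable_const (a * N)) hRHSint
        (fun x => hptN x)
      rw [integral_const] at hmono
      simp only [measureReal_def, measure_univ, ENNReal.toReal_one, one_smul] at hmono
      have hf' : Integrable (fun x => birkhoffSum T G N x + a * (M:ℝ)) μ :=
        hInt1.add (integrable_const _)
      have hg' : Integrable (fun x => a * birkhoffSum T ind N x) μ :=
        hInt2.const_mul a
      have e1 : ∫ x, (birkhoffSum T G N x + a * (M:ℝ)) ∂μ
          = (N:ℝ) * ∫ x, G x ∂μ + a * M := by
        rw [integral_add hInt1 (integrable_const _), integral_const, hintS]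
        simp [measure_univ]
      have e2 : ∫ x, (birkhoffSum T G N x + a * (M:ℝ) + a * birkhoffSum T ind N x) ∂μ
          = (N:ℝ) * ∫ x, G x ∂μ + a * M + a * ((N:ℝ) * I) := by
        rw [integral_add hf' hg', e1, integral_const_mul, hintI]
      rw [e2] at hmono
      exact hmono
    -- divide by N and let N → ∞
    have hdiv : ∀ N : ℕ, 1 ≤ N → a ≤ ∫ x, G x ∂μ + a * M * (N:ℝ)⁻¹ + a * I := by
      intro N hN
      have hN0 : (0:ℝ) < N := by exact_mod_cast hN
      have := hNineq N
      have h2 : a * N * (N:ℝ)⁻¹ ≤ (N * ∫ x, G x ∂μ + a * M + a * (N * I)) * (N:ℝ)⁻¹ := by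
        apply mul_le_mul_of_nonneg_right this (by positivity)
      calc a = a * N * (N:ℝ)⁻¹ := by field_simp
        _ ≤ (N * ∫ x, G x ∂μ + a * M + a * (N * I)) * (N:ℝ)⁻¹ := h2
        _ = ∫ x, G x ∂μ + a * M * (N:ℝ)⁻¹ + a * I := by field_simp
    have hlim : Tendsto (fun N : ℕ => ∫ x, G x ∂μ + a * M * (N:ℝ)⁻¹ + a * I) atTop
        (𝓝 (∫ x, G x ∂μ + a * M * 0 + a * I)) := by
      apply Tendsto.add (Tendsto.add tendsto_const_nhds _) tendsto_const_nhds
      exact (tendsto_inv_atTop_nhds_zero_nat).const_mul _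
    have : a ≤ ∫ x, G x ∂μ + a * M * 0 + a * I := by
      apply ge_of_tendsto hlim
      filter_upwards [eventually_ge_atTop 1] with N hN using hdiv N hN
    have haI : a * I ≤ C * ε := by
      apply mul_le_mul haC hIε hI0 hC0
    simp only [mul_zero, add_zero] at this
    nlinarith
  by_contra hlt
  push_neg at hlt
  have h1C : (0:ℝ) < 1 + C := by linarith
  set ε := (c - ∫ x, G x ∂μ) / (2 * (1 + C)) with hεdef
  have hεpos : 0 < ε := by
    apply div_pos (by linarith) (by linarith)
  have hmain := main ε hεpos
  have heq : ε * (1 + C) = (c - ∫ x, G x ∂μ) / 2 := by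
    rw [hεdef]; field_simp
  rw [heq] at hmain
  linarith

end Key

section LimsupTools

lemma isBdd_le_of_abs {u : ℕ → ℝ} {B : ℝ} (hu : ∀ n, |u n| ≤ B) :
    IsBoundedUnder (· ≤ ·) atTop u :=
  ⟨B, Filter.eventually_map.2 (Filter.Eventually.of_forall fun n => (abs_le.1 (hu n)).2)⟩

lemma isBdd_ge_of_abs {u : ℕ → ℝ} {B : ℝ} (hu : ∀ n, |u n| ≤ B) :
    IsBoundedUnder (· ≥ ·) atTop u :=
  ⟨-B, Filter.eventually_map.2 (Filter.Eventually.of_forall fun n => (abs_le.1 (hu n)).1)⟩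

lemma limsup_le_limsup_of_sub {u v : ℕ → ℝ} {B : ℝ} (hu : ∀ n, |u n| ≤ B)
    (hv : ∀ n, |v n| ≤ B) (h : Tendsto (fun n => u n - v n) atTop (𝓝 0)) :
    limsup u atTop ≤ limsup v atTop := by
  apply le_of_forall_pos_le_add
  intro ε hε
  have hev : ∀ᶠ n in atTop, u n ≤ v n + ε := by
    have h2 : ∀ᶠ n in atTop, |u n - v n| < ε := by
      have := Metric.tendsto_atTop.1 h ε hε
      obtain ⟨N, hN⟩ := this
      filter_upwards [eventually_ge_atTop N] with n hn
      simpa [Real.dist_eq] using hN n hn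
    filter_upwards [h2] with n hn
    have := (abs_lt.1 hn).2
    linarith
  have h1 : limsup u atTop ≤ limsup (fun n => v n + ε) atTop :=
    limsup_le_limsup hev
      (isBdd_ge_of_abs hu).isCoboundedUnder_le
      (isBdd_le_of_abs (fun n => by
        have := abs_le.1 (hv n); exact abs_le.2 ⟨by linarith [abs_nonneg (v n), hε.le], by linarith⟩
        : ∀ n, |v n + ε| ≤ B + ε))
  rw [limsup_add_const atTop v ε (isBdd_le_of_abs hv)
    (isBdd_ge_of_abs hv).isCoboundedUnder_le] at h1
  exact h1

lemma limsup_eq_of_sub {u v : ℕ → ℝ} {B : ℝ} (hu : ∀ n, |u n| ≤ B)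
    (hv : ∀ n, |v n| ≤ B) (h : Tendsto (fun n => u n - v n) atTop (𝓝 0)) :
    limsup u atTop = limsup v atTop := by
  refine le_antisymm (limsup_le_limsup_of_sub hu hv h) (limsup_le_limsup_of_sub hv hu ?_)
  have := h.neg
  simpa [neg_sub] using this

end LimsupTools

section Birkhoff

variable {X : Type*} [MetricSpace X] [CompactSpace X] [MeasurableSpace X] [BorelSpace X]

lemma abs_avg_le {T : X → X} {h : X → ℝ} {B : ℝ} (hB0 : 0 ≤ B) (hb : ∀ y, |h y| ≤ B)
    (x : X) (n : ℕ) : |(n:ℝ)⁻¹ * birkhoffSum T h n x| ≤ B := by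
  rcases Nat.eq_zero_or_pos n with rfl | hn
  · simpa [birkhoffSum] using hB0
  · have hn0 : (0:ℝ) < n := by exact_mod_cast hn
    have h1 : |birkhoffSum T h n x| ≤ n * B := by
      calc |birkhoffSum T h n x| ≤ ∑ k ∈ Finset.range n, |h (T^[k] x)| :=
            Finset.abs_sum_le_sum_abs _ _
        _ ≤ ∑ _k ∈ Finset.range n, B := Finset.sum_le_sum fun i _ => hb _
        _ = n * B := by simp [mul_comm]
    rw [abs_mul, abs_inv, Nat.abs_cast]
    calc (n:ℝ)⁻¹ * |birkhoffSum T h n x| ≤ (n:ℝ)⁻¹ * (n * B) := by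
          exact mul_le_mul_of_nonneg_left h1 (by positivity)
      _ = B := by field_simp

theorem birkhoff_ae (μ : Measure X) [IsProbabilityMeasure μ] {T : X → X}
    (hT : Ergodic T μ) (g : C(X, ℝ)) :
    ∀ᵐ x ∂μ, Tendsto (fun n : ℕ => (n:ℝ)⁻¹ * birkhoffSum T (⇑g) n x) atTop
      (𝓝 (∫ x, g x ∂μ)) := by
  have hTm : Measurable T := hT.toMeasurePreserving.measurable
  set B : ℝ := ‖g‖ with hBdef
  have hB0 : (0:ℝ) ≤ B := norm_nonneg g
  have hB : ∀ y, |g y| ≤ B := fun y => g.norm_coe_le_norm y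
  have hgm : Measurable (⇑g) := g.continuous.measurable
  have hgint : Integrable (⇑g) μ := integrable_bdd μ hgm hB
  set avg : X → ℕ → ℝ := fun x n => (n:ℝ)⁻¹ * birkhoffSum T (⇑g) n x with havg
  have habs : ∀ x n, |avg x n| ≤ B := fun x n => abs_avg_le hB0 hB x n
  have hSm : ∀ n : ℕ, Measurable (fun x => birkhoffSum T (⇑g) n x) := fun n =>
    Finset.measurable_sum _ (fun i _ => hgm.comp (hTm.iterate i))
  have havgm : ∀ n : ℕ, Measurable (fun x => avg x n) := fun n => (hSm n).const_mul _
  -- difference of averages at T x and x tends to zero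
  have hdiff : ∀ x, Tendsto (fun n => avg (T x) n - avg x n) atTop (𝓝 0) := by
    intro x
    have heq : ∀ n : ℕ, avg (T x) n - avg x n = (n:ℝ)⁻¹ * (g (T^[n] x) - g x) := by
      intro n
      rw [havg]
      simp only
      rw [← mul_sub, birkhoffSum_apply_sub_birkhoffSum]
    have hb : Tendsto (fun n : ℕ => (n:ℝ)⁻¹ * (2 * B)) atTop (𝓝 0) := by
      have := tendsto_inv_atTop_nhds_zero_nat.mul_const (2 * B)
      simpa using this
    refine squeeze_zero_norm (fun n => ?_) hb
    rw [heq n, norm_mul]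
    gcongr
    · simp
    · rw [Real.norm_eq_abs]
      calc |g (T^[n] x) - g x| ≤ |g (T^[n] x)| + |g x| := abs_sub _ _
        _ ≤ 2 * B := by linarith [hB (T^[n] x), hB x]
  set L : X → ℝ := fun x => limsup (fun n => avg x n) atTop with hL
  set l : X → ℝ := fun x => liminf (fun n => avg x n) atTop with hl
  have hLm : Measurable L := Measurable.limsup havgm
  have hlm : Measurable l := Measurable.liminf havgm
  have hLinv : ∀ x, L (T x) = L x := fun x =>
    limsup_eq_of_sub (habs (T x)) (habs x) (hdiff x)
  have hlinv : ∀ x, l (T x) = l x := by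
    intro x
    have h1 : limsup (fun n => -avg (T x) n) atTop = limsup (fun n => -avg x n) atTop := by
      apply limsup_eq_of_sub (B := B)
        (fun n => by simpa using habs (T x) n) (fun n => by simpa using habs x n)
      have := (hdiff x).neg
      simp only [neg_sub, neg_zero] at this
      have h2 : (fun n => -avg (T x) n - -avg x n) = fun n => avg x n - avg (T x) n := by
        funext n; ring
      rw [h2]
      exact this
    rw [my_limsup_neg, my_limsup_neg] at h1
    rw [hl]
    simp only
    linarith [h1]
  obtain ⟨cL, hcL⟩ := hT.ae_eq_const_of_ae_eq_comp_ae hLm.aestronglyMeasurable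
    (Filter.Eventually.of_forall fun x => hLinv x)
  obtain ⟨cl, hcl⟩ := hT.ae_eq_const_of_ae_eq_comp_ae hlm.aestronglyMeasurable
    (Filter.Eventually.of_forall fun x => hlinv x)
  -- first key application : cL ≤ ∫ g
  have hint_eq : ∀ (K : ℝ), ∫ x, (g x + K) ∂μ = (∫ x, g x ∂μ) + K := by
    intro K
    rw [integral_add hgint (integrable_const K), integral_const]
    simp [measure_univ]
  have sum_shift : ∀ (h : X → ℝ) (K : ℝ) (x : X) (n : ℕ),
      birkhoffSum T (fun y => h y + K) n x = birkhoffSum T h n x + n * K := by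
    intro h K x n
    rw [birkhoffSum, birkhoffSum, Finset.sum_add_distrib]
    simp [mul_comm]
  have avg_shift : ∀ (h : X → ℝ) (K : ℝ) (x : X) (n : ℕ), 1 ≤ n →
      (n:ℝ)⁻¹ * birkhoffSum T (fun y => h y + K) n x
        = (n:ℝ)⁻¹ * birkhoffSum T h n x + K := by
    intro h K x n hn
    have hn0 : (n:ℝ) ≠ 0 := by positivity
    rw [sum_shift]
    field_simp
  have hkey1 : cL + B ≤ (∫ x, g x ∂μ) + B := by
    have hcG : ∀ᵐ x ∂μ, limsup (fun n : ℕ =>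
        (n:ℝ)⁻¹ * birkhoffSum T (fun y => g y + B) n x) atTop = cL + B := by
      filter_upwards [hcL] with x hx
      have e1 : limsup (fun n : ℕ => (n:ℝ)⁻¹ * birkhoffSum T (fun y => g y + B) n x) atTop
          = limsup (fun n : ℕ => avg x n + B) atTop := by
        apply Filter.limsup_congr
        filter_upwards [eventually_ge_atTop 1] with n hn
        exact avg_shift (⇑g) B x n hn
      rw [e1, limsup_add_const atTop _ B (isBdd_le_of_abs (habs x))
        (isBdd_ge_of_abs (habs x)).isCoboundedUnder_le]
      exact congrArg (fun t => t + B) hx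
    have := kw_key μ hT.toMeasurePreserving (G := fun y => g y + B)
      (hgm.add measurable_const) (fun x => by linarith [hB x, abs_le.1 (hB x)])
      (C := 2 * B) (by linarith) (fun x => by linarith [(abs_le.1 (hB x)).2]) hcG
    rw [hint_eq B] at this
    exact this
  have hkey2 : -cl + B ≤ -(∫ x, g x ∂μ) + B := by
    have hnegint : Integrable (fun x => -g x) μ := hgint.neg
    have hcG : ∀ᵐ x ∂μ, limsup (fun n : ℕ =>
        (n:ℝ)⁻¹ * birkhoffSum T (fun y => -g y + B) n x) atTop = -cl + B := by
      filter_upwards [hcl] with x hx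
      have hSneg : ∀ n : ℕ, birkhoffSum T (fun y => -g y) n x = -birkhoffSum T (⇑g) n x := by
        intro n
        rw [birkhoffSum, birkhoffSum, ← Finset.sum_neg_distrib]
      have e1 : limsup (fun n : ℕ => (n:ℝ)⁻¹ * birkhoffSum T (fun y => -g y + B) n x) atTop
          = limsup (fun n : ℕ => -avg x n + B) atTop := by
        apply Filter.limsup_congr
        filter_upwards [eventually_ge_atTop 1] with n hn
        rw [avg_shift (fun y => -g y) B x n hn, hSneg n, havg]
        simp only
        ring
      rw [e1, limsup_add_const atTop _ B
        (isBdd_le_of_abs (fun n => by simpa using habs x n))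
        (isBdd_ge_of_abs (fun n => by simpa using habs x n)).isCoboundedUnder_le,
        my_limsup_neg]
      exact congrArg (fun t => -t + B) hx
    have := kw_key μ hT.toMeasurePreserving (G := fun y => -g y + B)
      (hgm.neg.add measurable_const) (fun x => by linarith [(abs_le.1 (hB x)).2])
      (C := 2 * B) (by linarith) (fun x => by linarith [(abs_le.1 (hB x)).1]) hcG
    have hint2 : ∫ x, (-g x + B) ∂μ = -(∫ x, g x ∂μ) + B := by
      rw [integral_add hnegint (integrable_const B), integral_neg, integral_const]
      simp [measure_univ]
    rw [hint2] at this
    exact this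
  have hclL : cl ≤ cL := by
    obtain ⟨x, hx1, hx2⟩ := (hcl.and hcL).exists
    have : l x ≤ L x := liminf_le_limsup (isBdd_le_of_abs (habs x)) (isBdd_ge_of_abs (habs x))
    rw [hx1, hx2] at this
    exact this
  have hL_eq : cL = ∫ x, g x ∂μ := le_antisymm (by linarith) (by linarith)
  have hl_eq : cl = ∫ x, g x ∂μ := le_antisymm (by linarith) (by linarith)
  filter_upwards [hcL, hcl] with x hx1 hx2
  have h1 : limsup (fun n => avg x n) atTop = ∫ x, g x ∂μ := hx1.trans hL_eq
  have h2 : liminf (fun n => avg x n) atTop = ∫ x, g x ∂μ := hx2.trans hl_eq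
  exact tendsto_of_liminf_eq_limsup h2 h1
    (isBdd_le_of_abs (habs x)) (isBdd_ge_of_abs (habs x))

end Birkhoff

section AllG

variable {X : Type*} [MetricSpace X] [CompactSpace X] [MeasurableSpace X] [BorelSpace X]

theorem birkhoff_ae_all (μ : Measure X) [IsProbabilityMeasure μ] {T : X → X}
    (hT : Ergodic T μ) :
    ∀ᵐ x ∂μ, ∀ g : C(X, ℝ), Tendsto (fun n : ℕ => (n:ℝ)⁻¹ * birkhoffSum T (⇑g) n x) atTop
      (𝓝 (∫ x, g x ∂μ)) := by
  haveI : Nonempty C(X, ℝ) := ⟨0⟩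
  obtain ⟨D, hD⟩ := TopologicalSpace.exists_dense_seq C(X, ℝ)
  have hall : ∀ᵐ x ∂μ, ∀ k : ℕ, Tendsto (fun n : ℕ => (n:ℝ)⁻¹ * birkhoffSum T (⇑(D k)) n x)
      atTop (𝓝 (∫ x, D k x ∂μ)) := ae_all_iff.2 fun k => birkhoff_ae μ hT (D k)
  filter_upwards [hall] with x hx g
  apply tendsto_of_approx
  intro ε hε
  obtain ⟨k, hk⟩ := Metric.denseRange_iff.1 hD g ε hε
  have hnorm : ‖g - D k‖ ≤ ε := by
    rw [← dist_eq_norm]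
    exact hk.le
  have hbd : ∀ y, |(g - D k) y| ≤ ‖g - D k‖ := fun y => (g - D k).norm_coe_le_norm y
  refine ⟨fun n => (n:ℝ)⁻¹ * birkhoffSum T (⇑(D k)) n x, ∫ x, D k x ∂μ, hx k,
    fun n => ?_, ?_⟩
  · have hsub : birkhoffSum T (⇑g) n x - birkhoffSum T (⇑(D k)) n x
        = birkhoffSum T (⇑(g - D k)) n x := by
      rw [birkhoffSum, birkhoffSum, birkhoffSum, ← Finset.sum_sub_distrib]
      refine Finset.sum_congr rfl fun i _ => ?_
      simp
    have : (n:ℝ)⁻¹ * birkhoffSum T (⇑g) n x - (n:ℝ)⁻¹ * birkhoffSum T (⇑(D k)) n x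
        = (n:ℝ)⁻¹ * birkhoffSum T (⇑(g - D k)) n x := by
      rw [← mul_sub, hsub]
    rw [this]
    exact (abs_avg_le (norm_nonneg _) hbd x n).trans hnorm
  · have hgint : Integrable (⇑g) μ := integrable_bdd μ g.continuous.measurable
      (fun y => g.norm_coe_le_norm y)
    have hDint : Integrable (⇑(D k)) μ := integrable_bdd μ (D k).continuous.measurable
      (fun y => (D k).norm_coe_le_norm y)
    have : (∫ x, g x ∂μ) - ∫ x, D k x ∂μ = ∫ x, (g - D k) x ∂μ := by
      rw [← integral_sub hgint hDint]
      refine integral_congr_ae (Filter.Eventually.of_forall fun y => ?_)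
      simp
    rw [← Real.norm_eq_abs, this]
    calc ‖∫ x, (g - D k) x ∂μ‖ ≤ ‖g - D k‖ * (μ Set.univ).toReal :=
          norm_integral_le_of_norm_le_const
            (Filter.Eventually.of_forall fun y => by simpa using hbd y)
      _ ≤ ε := by simp [measure_univ]; exact hnorm

theorem birkhoff_icc (μ : Measure X) [IsProbabilityMeasure μ] {T : X → X}
    (hT : Ergodic T μ) :
    ∀ᵐ x ∂μ, ∀ g : C(X, ℝ), Tendsto (fun n : ℕ => (n:ℝ)⁻¹ * ∑ i ∈ Finset.Icc 1 n, g (T^[i] x))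
      atTop (𝓝 (∫ x, g x ∂μ)) := by
  have h1 := birkhoff_ae_all μ hT
  have hqmp := hT.toMeasurePreserving.quasiMeasurePreserving
  have h2 : ∀ᵐ x ∂μ, ∀ g : C(X, ℝ),
      Tendsto (fun n : ℕ => (n:ℝ)⁻¹ * birkhoffSum T (⇑g) n (T x)) atTop
        (𝓝 (∫ x, g x ∂μ)) := hqmp.tendsto_ae.eventually h1
  filter_upwards [h2] with x hx g
  have heq : ∀ n : ℕ, ∑ i ∈ Finset.Icc 1 n, g (T^[i] x) = birkhoffSum T (⇑g) n (T x) := by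
    intro n
    rw [birkhoffSum, ← Finset.Ico_add_one_right_eq_Icc, Finset.sum_Ico_eq_sum_range]
    simp only [Nat.succ_sub_one, Nat.add_sub_cancel]
    refine Finset.sum_congr rfl fun i _ => ?_
    rw [add_comm 1 i, Function.iterate_succ_apply]
  simp_rw [heq]
  exact hx g

end AllG

section Main

variable {X : Type*} [MetricSpace X] [CompactSpace X] [MeasurableSpace X] [BorelSpace X]

/-- product continuous map -/
noncomputable def prodCM (g h : C(X, ℝ)) : C(X × X, ℝ) :=
  ⟨fun p => g p.1 * h p.2,
    ((g.continuous.comp continuous_fst).mul (h.continuous.comp continuous_snd))⟩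

lemma double_avg_abs_le {T : X → X} (x : X) (K : C(X × X, ℝ)) (n : ℕ) :
    |((n:ℝ)^2)⁻¹ * ∑ i ∈ Finset.Icc 1 n, ∑ j ∈ Finset.Icc 1 n, K (T^[i] x, T^[j] x)| ≤ ‖K‖ := by
  rcases Nat.eq_zero_or_pos n with rfl | hn
  · simpa using norm_nonneg K
  · have hn0 : (0:ℝ) < n := by exact_mod_cast hn
    have hbd : ∀ p : X × X, |K p| ≤ ‖K‖ := fun p => K.norm_coe_le_norm p
    have h1 : |∑ i ∈ Finset.Icc 1 n, ∑ j ∈ Finset.Icc 1 n, K (T^[i] x, T^[j] x)|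
        ≤ (n:ℝ)^2 * ‖K‖ := by
      calc |∑ i ∈ Finset.Icc 1 n, ∑ j ∈ Finset.Icc 1 n, K (T^[i] x, T^[j] x)|
          ≤ ∑ i ∈ Finset.Icc 1 n, |∑ j ∈ Finset.Icc 1 n, K (T^[i] x, T^[j] x)| :=
            Finset.abs_sum_le_sum_abs _ _
        _ ≤ ∑ i ∈ Finset.Icc 1 n, ∑ j ∈ Finset.Icc 1 n, |K (T^[i] x, T^[j] x)| := by
            refine Finset.sum_le_sum fun i _ => Finset.abs_sum_le_sum_abs _ _
        _ ≤ ∑ _i ∈ Finset.Icc 1 n, ∑ _j ∈ Finset.Icc 1 n, ‖K‖ := by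
            refine Finset.sum_le_sum fun i _ => Finset.sum_le_sum fun j _ => hbd _
        _ = (n:ℝ)^2 * ‖K‖ := by
            simp [Nat.card_Icc]
            ring
    rw [abs_mul, abs_inv, abs_pow, Nat.abs_cast]
    calc ((n:ℝ)^2)⁻¹ * |∑ i ∈ Finset.Icc 1 n, ∑ j ∈ Finset.Icc 1 n, K (T^[i] x, T^[j] x)|
        ≤ ((n:ℝ)^2)⁻¹ * ((n:ℝ)^2 * ‖K‖) := by
          exact mul_le_mul_of_nonneg_left h1 (by positivity)
      _ = ‖K‖ := by field_simp

theorem stmt_3' (μ : Measure X) [IsProbabilityMeasure μ] (T : X → X) (hT : Ergodic T μ) :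
    ∀ᵐ x ∂μ, ∀ f : X × X → ℝ, Continuous f →
      Tendsto (fun n : ℕ => ((n : ℝ) ^ 2)⁻¹ *
          ∑ i ∈ Finset.Icc 1 n, ∑ j ∈ Finset.Icc 1 n, f (T^[i] x, T^[j] x))
        atTop (𝓝 (∫ p, f p ∂(μ.prod μ))) := by
  filter_upwards [birkhoff_icc μ hT] with x hx f hf
  -- bundled versions
  have hintegrable : ∀ H : C(X × X, ℝ), Integrable (⇑H) (μ.prod μ) := fun H =>
    integrable_bdd _ H.continuous.measurable (fun p => H.norm_coe_le_norm p)
  set seq : C(X × X, ℝ) → ℕ → ℝ := fun H n => ((n : ℝ) ^ 2)⁻¹ *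
      ∑ i ∈ Finset.Icc 1 n, ∑ j ∈ Finset.Icc 1 n, H (T^[i] x, T^[j] x) with hseq
  set P : C(X × X, ℝ) → Prop :=
    fun H => Tendsto (seq H) atTop (𝓝 (∫ p, H p ∂(μ.prod μ))) with hP
  -- products satisfy P
  have hprod : ∀ g h : C(X, ℝ), P (prodCM g h) := by
    intro g h
    have heq : ∀ n : ℕ, seq (prodCM g h) n =
        ((n:ℝ)⁻¹ * ∑ i ∈ Finset.Icc 1 n, g (T^[i] x)) *
        ((n:ℝ)⁻¹ * ∑ j ∈ Finset.Icc 1 n, h (T^[j] x)) := by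
      intro n
      rw [hseq]
      simp only [prodCM, ContinuousMap.coe_mk]
      rw [← Finset.sum_mul_sum]
      rw [sq, mul_inv]
      ring
    have hlim : Tendsto (seq (prodCM g h)) atTop
        (𝓝 ((∫ y, g y ∂μ) * ∫ y, h y ∂μ)) := by
      rw [funext heq]
      exact (hx g).mul (hx h)
    have : ∫ p, (prodCM g h) p ∂(μ.prod μ) = (∫ y, g y ∂μ) * ∫ y, h y ∂μ := by
      simp only [prodCM, ContinuousMap.coe_mk]
      exact integral_prod_mul (⇑g) (⇑h)
    rw [hP]
    simp only
    rw [this]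
    exact hlim
  -- the submonoid of products
  set SM : Submonoid C(X × X, ℝ) :=
    { carrier := {H | ∃ g h : C(X, ℝ), H = prodCM g h}
      one_mem' := ⟨1, 1, by ext p; simp [prodCM]⟩
      mul_mem' := by
        rintro H1 H2 ⟨g1, h1, rfl⟩ ⟨g2, h2, rfl⟩
        exact ⟨g1 * g2, h1 * h2, by ext p; simp [prodCM]; ring⟩ } with hSM
  -- P holds on the span of SM
  have hspan : ∀ H ∈ Submodule.span ℝ (SM : Set C(X × X, ℝ)), P H := by
    intro H hH
    induction hH using Submodule.span_induction with
    | mem H hmem =>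
      obtain ⟨g, h, rfl⟩ := hmem
      exact hprod g h
    | zero =>
      rw [hP]
      simp only
      have h1 : seq 0 = fun _ => 0 := by
        funext n; rw [hseq]; simp
      rw [h1]
      have h2 : ∫ p, (0 : C(X × X, ℝ)) p ∂(μ.prod μ) = 0 := by simp
      rw [h2]
      exact tendsto_const_nhds
    | add H1 H2 hm1 hm2 ih1 ih2 =>
      rw [hP]
      simp only
      have hseqadd : seq (H1 + H2) = fun n => seq H1 n + seq H2 n := by
        funext n
        rw [hseq]
        simp only [ContinuousMap.add_apply, Finset.sum_add_distrib, mul_add]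
      have hintadd : ∫ p, (H1 + H2) p ∂(μ.prod μ)
          = (∫ p, H1 p ∂(μ.prod μ)) + ∫ p, H2 p ∂(μ.prod μ) := by
        simp only [ContinuousMap.add_apply]
        exact integral_add (hintegrable H1) (hintegrable H2)
      rw [hseqadd, hintadd]
      exact ih1.add ih2
    | smul a H hmem ih =>
      rw [hP]
      simp only
      have hseqsmul : seq (a • H) = fun n => a * seq H n := by
        funext n
        rw [hseq]
        simp only [ContinuousMap.smul_apply, smul_eq_mul, ← Finset.mul_sum]
        ring
      have hintsmul : ∫ p, (a • H) p ∂(μ.prod μ) = a * ∫ p, H p ∂(μ.prod μ) := by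
        simp only [ContinuousMap.smul_apply, smul_eq_mul]
        exact integral_const_mul a _
      rw [hseqsmul, hintsmul]
      exact ih.const_mul a
  -- P holds on the adjoined algebra
  set A : Subalgebra ℝ C(X × X, ℝ) := Algebra.adjoin ℝ (SM : Set C(X × X, ℝ)) with hAdef
  have hA : ∀ H : C(X × X, ℝ), H ∈ A → P H := by
    intro H hH
    apply hspan
    have h1 : Subalgebra.toSubmodule A = Submodule.span ℝ (SM : Set C(X × X, ℝ)) := by
      rw [hAdef, Algebra.adjoin_eq_span, Submonoid.closure_eq]
    have hH' : H ∈ Subalgebra.toSubmodule A := hH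
    rwa [h1] at hH'
  -- A separates points
  have hsep : A.SeparatesPoints := by
    intro p q hpq
    have hor : p.1 ≠ q.1 ∨ p.2 ≠ q.2 := by
      by_contra hcon
      push_neg at hcon
      exact hpq (Prod.ext hcon.1 hcon.2)
    rcases hor with h | h
    · set d : C(X, ℝ) := ⟨fun y => dist y p.1, (continuous_id.dist continuous_const)⟩ with hd
      refine ⟨⇑(prodCM d 1), ⟨prodCM d 1, Algebra.subset_adjoin ⟨d, 1, rfl⟩, rfl⟩, ?_⟩
      simp only [prodCM, hd, ContinuousMap.coe_mk, ContinuousMap.one_apply, mul_one]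
      rw [dist_self]
      intro hc
      exact h (dist_eq_zero.1 hc.symm).symm
    · set d : C(X, ℝ) := ⟨fun y => dist y p.2, (continuous_id.dist continuous_const)⟩ with hd
      refine ⟨⇑(prodCM 1 d), ⟨prodCM 1 d, Algebra.subset_adjoin ⟨1, d, rfl⟩, rfl⟩, ?_⟩
      simp only [prodCM, hd, ContinuousMap.coe_mk, ContinuousMap.one_apply, one_mul]
      rw [dist_self]
      intro hc
      exact h (dist_eq_zero.1 hc.symm).symm
  -- final approximation
  set F : C(X × X, ℝ) := ⟨f, hf⟩ with hF
  apply tendsto_of_approx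
  intro ε hε
  obtain ⟨H, hH⟩ :=
    ContinuousMap.exists_mem_subalgebra_near_continuousMap_of_separatesPoints A hsep F ε hε
  have hHP : P (H : C(X × X, ℝ)) := hA _ H.2
  refine ⟨seq (H : C(X × X, ℝ)), ∫ p, (H : C(X × X, ℝ)) p ∂(μ.prod μ), hHP, fun n => ?_, ?_⟩
  · have hdiff : ((n : ℝ) ^ 2)⁻¹ *
        (∑ i ∈ Finset.Icc 1 n, ∑ j ∈ Finset.Icc 1 n, f (T^[i] x, T^[j] x)) -
        seq (H : C(X × X, ℝ)) n = seq (F - (H : C(X × X, ℝ))) n := by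
      rw [hseq]
      simp only [ContinuousMap.sub_apply, Finset.sum_sub_distrib, mul_sub]
      rfl
    rw [hdiff]
    have h1 := double_avg_abs_le (T := T) x (F - (H : C(X × X, ℝ))) n
    have h2 : ‖F - (H : C(X × X, ℝ))‖ ≤ ε := by
      rw [norm_sub_rev]
      exact hH.le
    calc |seq (F - (H : C(X × X, ℝ))) n| ≤ ‖F - (H : C(X × X, ℝ))‖ := h1
      _ ≤ ε := h2
  · have hFint : Integrable (⇑F) (μ.prod μ) := hintegrable F
    have hHint : Integrable (⇑(H : C(X × X, ℝ))) (μ.prod μ) := hintegrable _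
    have heq : (∫ p, f p ∂(μ.prod μ)) - ∫ p, (H : C(X × X, ℝ)) p ∂(μ.prod μ)
        = ∫ p, (F - (H : C(X × X, ℝ))) p ∂(μ.prod μ) := by
      show (∫ p, F p ∂(μ.prod μ)) - ∫ p, (H : C(X × X, ℝ)) p ∂(μ.prod μ)
        = ∫ p, (F - (H : C(X × X, ℝ))) p ∂(μ.prod μ)
      rw [← integral_sub hFint hHint]
      refine integral_congr_ae (Filter.Eventually.of_forall fun p => ?_)
      simp
    rw [← Real.norm_eq_abs, heq]
    calc ‖∫ p, (F - (H : C(X × X, ℝ))) p ∂(μ.prod μ)‖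
        ≤ ‖F - (H : C(X × X, ℝ))‖ * ((μ.prod μ) Set.univ).toReal :=
          norm_integral_le_of_norm_le_const
            (Filter.Eventually.of_forall fun p => by
              simpa using (F - (H : C(X × X, ℝ))).norm_coe_le_norm p)
      _ ≤ ε := by
          rw [measure_univ]
          simp only [ENNReal.toReal_one, mul_one]
          rw [norm_sub_rev]
          exact hH.le

end Main


theorem stmt_3 {X : Type*} [MetricSpace X] [CompactSpace X] [MeasurableSpace X] [BorelSpace X]
    (μ : Measure X) [IsProbabilityMeasure μ] (T : X → X) (hT : Ergodic T μ) :
    ∀ᵐ x ∂μ, ∀ f : X × X → ℝ, Continuous f →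
      Tendsto (fun n : ℕ => ((n : ℝ) ^ 2)⁻¹ *
          ∑ i ∈ Finset.Icc 1 n, ∑ j ∈ Finset.Icc 1 n, f (T^[i] x, T^[j] x))
        atTop (𝓝 (∫ p, f p ∂(μ.prod μ))) := by
  exact stmt_3' μ T hT
end

section
/- Let (X,d) be a compact metric space, μ a Borel probability measure, T : X → X ergodic and measure-preserving, and U ⊆ X × X a Borel set whose topological boundary ∂U satisfies (μ × μ)(∂U) = 0. Then for μ-almost every x ∈ X, (1/n²) ∑_{i=1}^n ∑_{j=1}^n 1_U(T^i x, T^j x) → (μ × μ)(U) as n → ∞. -/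
open MeasureTheory Filter Topology
open scoped ENNReal NNReal

namespace Stmt4

variable {α : Type*} [MeasurableSpace α] {μ : Measure α} {T : α → α} {g f : α → ℝ}

/-- `maxS T g n x = max_{0 ≤ k ≤ n} birkhoffSum T g k x`. -/
noncomputable def maxS (T : α → α) (g : α → ℝ) : ℕ → α → ℝ
  | 0, _ => 0
  | (n+1), x => max (maxS T g n x) (birkhoffSum T g (n+1) x)

lemma maxS_nonneg (T : α → α) (g : α → ℝ) (n : ℕ) (x : α) : 0 ≤ maxS T g n x := by
  induction n with
  | zero => simp [maxS]
  | succ n ih => exact le_max_of_le_left ih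

lemma maxS_mono (T : α → α) (g : α → ℝ) (x : α) : Monotone (fun n => maxS T g n x) :=
  monotone_nat_of_le_succ fun n => le_max_left _ _

lemma birkhoffSum_le_maxS (T : α → α) (g : α → ℝ) {k n : ℕ} (h : k ≤ n) (x : α) :
    birkhoffSum T g k x ≤ maxS T g n x := by
  induction n with
  | zero => interval_cases k; simp [maxS, birkhoffSum]
  | succ n ih =>
    rcases Nat.lt_or_ge k (n+1) with hk | hk
    · exact (ih (Nat.lt_succ_iff.mp hk)).trans (le_max_left _ _)
    · have : k = n + 1 := le_antisymm h hk
      subst this; exact le_max_right _ _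

lemma maxS_eq (n : ℕ) (x : α) (h : 0 < maxS T g n x) :
    ∃ k, k < n ∧ maxS T g n x = birkhoffSum T g (k+1) x := by
  induction n with
  | zero => simp [maxS] at h
  | succ n ih =>
    rcases le_total (birkhoffSum T g (n+1) x) (maxS T g n x) with hle | hle
    · have hmax : maxS T g (n+1) x = maxS T g n x := max_eq_left hle
      rw [hmax] at h ⊢
      obtain ⟨k, hk, hEq⟩ := ih h
      exact ⟨k, hk.trans (Nat.lt_succ_self n), hEq⟩
    · exact ⟨n, Nat.lt_succ_self n, max_eq_right hle⟩

lemma measurable_birkhoffSum (hT : Measurable T) (hg : Measurable g) (n : ℕ) :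
    Measurable (birkhoffSum T g n) := by
  unfold birkhoffSum
  exact Finset.measurable_sum _ fun i _ => hg.comp (hT.iterate i)

lemma measurable_maxS (hT : Measurable T) (hg : Measurable g) (n : ℕ) :
    Measurable (maxS T g n) := by
  induction n with
  | zero => exact measurable_const
  | succ n ih => exact ih.max (measurable_birkhoffSum hT hg (n+1))

lemma Integrable.max' {f g : α → ℝ} (hf : Integrable f μ) (hg : Integrable g μ) :
    Integrable (fun x => max (f x) (g x)) μ := by
  have : (fun x => max (f x) (g x)) = f ⊔ g := by
    funext x; simp [Pi.sup_apply, max_def]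
  rw [this]; exact hf.sup hg

lemma integrable_comp_iterate (hT : MeasurePreserving T μ μ) (hg : Integrable g μ) (i : ℕ) :
    Integrable (fun x => g (T^[i] x)) μ :=
  ((hT.iterate i).integrable_comp hg.aestronglyMeasurable).mpr hg

lemma integrable_birkhoffSum (hT : MeasurePreserving T μ μ) (hg : Integrable g μ) (n : ℕ) :
    Integrable (birkhoffSum T g n) μ := by
  unfold birkhoffSum
  exact integrable_finset_sum _ fun i _ => integrable_comp_iterate hT hg i

lemma integrable_maxS (hT : MeasurePreserving T μ μ) (hg : Integrable g μ) (n : ℕ) :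
    Integrable (maxS T g n) μ := by
  induction n with
  | zero => simpa [maxS] using integrable_const (0:ℝ)
  | succ n ih => exact Integrable.max' ih (integrable_birkhoffSum hT hg (n+1))

/-- **Maximal ergodic theorem** (Garsia's proof). -/
theorem maximal_ergodic (hT : MeasurePreserving T μ μ) (hgm : Measurable g)
    (hgi : Integrable g μ) (n : ℕ) :
    0 ≤ ∫ x in {x | 0 < maxS T g n x}, g x ∂μ := by
  set M := maxS T g n with hM
  set E := {x | 0 < M x} with hE
  have hMm : Measurable M := measurable_maxS hT.measurable hgm n
  have hMi : Integrable M μ := integrable_maxS hT hgi n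
  have hMTi : Integrable (fun x => M (T x)) μ :=
    (hT.integrable_comp hMi.aestronglyMeasurable).mpr hMi
  have hEm : MeasurableSet E := measurableSet_lt measurable_const hMm
  -- key pointwise inequality on E
  have key : ∀ x ∈ E, M x - M (T x) ≤ g x := by
    intro x hx
    obtain ⟨k, hk, hEq⟩ := maxS_eq n x hx
    have h1 : birkhoffSum T g k (T x) ≤ M (T x) :=
      birkhoffSum_le_maxS T g (Nat.le_of_lt_succ (hk.trans (Nat.lt_succ_self n))) (T x)
    have h2 : birkhoffSum T g (k+1) x = g x + birkhoffSum T g k (T x) :=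
      birkhoffSum_succ' T g k x
    have h3 : M x = g x + birkhoffSum T g k (T x) := by rw [hM, hEq, h2]
    linarith
  have hM0 : ∀ x, x ∉ E → M x = 0 := by
    intro x hx
    have hx' : ¬ 0 < M x := hx
    exact le_antisymm (not_lt.mp hx') (maxS_nonneg T g n x)
  -- integral computations
  have hint1 : ∫ x in E, (M x - M (T x)) ∂μ ≤ ∫ x in E, g x ∂μ :=
    setIntegral_mono_on ((hMi.sub hMTi).integrableOn) hgi.integrableOn hEm key
  have hIE : ∫ x in E, M x ∂μ = ∫ x, M x ∂μ := by
    rw [← integral_indicator hEm]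
    congr 1
    funext x
    by_cases hx : x ∈ E
    · rw [Set.indicator_of_mem hx]
    · rw [Set.indicator_of_notMem hx, hM0 x hx]
  have hIE2 : ∫ x in E, M (T x) ∂μ ≤ ∫ x, M (T x) ∂μ :=
    setIntegral_le_integral hMTi (Eventually.of_forall fun x => maxS_nonneg T g n (T x))
  have hcomp : ∫ x, M (T x) ∂μ = ∫ x, M x ∂μ := by
    rw [← integral_map hT.measurable.aemeasurable hMm.aestronglyMeasurable, hT.map_eq]
  have h4 : ∫ x in E, (M x - M (T x)) ∂μ = ∫ x in E, M x ∂μ - ∫ x in E, M (T x) ∂μ :=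
    integral_sub hMi.integrableOn hMTi.integrableOn
  linarith

/-- Maximal ergodic theorem for the full maximal set. -/
theorem maximal_ergodic' (hT : MeasurePreserving T μ μ) (hgm : Measurable g)
    (hgi : Integrable g μ) :
    0 ≤ ∫ x in {x | ∃ n, 0 < birkhoffSum T g n x}, g x ∂μ := by
  have hsm : ∀ N : ℕ, MeasurableSet {x | 0 < maxS T g N x} :=
    fun N => measurableSet_lt measurable_const (measurable_maxS hT.measurable hgm N)
  have hmono : Monotone (fun N => {x | 0 < maxS T g N x}) := by
    apply monotone_nat_of_le_succ
    intro N x hx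
    exact lt_of_lt_of_le hx (maxS_mono T g x (Nat.le_succ N))
  have hUnion : (⋃ N, {x | 0 < maxS T g N x}) = {x | ∃ n, 0 < birkhoffSum T g n x} := by
    ext x
    simp only [Set.mem_iUnion, Set.mem_setOf_eq]
    constructor
    · rintro ⟨N, hN⟩
      obtain ⟨k, _, hEq⟩ := maxS_eq N x hN
      exact ⟨k+1, hEq ▸ hN⟩
    · rintro ⟨n, hn⟩
      exact ⟨n, lt_of_lt_of_le hn (birkhoffSum_le_maxS T g le_rfl x)⟩
  have htends := tendsto_setIntegral_of_monotone hsm hmono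
    (hgi.integrableOn : IntegrableOn g (⋃ N, {x | 0 < maxS T g N x}) μ)
  rw [hUnion] at htends
  exact ge_of_tendsto' htends (fun N => maximal_ergodic hT hgm hgi N)

/-! ### limsup helpers -/

lemma limsup_le_limsup_of_tendsto_sub {u v : ℕ → ℝ} {C : ℝ}
    (hu : ∀ n, |u n| ≤ C) (hv : ∀ n, |v n| ≤ C)
    (h : Tendsto (fun n => u n - v n) atTop (𝓝 0)) :
    limsup u atTop ≤ limsup v atTop := by
  have hvb : IsBoundedUnder (· ≤ ·) atTop v :=
    isBoundedUnder_of ⟨C, fun n => (abs_le.mp (hv n)).2⟩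
  have huc : IsCoboundedUnder (· ≤ ·) atTop u :=
    IsBoundedUnder.isCoboundedUnder_le (isBoundedUnder_of ⟨-C, fun n => (abs_le.mp (hu n)).1⟩)
  have hvc : IsCoboundedUnder (· ≤ ·) atTop v :=
    IsBoundedUnder.isCoboundedUnder_le (isBoundedUnder_of ⟨-C, fun n => (abs_le.mp (hv n)).1⟩)
  refine le_of_forall_pos_le_add (fun ε hε => ?_)
  have hev : ∀ᶠ n in atTop, u n ≤ v n + ε := by
    filter_upwards [Metric.tendsto_nhds.mp h ε hε] with n hn
    have := (abs_lt.mp (by simpa [Real.dist_eq] using hn)).2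
    linarith
  calc limsup u atTop ≤ limsup (fun n => v n + ε) atTop := by
        refine limsup_le_limsup hev huc ?_
        exact isBoundedUnder_of ⟨C + ε, fun n => by
          have := (abs_le.mp (hv n)).2; linarith⟩
    _ = limsup v atTop + ε := limsup_add_const atTop v ε hvb hvc

lemma limsup_eq_limsup_of_tendsto_sub {u v : ℕ → ℝ} {C : ℝ}
    (hu : ∀ n, |u n| ≤ C) (hv : ∀ n, |v n| ≤ C)
    (h : Tendsto (fun n => u n - v n) atTop (𝓝 0)) :
    limsup u atTop = limsup v atTop :=
  le_antisymm (limsup_le_limsup_of_tendsto_sub hu hv h)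
    (limsup_le_limsup_of_tendsto_sub hv hu (by simpa using h.neg))

/-! ### Birkhoff's pointwise ergodic theorem (bounded measurable functions, ergodic case) -/

lemma abs_birkhoffSum_le {C : ℝ} (hC : ∀ x, |f x| ≤ C) (n : ℕ) (x : α) :
    |birkhoffSum T f n x| ≤ n * C := by
  unfold birkhoffSum
  calc |∑ i ∈ Finset.range n, f (T^[i] x)| ≤ ∑ i ∈ Finset.range n, |f (T^[i] x)| :=
        Finset.abs_sum_le_sum_abs _ _
    _ ≤ ∑ _i ∈ Finset.range n, C := Finset.sum_le_sum fun i _ => hC _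
    _ = n * C := by simp [Finset.sum_const, mul_comm]

lemma abs_avg_le {C : ℝ} (hC0 : 0 ≤ C) (hC : ∀ x, |f x| ≤ C) (n : ℕ) (x : α) :
    |birkhoffSum T f n x / n| ≤ C := by
  rcases Nat.eq_zero_or_pos n with rfl | hn
  · simpa using hC0
  · have hn' : (0:ℝ) < n := by exact_mod_cast hn
    rw [abs_div, abs_of_pos hn', div_le_iff₀ hn']
    calc |birkhoffSum T f n x| ≤ n * C := abs_birkhoffSum_le hC n x
      _ = C * n := mul_comm _ _

/-- The limsup of Birkhoff averages is invariant under `T`. -/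
lemma limsup_avg_comp {C : ℝ} (hC0 : 0 ≤ C) (hC : ∀ x, |f x| ≤ C) (x : α) :
    limsup (fun n => birkhoffSum T f n (T x) / n) atTop
      = limsup (fun n => birkhoffSum T f n x / n) atTop := by
  set u : ℕ → ℝ := fun n => birkhoffSum T f n x / n with hu
  set v : ℕ → ℝ := fun n => birkhoffSum T f n (T x) / n with hv
  have hw : limsup (fun n => u (n + 1)) atTop = limsup u atTop := limsup_nat_add u 1
  rw [← hw]
  refine limsup_eq_limsup_of_tendsto_sub (C := C) (fun n => abs_avg_le hC0 hC n (T x))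
    (fun n => abs_avg_le hC0 hC (n+1) x) ?_
  have hbound : ∀ᶠ n in atTop, ‖v n - u (n + 1)‖ ≤ 2 * C / n := by
    filter_upwards [eventually_ge_atTop 1] with n hn
    have hn' : (0:ℝ) < n := by exact_mod_cast hn
    have hs : birkhoffSum T f n (T x) = birkhoffSum T f (n+1) x - f x := by
      have := birkhoffSum_succ' T f n x; linarith
    set s : ℝ := birkhoffSum T f (n+1) x with hsdef
    have hsb : |s| ≤ ((n:ℝ)+1) * C := by
      have := abs_birkhoffSum_le (T := T) hC (n+1) x
      push_cast at this ⊢; linarith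
    have hfb : |f x| ≤ C := hC x
    have heq : v n - u (n+1) = s / ((n:ℝ) * ((n:ℝ)+1)) - f x / n := by
      simp only [hv, hu, hs]
      push_cast
      field_simp
      ring
    rw [Real.norm_eq_abs, heq]
    have h1 : |s / ((n:ℝ) * ((n:ℝ)+1))| ≤ C / n := by
      rw [abs_div, abs_of_pos (by positivity : (0:ℝ) < (n:ℝ) * ((n:ℝ)+1))]
      rw [div_le_div_iff₀ (by positivity) hn']
      nlinarith [abs_nonneg s]
    have h2 : |f x / n| ≤ C / n := by
      rw [abs_div, abs_of_pos hn']
      gcongr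
    have habs : |s / ((n:ℝ) * ((n:ℝ)+1)) - f x / n|
        ≤ |s / ((n:ℝ) * ((n:ℝ)+1))| + |f x / n| := by
      rw [sub_eq_add_neg]
      exact (abs_add_le _ _).trans (by rw [abs_neg])
    calc |s / ((n:ℝ) * ((n:ℝ)+1)) - f x / n|
        ≤ |s / ((n:ℝ) * ((n:ℝ)+1))| + |f x / n| := habs
      _ ≤ C / n + C / n := add_le_add h1 h2
      _ = 2 * C / n := by ring
  exact squeeze_zero_norm' hbound (tendsto_const_div_atTop_nhds_zero_nat (2*C))

theorem birkhoff_limsup_le [IsProbabilityMeasure μ] (hT : Ergodic T μ) (hf : Measurable f)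
    {C : ℝ} (hC0 : 0 ≤ C) (hC : ∀ x, |f x| ≤ C) :
    ∀ᵐ x ∂μ, limsup (fun n => birkhoffSum T f n x / n) atTop ≤ ∫ y, f y ∂μ := by
  have hfi : Integrable f μ := by
    refine Integrable.mono' (integrable_const C) hf.aestronglyMeasurable ?_
    exact Eventually.of_forall fun x => by simpa [Real.norm_eq_abs] using hC x
  have key : ∀ c : ℝ, (∫ y, f y ∂μ) < c →
      ∀ᵐ x ∂μ, limsup (fun n => birkhoffSum T f n x / n) atTop ≤ c := by
    intro c hc
    set φ : α → ℝ := fun x => limsup (fun n => birkhoffSum T f n x / n) atTop with hφ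
    have hφm : Measurable φ :=
      Measurable.limsup fun n => (measurable_birkhoffSum hT.toMeasurePreserving.measurable hf n).div_const _
    have hφT : ∀ x, φ (T x) = φ x := fun x => limsup_avg_comp hC0 hC x
    set A : Set α := {x | c < φ x} with hA
    have hAm : MeasurableSet A := measurableSet_lt measurable_const hφm
    have hAinv : T ⁻¹' A = A := by
      ext x
      simp only [Set.mem_preimage, hA, Set.mem_setOf_eq, hφT x]
    rcases hT.ae_empty_or_univ hAm hAinv with hA0 | hA1
    · have hμA : μ A = 0 := ae_eq_empty.mp hA0
      rw [ae_iff]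
      convert hμA using 2
      ext x
      simp [hA, hφ, not_le]
    · exfalso
      have horb : ∀ (i : ℕ) (x : α), T^[i] x ∈ A ↔ x ∈ A := by
        intro i
        induction i with
        | zero => intro x; simp
        | succ i ih =>
          intro x
          rw [Function.iterate_succ_apply, ih (T x)]
          constructor
          · intro h; rw [← hAinv]; exact h
          · intro h; rw [← hAinv] at h; exact h
      set g : α → ℝ := A.indicator (fun y => f y - c) with hg
      have hgm : Measurable g := (hf.sub measurable_const).indicator hAm
      have hgi : Integrable g μ := (hfi.sub (integrable_const c)).indicator hAm
      have hSg : ∀ n x, x ∈ A → birkhoffSum T g n x = birkhoffSum T f n x - n * c := by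
        intro n x hx
        unfold birkhoffSum
        have : ∀ i ∈ Finset.range n, g (T^[i] x) = f (T^[i] x) - c := by
          intro i _
          exact Set.indicator_of_mem ((horb i x).mpr hx) _
        rw [Finset.sum_congr rfl this, Finset.sum_sub_distrib]
        simp [mul_comm]
      have hSg0 : ∀ n x, x ∉ A → birkhoffSum T g n x = 0 := by
        intro n x hx
        unfold birkhoffSum
        apply Finset.sum_eq_zero
        intro i _
        exact Set.indicator_of_notMem (fun h => hx ((horb i x).mp h)) _
      have hE : {x | ∃ n, 0 < birkhoffSum T g n x} = A := by
        ext x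
        simp only [Set.mem_setOf_eq]
        constructor
        · rintro ⟨n, hn⟩
          by_contra hx
          rw [hSg0 n x hx] at hn
          exact lt_irrefl 0 hn
        · intro hx
          have hcb : IsCoboundedUnder (· ≤ ·) atTop (fun n => birkhoffSum T f n x / n) :=
            IsBoundedUnder.isCoboundedUnder_le
              (isBoundedUnder_of ⟨-C, fun n => (abs_le.mp (abs_avg_le hC0 hC n x)).1⟩)
          have hfreq : ∃ᶠ n in atTop, c < birkhoffSum T f n x / n :=
            frequently_lt_of_lt_limsup hcb hx
          obtain ⟨n, hn, hn1⟩ := (hfreq.and_eventually (eventually_ge_atTop 1)).exists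
          refine ⟨n, ?_⟩
          rw [hSg n x hx]
          have hn' : (0:ℝ) < n := by exact_mod_cast hn1
          rw [lt_div_iff₀ hn'] at hn
          nlinarith
      have hpos := maximal_ergodic' hT.toMeasurePreserving hgm hgi
      rw [hE] at hpos
      have h1 : ∫ x in A, g x ∂μ = ∫ x in A, (f x - c) ∂μ :=
        setIntegral_congr_fun hAm (fun x hx => Set.indicator_of_mem hx _)
      have h2 : ∫ x in A, (f x - c) ∂μ = ∫ x, (f x - c) ∂μ := by
        rw [setIntegral_congr_set hA1, setIntegral_univ]
      have h3 : ∫ x, (f x - c) ∂μ = (∫ y, f y ∂μ) - c := by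
        rw [integral_sub hfi (integrable_const c), integral_const]
        simp
      rw [h1, h2, h3] at hpos
      linarith
  have hall : ∀ᵐ x ∂μ, ∀ k : ℕ, limsup (fun n => birkhoffSum T f n x / n) atTop
      ≤ (∫ y, f y ∂μ) + 1/(k+1) := by
    rw [ae_all_iff]
    intro k
    apply key
    have : (0:ℝ) < 1/(k+1) := by positivity
    linarith
  filter_upwards [hall] with x hx
  by_contra hcon
  push_neg at hcon
  obtain ⟨k, hk⟩ := exists_nat_one_div_lt (sub_pos.mpr hcon)
  linarith [hx k]

/-- **Birkhoff's pointwise ergodic theorem** for bounded measurable functions. -/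
theorem birkhoff [IsProbabilityMeasure μ] (hT : Ergodic T μ) (hf : Measurable f)
    {C : ℝ} (hC0 : 0 ≤ C) (hC : ∀ x, |f x| ≤ C) :
    ∀ᵐ x ∂μ, Tendsto (fun n => birkhoffSum T f n x / n) atTop (𝓝 (∫ y, f y ∂μ)) := by
  have h1 := birkhoff_limsup_le hT hf hC0 hC
  have h2 := birkhoff_limsup_le hT hf.neg hC0 (fun x => by simpa using hC x) (μ := μ)
  have hSneg : ∀ n (x : α), birkhoffSum T (fun y => -f y) n x = - birkhoffSum T f n x := by
    intro n x
    simp [birkhoffSum, Finset.sum_neg_distrib]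
  have hineg : ∫ y, -f y ∂μ = - ∫ y, f y ∂μ := integral_neg f
  filter_upwards [h1, h2] with x hx1 hx2
  rw [show (∫ y, (-f) y ∂μ) = - ∫ y, f y ∂μ from hineg] at hx2
  have hx2' : limsup (fun n => -(birkhoffSum T f n x / n)) atTop ≤ - ∫ y, f y ∂μ := by
    have : (fun n : ℕ => -(birkhoffSum T f n x / n))
        = fun n => birkhoffSum T (fun y => -f y) n x / n := by
      funext n; rw [hSneg, neg_div]
    rw [this]; exact hx2
  rw [tendsto_order]
  constructor
  · intro b hb
    have hlt : limsup (fun n => -(birkhoffSum T f n x / n)) atTop < -b := by linarith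
    have hev := eventually_lt_of_limsup_lt hlt
      (isBoundedUnder_of ⟨C, fun n => by
        have := (abs_le.mp (abs_avg_le (T := T) hC0 hC n x)).1; linarith⟩)
    filter_upwards [hev] with n hn
    linarith
  · intro b hb
    exact eventually_lt_of_limsup_lt (lt_of_le_of_lt hx1 hb)
      (isBoundedUnder_of ⟨C, fun n => (abs_le.mp (abs_avg_le (T := T) hC0 hC n x)).2⟩)

/-! ### Approximation helper -/

lemma tendsto_of_approx {u : ℕ → ℝ} {l : ℝ}
    (h : ∀ ε : ℝ, 0 < ε → ∃ (v : ℕ → ℝ) (m : ℝ), Tendsto v atTop (𝓝 m) ∧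
      (∀ n, |u n - v n| ≤ ε) ∧ |l - m| ≤ ε) :
    Tendsto u atTop (𝓝 l) := by
  rw [Metric.tendsto_atTop]
  intro ε hε
  obtain ⟨v, m, hv, huv, hlm⟩ := h (ε/4) (by linarith)
  obtain ⟨N, hN⟩ := Metric.tendsto_atTop.mp hv (ε/4) (by linarith)
  refine ⟨N, fun n hn => ?_⟩
  have h1 := huv n
  have h2 := hN n hn
  rw [Real.dist_eq] at h2 ⊢
  calc |u n - l| ≤ |u n - v n| + |v n - l| := abs_sub_le _ _ _
    _ ≤ |u n - v n| + (|v n - m| + |m - l|) := by linarith [abs_sub_le (v n) m l]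
    _ < ε := by rw [abs_sub_comm m l]; linarith

section Empirical

variable {Y : Type*} [MetricSpace Y] [CompactSpace Y] [MeasurableSpace Y] [BorelSpace Y]

lemma continuousMap_integrable (P : Measure Y) [IsFiniteMeasure P] (g : C(Y, ℝ)) :
    Integrable g P :=
  g.continuous.integrable_of_hasCompactSupport (HasCompactSupport.of_compactSpace _)

lemma abs_integral_sub_le (P : Measure Y) [IsProbabilityMeasure P] (g h : C(Y, ℝ)) :
    |∫ z, g z ∂P - ∫ z, h z ∂P| ≤ dist g h := by
  rw [← integral_sub (continuousMap_integrable P g) (continuousMap_integrable P h)]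
  calc |∫ z, (g z - h z) ∂P| ≤ ∫ z, |g z - h z| ∂P := by
        simpa [Real.norm_eq_abs] using norm_integral_le_integral_norm (fun z => g z - h z) (μ := P)
    _ ≤ ∫ _z, dist g h ∂P := by
        refine integral_mono ((continuousMap_integrable P g).sub
          (continuousMap_integrable P h)).abs (integrable_const _) ?_
        intro z
        simpa [Real.dist_eq] using ContinuousMap.dist_apply_le_dist (f := g) (g := h) z
    _ = dist g h := by simp

end Empirical

section Main

variable {X : Type*} [MetricSpace X] [CompactSpace X] [MeasurableSpace X] [BorelSpace X]
variable {μ : Measure X} {T : X → X}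

/-- The empirical measure with `n+1` points along the orbit of `y`. -/
noncomputable def emp (T : X → X) (y : X) (n : ℕ) : Measure X :=
  (((n : ℝ≥0∞) + 1))⁻¹ • ∑ i ∈ Finset.range (n+1), Measure.dirac (T^[i] y)

instance emp_prob (T : X → X) (y : X) (n : ℕ) : IsProbabilityMeasure (emp T y n) := by
  constructor
  rw [emp, Measure.smul_apply, Measure.coe_finset_sum, smul_eq_mul]
  simp only [Finset.sum_apply, Measure.dirac_apply_of_mem (Set.mem_univ _)]
  rw [Finset.sum_const, Finset.card_range, nsmul_eq_mul, mul_one]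
  rw [show ((n:ℝ≥0∞) + 1) = ((n+1 : ℕ) : ℝ≥0∞) by push_cast; ring]
  rw [ENNReal.inv_mul_cancel (by exact_mod_cast Nat.succ_ne_zero n) (by simp)]

lemma integrable_dirac' {g : X → ℝ} (hg : Measurable g) (a : X) :
    Integrable g (Measure.dirac a) := by
  refine ⟨hg.aestronglyMeasurable, ?_⟩
  rw [HasFiniteIntegral, lintegral_dirac]
  exact ENNReal.coe_lt_top

lemma integral_emp {g : X → ℝ} (hg : Measurable g) (y : X) (n : ℕ) :
    ∫ z, g z ∂(emp T y n) = ((n:ℝ)+1)⁻¹ * ∑ i ∈ Finset.range (n+1), g (T^[i] y) := by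
  rw [emp, integral_smul_measure,
    integral_finset_sum_measure (fun i _ => integrable_dirac' hg _)]
  simp only [integral_dirac]
  rw [smul_eq_mul]
  have h1 : ((n:ℝ≥0∞) + 1).toReal = (n:ℝ) + 1 := by
    rw [ENNReal.toReal_add (by simp) (by simp)]
    simp
  rw [ENNReal.toReal_inv, h1]

lemma integral_emp_avg {g : X → ℝ} (hg : Measurable g) (y : X) (n : ℕ) :
    ∫ z, g z ∂(emp T y n) = birkhoffSum T g (n+1) y / ((n:ℝ)+1) := by
  rw [integral_emp hg, birkhoffSum, div_eq_inv_mul]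

/-- Almost every point is generic: empirical integrals of every continuous function converge. -/
lemma ae_generic [IsProbabilityMeasure μ] (hT : Ergodic T μ) :
    ∀ᵐ y ∂μ, ∀ g : C(X, ℝ),
      Tendsto (fun n => ∫ z, g z ∂(emp T y n)) atTop (𝓝 (∫ z, g z ∂μ)) := by
  obtain ⟨D, hDc, hDd⟩ := TopologicalSpace.exists_countable_dense C(X, ℝ)
  have hae : ∀ᵐ y ∂μ, ∀ g ∈ D,
      Tendsto (fun n => ∫ z, g z ∂(emp T y n)) atTop (𝓝 (∫ z, g z ∂μ)) := by
    rw [ae_ball_iff hDc]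
    intro g _
    have hb := birkhoff hT g.continuous.measurable (norm_nonneg g)
      (fun x => (abs_le.mpr (abs_le.mp (g.norm_coe_le_norm x))))
    filter_upwards [hb] with y hy
    have : Tendsto (fun n => birkhoffSum T (⇑g) (n+1) y / ((n:ℝ)+1)) atTop
        (𝓝 (∫ z, g z ∂μ)) := by
      have h2 := hy.comp (tendsto_add_atTop_nat 1)
      refine h2.congr fun a => ?_
      simp [Function.comp, Nat.cast_add_one]
    refine this.congr fun n => ?_
    rw [integral_emp_avg g.continuous.measurable]
  filter_upwards [hae] with y hy
  intro g
  apply tendsto_of_approx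
  intro ε hε
  obtain ⟨h, hhD, hdist⟩ := hDd.exists_dist_lt g hε
  refine ⟨fun n => ∫ z, h z ∂(emp T y n), ∫ z, h z ∂μ, hy h hhD, ?_, ?_⟩
  · intro n
    exact (abs_integral_sub_le (emp T y n) g h).trans hdist.le
  · exact (abs_integral_sub_le μ g h).trans hdist.le

/-- Pure tensor product of continuous functions. -/
noncomputable def tensor (f h : C(X, ℝ)) : C(X × X, ℝ) :=
  (f.comp ContinuousMap.fst) * (h.comp ContinuousMap.snd)

lemma tensor_coe (f h : C(X, ℝ)) : ⇑(tensor f h) = fun z : X × X => f z.1 * h z.2 := rfl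

/-- From genericity on `X`, weak convergence of products of empirical measures on `X × X`. -/
lemma generic_prod [IsProbabilityMeasure μ] {y : X}
    (hy : ∀ g : C(X, ℝ), Tendsto (fun n => ∫ z, g z ∂(emp T y n)) atTop (𝓝 (∫ z, g z ∂μ))) :
    ∀ g : C(X × X, ℝ), Tendsto (fun n => ∫ z, g z ∂((emp T y n).prod (emp T y n))) atTop
      (𝓝 (∫ z, g z ∂(μ.prod μ))) := by
  set good : Set C(X × X, ℝ) := {g | Tendsto
    (fun n => ∫ z, g z ∂((emp T y n).prod (emp T y n))) atTop
    (𝓝 (∫ z, g z ∂(μ.prod μ)))} with hgood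
  have htensor : ∀ f h : C(X, ℝ), tensor f h ∈ good := by
    intro f h
    simp only [hgood, Set.mem_setOf_eq, tensor_coe]
    have heq : ∀ (P : Measure X), ∀ (_ : IsProbabilityMeasure P),
        ∫ z : X × X, f z.1 * h z.2 ∂(P.prod P) = (∫ z, f z ∂P) * (∫ z, h z ∂P) :=
      fun P _ => integral_prod_mul (f := ⇑f) (g := ⇑h) (μ := P) (ν := P)
    rw [heq μ ‹_›]
    refine Tendsto.congr (fun n => (heq (emp T y n) inferInstance).symm) ?_
    exact (hy f).mul (hy h)
  have hzero : (0 : C(X × X, ℝ)) ∈ good := by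
    simp only [hgood, Set.mem_setOf_eq, ContinuousMap.coe_zero]
    simpa using tendsto_const_nhds
  have hadd : ∀ a b : C(X × X, ℝ), a ∈ good → b ∈ good → a + b ∈ good := by
    intro a b ha hb
    simp only [hgood, Set.mem_setOf_eq, ContinuousMap.coe_add] at *
    have heq : ∀ (P : Measure (X × X)), ∀ (_ : IsProbabilityMeasure P),
        ∫ z, (a z + b z) ∂P = (∫ z, a z ∂P) + ∫ z, b z ∂P :=
      fun P _ => integral_add (continuousMap_integrable P a) (continuousMap_integrable P b)
    rw [show (∫ z, (⇑a + ⇑b) z ∂(μ.prod μ)) = (∫ z, a z ∂(μ.prod μ)) + ∫ z, b z ∂(μ.prod μ) by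
      simpa using heq (μ.prod μ) inferInstance]
    refine Tendsto.congr (fun n => ?_) (ha.add hb)
    simpa using (heq ((emp T y n).prod (emp T y n)) inferInstance).symm
  have hsmul : ∀ (c : ℝ) (a : C(X × X, ℝ)), a ∈ good → c • a ∈ good := by
    intro c a ha
    simp only [hgood, Set.mem_setOf_eq, ContinuousMap.coe_smul] at *
    have heq : ∀ (P : Measure (X × X)),
        ∫ z, (c • ⇑a) z ∂P = c * ∫ z, a z ∂P := by
      intro P
      simp only [Pi.smul_apply, smul_eq_mul]
      exact integral_const_mul c _
    rw [heq (μ.prod μ)]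
    refine Tendsto.congr (fun n => (heq _).symm) ?_
    exact ha.const_mul c
  set S : Set C(X × X, ℝ) := {g | ∃ f h : C(X, ℝ), g = tensor f h} with hS
  have hspan : ∀ g ∈ Submodule.span ℝ S, g ∈ good := by
    intro g hg
    refine Submodule.span_induction ?_ hzero ?_ ?_ hg
    · rintro _ ⟨f, h, rfl⟩
      exact htensor f h
    · intro a b _ _ ha hb
      exact hadd a b ha hb
    · intro c a _ ha
      exact hsmul c a ha
  have hone : (1 : C(X × X, ℝ)) ∈ Submodule.span ℝ S :=
    Submodule.subset_span ⟨1, 1, by ext z; simp [tensor_coe]⟩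
  have hmul : ∀ a b : C(X × X, ℝ), a ∈ Submodule.span ℝ S → b ∈ Submodule.span ℝ S →
      a * b ∈ Submodule.span ℝ S := by
    intro a b ha hb
    induction ha, hb using Submodule.span_induction₂ with
    | mem_mem u v hu hv =>
      obtain ⟨f1, h1, rfl⟩ := hu
      obtain ⟨f2, h2, rfl⟩ := hv
      refine Submodule.subset_span ⟨f1 * f2, h1 * h2, ?_⟩
      ext z
      simp [tensor_coe]
      ring
    | zero_left v hv => simpa using Submodule.zero_mem _
    | zero_right u hu => simpa using Submodule.zero_mem _
    | add_left u v w hu hv hw h1 h2 => simpa [add_mul] using Submodule.add_mem _ h1 h2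
    | add_right u v w hu hv hw h1 h2 => simpa [mul_add] using Submodule.add_mem _ h1 h2
    | smul_left r u v hu hv h1 => simpa [smul_mul_assoc] using Submodule.smul_mem _ r h1
    | smul_right r u v hu hv h1 => simpa [mul_smul_comm] using Submodule.smul_mem _ r h1
  set A : Subalgebra ℝ C(X × X, ℝ) := (Submodule.span ℝ S).toSubalgebra hone hmul with hA
  have hsep : A.SeparatesPoints := by
    rintro ⟨x1, y1⟩ ⟨x2, y2⟩ hne
    by_cases hx : x1 = x2
    · have hy' : y1 ≠ y2 := fun h => hne (by rw [hx, h])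
      refine ⟨_, ⟨tensor 1 ⟨fun z => dist z y1, (continuous_id.dist continuous_const)⟩,
        Submodule.subset_span ⟨_, _, rfl⟩, rfl⟩, ?_⟩
      simp only [tensor_coe, ContinuousMap.one_apply, one_mul, ContinuousMap.coe_mk]
      simp [dist_comm]
      exact fun h => hy' (dist_eq_zero.mp (by simpa [dist_comm] using h)).symm
    · refine ⟨_, ⟨tensor ⟨fun z => dist z x1, (continuous_id.dist continuous_const)⟩ 1,
        Submodule.subset_span ⟨_, _, rfl⟩, rfl⟩, ?_⟩
      simp only [tensor_coe, ContinuousMap.one_apply, mul_one, ContinuousMap.coe_mk]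
      simp
      exact fun h => hx h.symm
  intro g
  apply tendsto_of_approx
  intro ε hε
  obtain ⟨g', hg'⟩ :=
    ContinuousMap.exists_mem_subalgebra_near_continuousMap_of_separatesPoints A hsep g ε hε
  have hg'good : (g' : C(X × X, ℝ)) ∈ good := hspan _ g'.2
  refine ⟨fun n => ∫ z, (g' : C(X × X, ℝ)) z ∂((emp T y n).prod (emp T y n)),
    ∫ z, (g' : C(X × X, ℝ)) z ∂(μ.prod μ), hg'good, ?_, ?_⟩
  · intro n
    refine (abs_integral_sub_le _ g (g' : C(X × X, ℝ))).trans ?_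
    rw [dist_eq_norm]
    calc ‖g - (g' : C(X × X, ℝ))‖ = ‖(g' : C(X × X, ℝ)) - g‖ := norm_sub_rev _ _
      _ ≤ ε := hg'.le
  · refine (abs_integral_sub_le _ g (g' : C(X × X, ℝ))).trans ?_
    rw [dist_eq_norm]
    calc ‖g - (g' : C(X × X, ℝ))‖ = ‖(g' : C(X × X, ℝ)) - g‖ := norm_sub_rev _ _
      _ ≤ ε := hg'.le

lemma emp_prod_U {U : Set (X × X)} (hU : MeasurableSet U) (y : X) (m : ℕ) :
    (((emp T y m).prod (emp T y m)) U).toReal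
      = (((m:ℝ)+1)^2)⁻¹ * ∑ i ∈ Finset.range (m+1), ∑ j ∈ Finset.range (m+1),
          U.indicator (fun _ => (1:ℝ)) (T^[i] y, T^[j] y) := by
  set ind : X × X → ℝ := U.indicator (fun _ => (1:ℝ)) with hind
  have hindm : Measurable ind := measurable_const.indicator hU
  have h0 : ∫ z, ind z ∂((emp T y m).prod (emp T y m))
      = ((((emp T y m).prod (emp T y m))) U).toReal := by
    rw [hind, integral_indicator_const (1:ℝ) hU]
    simp
    rfl
  rw [← h0, integral_prod _ ((integrable_const (1:ℝ)).indicator hU)]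
  have hfun : (fun a : X => ∫ b, ind (a, b) ∂(emp T y m))
      = fun a : X => ((m:ℝ)+1)⁻¹ * ∑ j ∈ Finset.range (m+1), ind (a, T^[j] y) :=
    funext fun a => integral_emp (hindm.comp measurable_prodMk_left) y m
  rw [hfun]
  have hmeas2 : Measurable (fun a : X =>
      ((m:ℝ)+1)⁻¹ * ∑ j ∈ Finset.range (m+1), ind (a, T^[j] y)) := by
    refine Measurable.const_mul ?_ _
    refine Finset.measurable_sum _ fun j _ => ?_
    exact hindm.comp (measurable_id.prodMk measurable_const)
  rw [integral_emp hmeas2 y m]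
  rw [← Finset.mul_sum, ← mul_assoc, sq, mul_inv]

lemma sum_Icc_one (n : ℕ) (F : ℕ → ℝ) :
    ∑ i ∈ Finset.Icc 1 n, F i = ∑ i ∈ Finset.range n, F (i+1) := by
  rw [← Finset.Ico_add_one_right_eq_Icc, Finset.sum_Ico_eq_sum_range]
  simp [add_comm]

end Main

end Stmt4

theorem stmt_4 {X : Type*} [MetricSpace X] [CompactSpace X] [MeasurableSpace X] [BorelSpace X]
    (μ : Measure X) [IsProbabilityMeasure μ] (T : X → X) (hT : Ergodic T μ)
    (U : Set (X × X)) (hU : MeasurableSet U)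
    (hbd : (μ.prod μ) (frontier U) = 0) :
    ∀ᵐ x ∂μ, Tendsto (fun n : ℕ => ((n : ℝ) ^ 2)⁻¹ *
        ∑ i ∈ Finset.Icc 1 n, ∑ j ∈ Finset.Icc 1 n,
          Set.indicator U (fun _ => (1 : ℝ)) (T^[i] x, T^[j] x))
      atTop (𝓝 ((μ.prod μ) U).toReal) := by
  classical
  have hae := Stmt4.ae_generic hT
  have hae' := hT.toMeasurePreserving.quasiMeasurePreserving.ae hae
  filter_upwards [hae'] with x hx
  set y := T x with hy
  let Qm : ℕ → ProbabilityMeasure (X × X) := fun m =>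
    ⟨(Stmt4.emp T y m).prod (Stmt4.emp T y m), inferInstance⟩
  let P2 : ProbabilityMeasure (X × X) := ⟨μ.prod μ, inferInstance⟩
  have htend : Tendsto Qm atTop (𝓝 P2) := by
    rw [ProbabilityMeasure.tendsto_iff_forall_integral_tendsto]
    intro fb
    exact Stmt4.generic_prod hx ⟨fb, fb.continuous⟩
  have hfront : P2 (frontier U) = 0 := by
    have h2 : (P2 (frontier U) : ℝ≥0∞) = 0 := by
      rw [ProbabilityMeasure.ennreal_coeFn_eq_coeFn_toMeasure]
      exact hbd
    exact_mod_cast h2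
  have hmeasconv := ProbabilityMeasure.tendsto_measure_of_null_frontier_of_tendsto htend hfront
  have hcoe : ∀ (ν : ProbabilityMeasure (X × X)) (s : Set (X × X)),
      ((ν : Measure (X × X)) s).toReal = ((ν s : ℝ≥0) : ℝ) := by
    intro ν s
    rw [← ProbabilityMeasure.ennreal_coeFn_eq_coeFn_toMeasure, ENNReal.coe_toReal]
  have hreal : Tendsto (fun m => (((Stmt4.emp T y m).prod (Stmt4.emp T y m)) U).toReal) atTop
      (𝓝 (((μ.prod μ)) U).toReal) := by
    have h1 := NNReal.tendsto_coe.mpr hmeasconv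
    have h2 : (fun m => ((Qm m U : ℝ≥0) : ℝ))
        = fun m => (((Stmt4.emp T y m).prod (Stmt4.emp T y m)) U).toReal := by
      funext m
      exact (hcoe (Qm m) U).symm
    rw [h2] at h1
    have h3 : ((P2 U : ℝ≥0) : ℝ) = ((μ.prod μ) U).toReal := (hcoe P2 U).symm
    rwa [h3] at h1
  have hcomp := hreal.comp (tendsto_sub_atTop_nat 1)
  refine hcomp.congr' ?_
  filter_upwards [eventually_ge_atTop 1] with n hn
  obtain ⟨k, rfl⟩ : ∃ k, n = k + 1 := ⟨n - 1, (Nat.succ_pred_eq_of_pos hn).symm⟩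
  simp only [Function.comp_apply, Nat.add_sub_cancel]
  rw [Stmt4.emp_prod_U hU]
  rw [Stmt4.sum_Icc_one (k+1) _]
  have hsummand : ∀ i : ℕ, (∑ j ∈ Finset.Icc 1 (k+1),
      Set.indicator U (fun _ => (1:ℝ)) (T^[i+1] x, T^[j] x))
      = ∑ j ∈ Finset.range (k+1), Set.indicator U (fun _ => (1:ℝ)) (T^[i] y, T^[j] y) := by
    intro i
    rw [Stmt4.sum_Icc_one (k+1) _]
    refine Finset.sum_congr rfl fun j _ => ?_
    rw [hy, ← Function.iterate_succ_apply, ← Function.iterate_succ_apply]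
  rw [Finset.sum_congr rfl fun i _ => hsummand i]
  congr 1
  push_cast
  ring
end

section
/- There exist a compact metric space X, a Borel probability measure μ, a mixing measure-preserving transformation T : X → X, and a bounded Borel-measurable symmetric function K : X × X → ℝ with K = 0 (μ × μ)-almost everywhere, such that K(T^i x, T^j x) = 1 for all x ∈ X and all i, j ≥ 1; in particular the double ergodic averages (1/n²) ∑_{i,j ≤ n} K(T^i x, T^j x) do not converge to ∬ K d(μ × μ) = 0 for any x. -/
open MeasureTheory Filter Topology
open scoped ENNReal ComplexConjugate

noncomputable section Stmt5Aux

namespace Stmt5Aux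

open AddCircle Function

local notation "𝕋" => UnitAddCircle

abbrev μ0 : Measure 𝕋 := haarAddCircle

def Td : 𝕋 → 𝕋 := fun x => (2 : ℤ) • x

lemma Td_mp : MeasurePreserving Td μ0 μ0 :=
  Measure.measurePreserving_zsmul μ0 (by norm_num : (2:ℤ) ≠ 0)

lemma Td_iter (n : ℕ) (x : 𝕋) : Td^[n] x = ((2:ℤ)^n) • x := by
  induction n generalizing x with
  | zero => simp
  | succ n ih =>
      rw [Function.iterate_succ_apply, ih, Td, smul_smul, ← pow_succ]

local notation "H" => Lp ℂ 2 (μ0)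

local notation "⟪" x ", " y "⟫" => @inner ℂ _ _ x y

def U (n : ℕ) : H →ₗᵢ[ℂ] H :=
  Lp.compMeasurePreservingₗᵢ ℂ (Td^[n]) (Td_mp.iterate n)

lemma U_fourier (n : ℕ) (m : ℤ) :
    U n (fourierLp 2 m) = fourierLp 2 ((2:ℤ)^n * m) := by
  apply Lp.ext
  have h1 : (U n (fourierLp 2 m) : 𝕋 → ℂ) =ᵐ[μ0] (fourierLp 2 m : 𝕋 → ℂ) ∘ (Td^[n]) :=
    Lp.coeFn_compMeasurePreserving _ _
  have h2 : ((fourierLp 2 m : 𝕋 → ℂ) ∘ (Td^[n])) =ᵐ[μ0] (⇑(fourier m) ∘ (Td^[n])) :=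
    (Td_mp.iterate n).quasiMeasurePreserving.ae_eq_comp (coeFn_fourierLp 2 m)
  have h3 : (⇑(fourier m) ∘ (Td^[n])) = ⇑(fourier ((2:ℤ)^n * m)) := by
    funext x
    simp only [Function.comp_apply, Td_iter, fourier_apply, smul_smul]
    rw [mul_comm]
  refine (h1.trans (h2.trans ?_)).trans (coeFn_fourierLp 2 ((2:ℤ)^n * m)).symm
  rw [h3]

lemma hbE (i : ℤ) : (@fourierBasis 1 _) i = fourierLp 2 i := by
  rw [← coe_fourierBasis]

lemma coeff_decay (f : H) {k : ℕ → ℤ} (hk : Function.Injective k) :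
    Tendsto (fun n => ⟪(@fourierBasis 1 _) (k n), f⟫) atTop (𝓝 0) := by
  have hm : Memℓp (fun i => fourierBasis.repr f i) 2 := lp.memℓp (fourierBasis.repr f)
  have hsum : Summable fun i : ℤ => ‖fourierBasis.repr f i‖ ^ ((2:ℝ≥0∞).toReal) :=
    hm.summable (by norm_num)
  have h1 : Tendsto (fun i : ℤ => ‖fourierBasis.repr f i‖ ^ ((2:ℝ≥0∞).toReal)) cofinite (𝓝 0) :=
    hsum.tendsto_cofinite_zero
  have h2 : Tendsto (fun n : ℕ => ‖fourierBasis.repr f (k n)‖ ^ ((2:ℝ≥0∞).toReal)) atTop (𝓝 0) :=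
    h1.comp (Nat.cofinite_eq_atTop ▸ hk.tendsto_cofinite)
  have h3 : Tendsto (fun n : ℕ => ‖fourierBasis.repr f (k n)‖) atTop (𝓝 0) := by
    have := h2.sqrt
    rw [Real.sqrt_zero] at this
    refine this.congr fun n => ?_
    rw [show ((2:ℝ≥0∞).toReal) = ((2:ℕ):ℝ) by norm_num, Real.rpow_natCast,
      Real.sqrt_sq (norm_nonneg _)]
  have h4 : Tendsto (fun n : ℕ => fourierBasis.repr f (k n)) atTop (𝓝 0) :=
    tendsto_zero_iff_norm_tendsto_zero.mpr h3
  refine h4.congr fun n => ?_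
  rw [fourierBasis.repr_apply_apply]

lemma mixing_L2 (f g : H) :
    Tendsto (fun n => ⟪f, U n g⟫) atTop
      (𝓝 (⟪f, (@fourierBasis 1 _) 0⟫ * ⟪(@fourierBasis 1 _) 0, g⟫)) := by
  -- basis case
  have hbase : ∀ (m : ℤ) (f : H),
      Tendsto (fun n => ⟪f, U n ((@fourierBasis 1 _) m)⟫) atTop
        (𝓝 (⟪f, (@fourierBasis 1 _) 0⟫ * ⟪(@fourierBasis 1 _) 0, (@fourierBasis 1 _) m⟫)) := by
    intro m f
    rcases eq_or_ne m 0 with rfl | hm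
    · have hU0 : ∀ n, U n ((@fourierBasis 1 _) 0) = (@fourierBasis 1 _) 0 := fun n => by
        rw [hbE, U_fourier, mul_zero, ← hbE]
      have h00 : ⟪(@fourierBasis 1 _) 0, (@fourierBasis 1 _) 0⟫ = 1 := by
        simpa using orthonormal_iff_ite.mp (@fourierBasis 1 _).orthonormal 0 0
      simp only [hU0, h00, mul_one]
      exact tendsto_const_nhds
    · have h0m : ⟪(@fourierBasis 1 _) 0, (@fourierBasis 1 _) m⟫ = 0 := by
        simpa [Ne.symm hm] using orthonormal_iff_ite.mp (@fourierBasis 1 _).orthonormal 0 m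
      rw [h0m, mul_zero]
      have hinj : Function.Injective (fun n : ℕ => (2:ℤ)^n * m) := by
        intro a c h
        simp only at h
        have h2 : (2:ℤ)^a = 2^c := mul_right_cancel₀ hm h
        have h3 : (2:ℕ)^a = (2:ℕ)^c := by exact_mod_cast h2
        exact Nat.pow_right_injective (le_refl 2) h3
      have hdec := coeff_decay f hinj
      have heq : ∀ n : ℕ, ⟪f, U n ((@fourierBasis 1 _) m)⟫
          = (starRingEnd ℂ) ⟪(@fourierBasis 1 _) ((2:ℤ)^n * m), f⟫ := by
        intro n
        rw [hbE, U_fourier, ← hbE]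
        exact (inner_conj_symm f _).symm
      have h5 : Tendsto (fun n : ℕ => (starRingEnd ℂ) ⟪(@fourierBasis 1 _) ((2:ℤ)^n * m), f⟫)
          atTop (𝓝 0) := by
        have := (Complex.continuous_conj.tendsto 0).comp hdec
        simpa [Function.comp_def] using this
      exact h5.congr fun n => (heq n).symm
  -- span case
  have hspan : ∀ g' ∈ Submodule.span ℂ (Set.range ⇑(@fourierBasis 1 _)), ∀ f : H,
      Tendsto (fun n => ⟪f, U n g'⟫) atTop
        (𝓝 (⟪f, (@fourierBasis 1 _) 0⟫ * ⟪(@fourierBasis 1 _) 0, g'⟫)) := by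
    intro g' hg'
    induction hg' using Submodule.span_induction with
    | mem x hx =>
        obtain ⟨m, rfl⟩ := hx
        exact hbase m
    | zero =>
        intro f
        simp only [map_zero, inner_zero_right, mul_zero]
        exact tendsto_const_nhds
    | add x y hx hy ihx ihy =>
        intro f
        have h := (ihx f).add (ihy f)
        have e1 : ∀ n, ⟪f, U n (x + y)⟫ = ⟪f, U n x⟫ + ⟪f, U n y⟫ := fun n => by
          rw [(U n).map_add, inner_add_right]
        have e2 : ⟪f, (@fourierBasis 1 _) 0⟫ * ⟪(@fourierBasis 1 _) 0, x + y⟫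
            = ⟪f, (@fourierBasis 1 _) 0⟫ * ⟪(@fourierBasis 1 _) 0, x⟫
              + ⟪f, (@fourierBasis 1 _) 0⟫ * ⟪(@fourierBasis 1 _) 0, y⟫ := by
          rw [inner_add_right]; ring
        rw [e2]
        exact h.congr fun n => (e1 n).symm
    | smul a x hx ihx =>
        intro f
        have h := (ihx f).const_mul a
        have e1 : ∀ n, ⟪f, U n (a • x)⟫ = a * ⟪f, U n x⟫ := fun n => by
          rw [(U n).map_smul, inner_smul_right]
        have e2 : ⟪f, (@fourierBasis 1 _) 0⟫ * ⟪(@fourierBasis 1 _) 0, a • x⟫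
            = a * (⟪f, (@fourierBasis 1 _) 0⟫ * ⟪(@fourierBasis 1 _) 0, x⟫) := by
          rw [inner_smul_right]; ring
        rw [e2]
        exact h.congr fun n => (e1 n).symm
  -- general case
  rw [Metric.tendsto_atTop]
  intro ε hε
  have hfpos : (0:ℝ) < ‖f‖ + 1 := by positivity
  set δ : ℝ := ε / (4 * (‖f‖ + 1)) with hδdef
  have hδpos : 0 < δ := by positivity
  have hdense : g ∈ closure ((Submodule.span ℂ (Set.range ⇑(@fourierBasis 1 _))
      : Submodule ℂ H) : Set H) := by
    have htop : (Submodule.span ℂ (Set.range ⇑(@fourierBasis 1 _))).topologicalClosure = ⊤ :=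
      (@fourierBasis 1 _).dense_span
    have hg : g ∈ ((Submodule.span ℂ
        (Set.range ⇑(@fourierBasis 1 _))).topologicalClosure : Set H) := by
      rw [htop]; trivial
    simpa [Submodule.topologicalClosure_coe] using hg
  obtain ⟨g', hg'mem, hg'close⟩ := Metric.mem_closure_iff.mp hdense δ hδpos
  obtain ⟨N, hN⟩ := Metric.tendsto_atTop.mp (hspan g' hg'mem f) (ε/2) (by positivity)
  refine ⟨N, fun n hn => ?_⟩
  have hgg' : ‖g - g'‖ ≤ δ := by
    rw [← dist_eq_norm]; exact hg'close.le
  have he0 : ‖(@fourierBasis 1 _) 0‖ = 1 := (@fourierBasis 1 _).orthonormal.1 0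
  have hUb : ‖⟪f, U n g⟫ - ⟪f, U n g'⟫‖ ≤ ‖f‖ * δ := by
    rw [← inner_sub_right, ← map_sub]
    calc ‖⟪f, U n (g - g')⟫‖ ≤ ‖f‖ * ‖U n (g - g')‖ := norm_inner_le_norm _ _
      _ = ‖f‖ * ‖g - g'‖ := by rw [(U n).norm_map]
      _ ≤ ‖f‖ * δ := by gcongr
  have hTb : ‖⟪f, (@fourierBasis 1 _) 0⟫ * ⟪(@fourierBasis 1 _) 0, g'⟫
      - ⟪f, (@fourierBasis 1 _) 0⟫ * ⟪(@fourierBasis 1 _) 0, g⟫‖ ≤ ‖f‖ * δ := by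
    rw [← mul_sub, ← inner_sub_right, norm_mul]
    have hg'g : ‖g' - g‖ ≤ δ := by
      rw [← dist_eq_norm, dist_comm]; exact hg'close.le
    calc ‖⟪f, (@fourierBasis 1 _) 0⟫‖ * ‖⟪(@fourierBasis 1 _) 0, g' - g⟫‖
        ≤ (‖f‖ * ‖(@fourierBasis 1 _) 0‖) * (‖(@fourierBasis 1 _) 0‖ * ‖g' - g‖) := by
          gcongr <;> [exact norm_inner_le_norm _ _; exact norm_inner_le_norm _ _]
      _ = ‖f‖ * ‖g' - g‖ := by rw [he0]; ring
      _ ≤ ‖f‖ * δ := by gcongr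
  have hfδ : ‖f‖ * δ ≤ ε/4 := by
    have h1 : ‖f‖ * δ ≤ (‖f‖ + 1) * δ := by
      have := hδpos.le
      nlinarith [norm_nonneg f]
    have h2 : (‖f‖ + 1) * δ = ε / 4 := by
      rw [hδdef]
      field_simp
    linarith
  have h1 := hN n hn
  have d1 : dist ⟪f, U n g⟫ ⟪f, U n g'⟫ ≤ ‖f‖ * δ := by
    rw [dist_eq_norm]; exact hUb
  have d3 : dist (⟪f, (@fourierBasis 1 _) 0⟫ * ⟪(@fourierBasis 1 _) 0, g'⟫)
      (⟪f, (@fourierBasis 1 _) 0⟫ * ⟪(@fourierBasis 1 _) 0, g⟫) ≤ ‖f‖ * δ := by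
    rw [dist_eq_norm]; exact hTb
  calc dist ⟪f, U n g⟫ (⟪f, (@fourierBasis 1 _) 0⟫ * ⟪(@fourierBasis 1 _) 0, g⟫)
      ≤ dist ⟪f, U n g⟫ ⟪f, U n g'⟫
        + dist ⟪f, U n g'⟫ (⟪f, (@fourierBasis 1 _) 0⟫ * ⟪(@fourierBasis 1 _) 0, g'⟫)
        + dist (⟪f, (@fourierBasis 1 _) 0⟫ * ⟪(@fourierBasis 1 _) 0, g'⟫)
            (⟪f, (@fourierBasis 1 _) 0⟫ * ⟪(@fourierBasis 1 _) 0, g⟫) := dist_triangle4 _ _ _ _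
    _ < ε := by linarith


instance unitAddCircle_nhdsNE : NeBot (𝓝[≠] ((0:UnitAddCircle))) := by
  rw [← mem_closure_iff_nhdsWithin_neBot]
  have hu : Tendsto (fun n : ℕ => (((n+2:ℝ))⁻¹ : ℝ)) atTop (𝓝 0) := by
    apply tendsto_inv_atTop_zero.comp
    exact tendsto_atTop_add_const_right atTop 2 tendsto_natCast_atTop_atTop
  have hcont : Continuous ((↑) : ℝ → UnitAddCircle) := AddCircle.continuous_mk' 1
  have h2 : Tendsto (fun n : ℕ => ((((n+2:ℝ))⁻¹ : ℝ) : UnitAddCircle)) atTop (𝓝 0) := by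
    have := (hcont.tendsto 0).comp hu
    simpa [Function.comp_def] using this
  refine mem_closure_of_tendsto h2 (Eventually.of_forall fun n => ?_)
  simp only [Set.mem_compl_iff, Set.mem_singleton_iff]
  rw [AddCircle.coe_eq_zero_iff]
  rintro ⟨k, hk⟩
  have hpos : (0:ℝ) < ((n:ℝ)+2)⁻¹ := by positivity
  have hlt : ((n:ℝ)+2)⁻¹ < 1 := by
    rw [inv_lt_one_iff₀]
    right
    have : (0:ℝ) ≤ (n:ℝ) := Nat.cast_nonneg n
    linarith
  have hkr : (k : ℝ) = ((n:ℝ)+2)⁻¹ := by simpa using hk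
  rcases lt_trichotomy k 0 with h | h | h
  · have : (k:ℝ) ≤ -1 := by exact_mod_cast Int.le_sub_one_of_lt h
    linarith
  · subst h; simp at hkr; linarith
  · have : (1:ℝ) ≤ (k:ℝ) := by exact_mod_cast h
    linarith

lemma mixing_sets {A B : Set 𝕋} (hA : MeasurableSet A) (hB : MeasurableSet B) :
    Tendsto (fun n : ℕ => μ0 (A ∩ Td^[n] ⁻¹' B)) atTop (𝓝 (μ0 A * μ0 B)) := by
  set f : H := indicatorConstLp 2 hA (measure_ne_top μ0 A) (1:ℂ) with hfdef
  set g : H := indicatorConstLp 2 hB (measure_ne_top μ0 B) (1:ℂ) with hgdef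
  have hinner : ∀ (C : Set 𝕋) (hC : MeasurableSet C) (hC' : μ0 C ≠ ∞) (D : Set 𝕋)
      (hD : MeasurableSet D) (hD' : μ0 D ≠ ∞),
      ⟪(indicatorConstLp 2 hC hC' (1:ℂ) : H), (indicatorConstLp 2 hD hD' (1:ℂ) : H)⟫
        = ((μ0 (C ∩ D)).toReal : ℂ) := by
    intro C hC hC' D hD hD'
    rw [L2.inner_indicatorConstLp_one hC hC']
    have hae : ∀ᵐ x ∂μ0, x ∈ C →
        (indicatorConstLp 2 hD hD' (1:ℂ) : 𝕋 → ℂ) x = D.indicator (fun _ => (1:ℂ)) x := by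
      filter_upwards [indicatorConstLp_coeFn (p := 2) (μ := μ0) (c := (1:ℂ))] with x hx _
      exact hx
    rw [setIntegral_congr_ae hC hae, setIntegral_indicator hD, setIntegral_const]
    simp
    rfl
  have he0 : ∀ᵐ x ∂μ0, ((@fourierBasis 1 _) 0 : 𝕋 → ℂ) x = (1:ℂ) := by
    have h2 : ((@fourierBasis 1 _) 0 : 𝕋 → ℂ) =ᵐ[μ0] ⇑(fourier 0) := by
      rw [hbE]; exact coeFn_fourierLp 2 0
    filter_upwards [h2] with x hx
    rw [hx, fourier_zero]
  have hind0 : ∀ (C : Set 𝕋) (hC : MeasurableSet C) (hC' : μ0 C ≠ ∞),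
      ⟪(indicatorConstLp 2 hC hC' (1:ℂ) : H), (@fourierBasis 1 _) 0⟫
        = ((μ0 C).toReal : ℂ) := by
    intro C hC hC'
    rw [L2.inner_indicatorConstLp_one hC hC']
    have hae : ∀ᵐ x ∂μ0, x ∈ C → ((@fourierBasis 1 _) 0 : 𝕋 → ℂ) x = (1:ℂ) := by
      filter_upwards [he0] with x hx _; exact hx
    rw [setIntegral_congr_ae hC hae, setIntegral_const]
    simp
    rfl
  have hf0 : ⟪f, (@fourierBasis 1 _) 0⟫ = ((μ0 A).toReal : ℂ) := hind0 A hA _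
  have h0g : ⟪(@fourierBasis 1 _) 0, g⟫ = ((μ0 B).toReal : ℂ) := by
    rw [← inner_conj_symm, hind0 B hB _]
    simp
  have hterm : ∀ n : ℕ, ⟪f, U n g⟫ = ((μ0 (A ∩ Td^[n] ⁻¹' B)).toReal : ℂ) := by
    intro n
    have hpre : μ0 (Td^[n] ⁻¹' B) ≠ ∞ := by
      rw [(Td_mp.iterate n).measure_preimage hB.nullMeasurableSet]
      exact measure_ne_top _ _
    have hU : U n g = indicatorConstLp 2 (hB.preimage (Td_mp.iterate n).measurable) hpre (1:ℂ) :=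
      Lp.indicatorConstLp_compMeasurePreserving hB (measure_ne_top μ0 B) (1:ℂ) (Td_mp.iterate n)
    rw [hU, hinner]
  have hmain := mixing_L2 f g
  rw [hf0, h0g] at hmain
  have hmain2 : Tendsto (fun n : ℕ => ((μ0 (A ∩ Td^[n] ⁻¹' B)).toReal : ℂ)) atTop
      (𝓝 (((μ0 A).toReal : ℂ) * ((μ0 B).toReal : ℂ))) := hmain.congr hterm
  have hre : Tendsto (fun n : ℕ => (μ0 (A ∩ Td^[n] ⁻¹' B)).toReal) atTop
      (𝓝 ((μ0 A).toReal * (μ0 B).toReal)) := by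
    have := (Complex.continuous_re.tendsto _).comp hmain2
    simpa [Function.comp_def] using this
  have hof := (ENNReal.continuous_ofReal.tendsto _).comp hre
  simp only [Function.comp_def] at hof
  have h1 : (fun n : ℕ => ENNReal.ofReal ((μ0 (A ∩ Td^[n] ⁻¹' B)).toReal))
      = fun n : ℕ => μ0 (A ∩ Td^[n] ⁻¹' B) :=
    funext fun n => ENNReal.ofReal_toReal (measure_ne_top _ _)
  have h2 : ENNReal.ofReal ((μ0 A).toReal * (μ0 B).toReal) = μ0 A * μ0 B := by
    rw [ENNReal.ofReal_mul ENNReal.toReal_nonneg, ENNReal.ofReal_toReal (measure_ne_top _ _),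
      ENNReal.ofReal_toReal (measure_ne_top _ _)]
  rw [h1, h2] at hof
  exact hof

def S : Set (𝕋 × 𝕋) :=
  ⋃ (m : ℕ) (n : ℕ), {p : 𝕋 × 𝕋 | (2:ℤ)^(m+1) • p.1 = (2:ℤ)^(n+1) • p.2}

lemma S_meas : MeasurableSet S := by
  refine MeasurableSet.iUnion fun m => MeasurableSet.iUnion fun n => ?_
  exact (isClosed_eq ((continuous_zsmul _).comp continuous_fst)
    ((continuous_zsmul _).comp continuous_snd)).measurableSet

lemma S_mem_iff {p : 𝕋 × 𝕋} :
    p ∈ S ↔ ∃ m n : ℕ, (2:ℤ)^(m+1) • p.1 = (2:ℤ)^(n+1) • p.2 := by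
  simp [S, Set.mem_iUnion]

lemma S_symm {u v : 𝕋} (h : (u, v) ∈ S) : (v, u) ∈ S := by
  rw [S_mem_iff] at h ⊢
  obtain ⟨m, n, hmn⟩ := h
  exact ⟨n, m, hmn.symm⟩

lemma S_null : (μ0.prod μ0) S = 0 := by
  refine measure_iUnion_null fun m => measure_iUnion_null fun n => ?_
  have hC : MeasurableSet {p : 𝕋 × 𝕋 | (2:ℤ)^(m+1) • p.1 = (2:ℤ)^(n+1) • p.2} :=
    (isClosed_eq ((continuous_zsmul _).comp continuous_fst)
      ((continuous_zsmul _).comp continuous_snd)).measurableSet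
  rw [Measure.measure_prod_null hC]
  refine Filter.Eventually.of_forall fun x => ?_
  have hfiber : Prod.mk x ⁻¹' {p : 𝕋 × 𝕋 | (2:ℤ)^(m+1) • p.1 = (2:ℤ)^(n+1) • p.2}
      = (fun v : 𝕋 => (2:ℤ)^(n+1) • v) ⁻¹' {(2:ℤ)^(m+1) • x} := by
    ext v
    simp [eq_comm]
  show μ0 (Prod.mk x ⁻¹' _) = 0
  rw [hfiber,
    (Measure.measurePreserving_zsmul μ0 (pow_ne_zero _ (by norm_num : (2:ℤ) ≠ 0))).measure_preimage
      (measurableSet_singleton _).nullMeasurableSet]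
  exact measure_singleton _


noncomputable def K0 : 𝕋 × 𝕋 → ℝ := S.indicator (fun _ => (1:ℝ))

lemma K0_one {x : 𝕋} {i j : ℕ} (hi : 1 ≤ i) (hj : 1 ≤ j) :
    K0 (Td^[i] x, Td^[j] x) = 1 := by
  obtain ⟨i', rfl⟩ : ∃ i', i = i' + 1 := ⟨i - 1, (Nat.succ_pred_eq_of_pos hi).symm⟩
  obtain ⟨j', rfl⟩ : ∃ j', j = j' + 1 := ⟨j - 1, (Nat.succ_pred_eq_of_pos hj).symm⟩
  have hmem : (Td^[i'+1] x, Td^[j'+1] x) ∈ S := by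
    rw [S_mem_iff]
    refine ⟨j', i', ?_⟩
    simp only [Td_iter, smul_smul]
    rw [mul_comm]
  rw [K0, Set.indicator_of_mem hmem]

lemma K0_ae_zero : K0 =ᵐ[μ0.prod μ0] 0 := by
  have h : ∀ᵐ p ∂(μ0.prod μ0), p ∉ S := by
    rw [← measure_eq_zero_iff_ae_notMem]
    exact S_null
  filter_upwards [h] with p hp
  rw [K0, Set.indicator_of_notMem hp]
  rfl


end Stmt5Aux

end Stmt5Aux

open Stmt5Aux in
theorem stmt_5 :
    ∃ (X : Type) (_ : MetricSpace X) (_ : CompactSpace X) (_ : MeasurableSpace X)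
      (_ : BorelSpace X) (μ : Measure X) (_ : IsProbabilityMeasure μ)
      (T : X → X) (K : X × X → ℝ),
      MeasurePreserving T μ μ ∧
      -- T is (strongly) mixing
      (∀ A B : Set X, MeasurableSet A → MeasurableSet B →
        Tendsto (fun n : ℕ => μ (A ∩ T^[n] ⁻¹' B)) atTop (𝓝 (μ A * μ B))) ∧
      Measurable K ∧ (∀ p : X × X, |K p| ≤ 1) ∧
      (∀ u v : X, K (u, v) = K (v, u)) ∧
      K =ᵐ[μ.prod μ] 0 ∧
      (∀ (x : X) (i j : ℕ), 1 ≤ i → 1 ≤ j → K (T^[i] x, T^[j] x) = 1) ∧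
      (∀ x : X, ¬ Tendsto (fun n : ℕ => ((n : ℝ) ^ 2)⁻¹ *
          ∑ i ∈ Finset.Icc 1 n, ∑ j ∈ Finset.Icc 1 n, K (T^[i] x, T^[j] x))
        atTop (𝓝 (∫ p, K p ∂(μ.prod μ)))) ∧
      (∫ p, K p ∂(μ.prod μ)) = 0 := by
  have hint : (∫ p, K0 p ∂(μ0.prod μ0)) = 0 := integral_eq_zero_of_ae K0_ae_zero
  refine ⟨UnitAddCircle, inferInstance, inferInstance, inferInstance, inferInstance, μ0, inferInstance,
    Td, K0, Td_mp, fun A B hA hB => mixing_sets hA hB,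
    (measurable_const.indicator S_meas : Measurable K0), ?_, ?_, K0_ae_zero,
    fun x i j hi hj => K0_one hi hj, ?_, hint⟩
  · intro p
    by_cases h : p ∈ S
    · rw [K0, Set.indicator_of_mem h]; norm_num
    · rw [K0, Set.indicator_of_notMem h]; norm_num
  · intro u v
    by_cases h : (u, v) ∈ S
    · rw [K0, Set.indicator_of_mem h, Set.indicator_of_mem (S_symm h)]
    · rw [K0, Set.indicator_of_notMem h,
        Set.indicator_of_notMem (fun h' => h (S_symm h'))]
  · intro x hx
    rw [hint] at hx
    have hone : Tendsto (fun n : ℕ => ((n : ℝ) ^ 2)⁻¹ *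
        ∑ i ∈ Finset.Icc 1 n, ∑ j ∈ Finset.Icc 1 n, K0 (Td^[i] x, Td^[j] x))
        atTop (𝓝 1) := by
      refine Tendsto.congr' ?_ (tendsto_const_nhds (x := (1:ℝ)))
      filter_upwards [eventually_ge_atTop 1] with n hn
      have hsum : ∑ i ∈ Finset.Icc 1 n, ∑ j ∈ Finset.Icc 1 n, K0 (Td^[i] x, Td^[j] x)
          = (n:ℝ) * (n:ℝ) := by
        have hrow : ∀ i ∈ Finset.Icc 1 n,
            ∑ j ∈ Finset.Icc 1 n, K0 (Td^[i] x, Td^[j] x) = (n:ℝ) := by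
          intro i hi
          have hi1 : 1 ≤ i := (Finset.mem_Icc.mp hi).1
          rw [Finset.sum_congr rfl (fun j hj => K0_one hi1 (Finset.mem_Icc.mp hj).1)]
          rw [Finset.sum_const, Nat.card_Icc]
          simp
        rw [Finset.sum_congr rfl hrow, Finset.sum_const, Nat.card_Icc]
        simp [mul_comm]
      rw [hsum]
      have hn0 : (n:ℝ) ≠ 0 := by
        exact_mod_cast Nat.one_le_iff_ne_zero.mp hn
      rw [sq]
      field_simp
    exact absurd (tendsto_nhds_unique hx hone) (by norm_num)
end

section
/- Let P be a Markov kernel on a probability space (X, μ) satisfying the Doeblin condition: there exist n ≥ 1 and ε > 0 such that the n-step kernel satisfies P^n(x,y) ≥ ε for all x,y (with respect to μ). Suppose also that P defines a compact self-adjoint operator on L²(μ) with stationary measure μ. Then the eigenvalue 1 of P is simple (its eigenspace consists of the constant functions), and every other eigenvalue λ of P satisfies |λ| < 1. -/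
open MeasureTheory Filter Topology

private lemma lint_of_integral_one {X : Type*} [MeasurableSpace X] {μ : Measure X}
    {g : X → ℝ} (hg : 0 ≤ g) (hgm : AEStronglyMeasurable g μ)
    (h1 : ∫ y, g y ∂μ = 1) : ∫⁻ y, ENNReal.ofReal (g y) ∂μ = 1 := by
  have h := integral_eq_lintegral_of_nonneg_ae (Eventually.of_forall hg) hgm
  rw [h1] at h
  have hne : ∫⁻ y, ENNReal.ofReal (g y) ∂μ ≠ ⊤ := by
    intro htop; rw [htop] at h; simp at h
  exact ((ENNReal.toReal_eq_one_iff _).mp h.symm)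

private lemma kernel_pkg {X : Type*} [MeasurableSpace X] (μ : Measure X) [IsProbabilityMeasure μ]
    (P : X × X → ℝ) (hPmeas : Measurable P) (hPpos : ∀ p, 0 ≤ P p)
    (hMarkov : ∀ x, ∫ y, P (x, y) ∂μ = 1)
    (hsymm : ∀ x y, P (x, y) = P (y, x))
    (Pn : ℕ → X × X → ℝ)
    (hP1 : ∀ x y, Pn 1 (x, y) = P (x, y))
    (hPrec : ∀ (k : ℕ) (x y : X), Pn (k + 1) (x, y) = ∫ z, P (x, z) * Pn k (z, y) ∂μ) :
    ∀ k, 1 ≤ k → Measurable (Pn k) ∧ (∀ p, 0 ≤ Pn k p) ∧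
      (∀ x, ∫⁻ y, ENNReal.ofReal (Pn k (x, y)) ∂μ = 1) ∧
      (∀ y, ∫⁻ x, ENNReal.ofReal (Pn k (x, y)) ∂μ = 1) := by
  have hProw : ∀ x, ∫⁻ y, ENNReal.ofReal (P (x, y)) ∂μ = 1 := fun x =>
    lint_of_integral_one (fun y => hPpos _) ((hPmeas.comp (measurable_prodMk_left)).aestronglyMeasurable) (hMarkov x)
  have hPcol : ∀ y, ∫⁻ x, ENNReal.ofReal (P (x, y)) ∂μ = 1 := by
    intro y
    have : ∀ x, P (x, y) = P (y, x) := fun x => hsymm x y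
    simp_rw [this]; exact hProw y
  intro k hk
  induction k with
  | zero => omega
  | succ k ih =>
    rcases Nat.eq_or_lt_of_le hk with hk1 | hk2
    · -- k + 1 = 1, i.e. k = 0
      have hk0 : k = 0 := by omega
      subst hk0
      refine ⟨?_, ?_, ?_, ?_⟩
      · have : Pn 1 = P := by funext p; rw [← hP1 p.1 p.2]
        rw [this]; exact hPmeas
      · intro p; rw [show p = (p.1, p.2) by rfl, hP1]; exact hPpos _
      · intro x; simp_rw [hP1]; exact hProw x
      · intro y; simp_rw [hP1]; exact hPcol y
    · have hk' : 1 ≤ k := by omega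
      obtain ⟨mk, nk, rowk, colk⟩ := ih hk'
      set L : X → X → ENNReal := fun x y => ∫⁻ z, ENNReal.ofReal (P (x, z)) * ENNReal.ofReal (Pn k (z, y)) ∂μ with hL
      have hmig : Measurable (fun q : (X × X) × X => ENNReal.ofReal (P (q.1.1, q.2)) * ENNReal.ofReal (Pn k (q.2, q.1.2))) := by
        apply Measurable.mul (f := fun q : (X × X) × X => ENNReal.ofReal (P (q.1.1, q.2))) (g := fun q : (X × X) × X => ENNReal.ofReal (Pn k (q.2, q.1.2)))
        · exact ENNReal.measurable_ofReal.comp (hPmeas.comp ((measurable_fst.comp measurable_fst).prodMk measurable_snd))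
        · exact ENNReal.measurable_ofReal.comp (mk.comp (measurable_snd.prodMk (measurable_snd.comp measurable_fst)))
      have hmL : Measurable (fun p : X × X => L p.1 p.2) :=
        Measurable.lintegral_prod_right' (f := fun q : (X × X) × X => ENNReal.ofReal (P (q.1.1, q.2)) * ENNReal.ofReal (Pn k (q.2, q.1.2))) hmig
      -- pointwise relation when L finite
      have heq : ∀ x y, L x y ≠ ⊤ → ENNReal.ofReal (Pn (k+1) (x, y)) = L x y := by
        intro x y hfin
        have hmz : Measurable (fun z => P (x, z) * Pn k (z, y)) :=
          (hPmeas.comp measurable_prodMk_left).mul (mk.comp (measurable_prodMk_right))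
        have hnn : ∀ z, 0 ≤ P (x, z) * Pn k (z, y) := fun z => mul_nonneg (hPpos _) (nk _)
        have hofr : ∀ z, ENNReal.ofReal (P (x, z) * Pn k (z, y)) = ENNReal.ofReal (P (x, z)) * ENNReal.ofReal (Pn k (z, y)) :=
          fun z => ENNReal.ofReal_mul (hPpos _)
        have hle : ∫⁻ z, ENNReal.ofReal (P (x, z) * Pn k (z, y)) ∂μ = L x y := by
          rw [hL]; exact lintegral_congr fun z => hofr z
        have hint : Integrable (fun z => P (x, z) * Pn k (z, y)) μ := by
          refine ⟨hmz.aestronglyMeasurable, ?_⟩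
          rw [hasFiniteIntegral_iff_norm]
          simp_rw [Real.norm_eq_abs, abs_of_nonneg (hnn _)]
          rw [hle]; exact hfin.lt_top
        rw [hPrec, integral_eq_lintegral_of_nonneg_ae (Eventually.of_forall hnn) hmz.aestronglyMeasurable, hle,
          ENNReal.ofReal_toReal hfin]
      have hle' : ∀ x y, ENNReal.ofReal (Pn (k+1) (x, y)) ≤ L x y := by
        intro x y
        by_cases hfin : L x y = ⊤
        · rw [hfin]; exact le_top
        · exact (heq x y hfin).le
      -- row integral of L
      have hrowL : ∀ x, ∫⁻ y, L x y ∂μ = 1 := by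
        intro x
        have hswap : ∫⁻ y, L x y ∂μ = ∫⁻ z, ∫⁻ y, ENNReal.ofReal (P (x, z)) * ENNReal.ofReal (Pn k (z, y)) ∂μ ∂μ := by
          rw [hL]
          refine lintegral_lintegral_swap ?_
          exact ((ENNReal.measurable_ofReal.comp (hPmeas.comp ((measurable_const.prodMk measurable_snd)))).mul
            (ENNReal.measurable_ofReal.comp (mk.comp (measurable_snd.prodMk measurable_fst)))).aemeasurable
        rw [hswap]
        have : ∀ z, ∫⁻ y, ENNReal.ofReal (P (x, z)) * ENNReal.ofReal (Pn k (z, y)) ∂μ = ENNReal.ofReal (P (x, z)) := by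
          intro z
          rw [lintegral_const_mul _ (show Measurable fun y => ENNReal.ofReal (Pn k (z, y)) by fun_prop), rowk z, mul_one]
        simp_rw [this]; exact hProw x
      have hcolL : ∀ y, ∫⁻ x, L x y ∂μ = 1 := by
        intro y
        have hswap : ∫⁻ x, L x y ∂μ = ∫⁻ z, ∫⁻ x, ENNReal.ofReal (P (x, z)) * ENNReal.ofReal (Pn k (z, y)) ∂μ ∂μ := by
          rw [hL]
          refine lintegral_lintegral_swap ?_
          exact ((ENNReal.measurable_ofReal.comp (hPmeas.comp ((measurable_fst.prodMk measurable_snd)))).mul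
            (ENNReal.measurable_ofReal.comp (mk.comp (measurable_snd.prodMk measurable_const)))).aemeasurable
        rw [hswap]
        have : ∀ z, ∫⁻ x, ENNReal.ofReal (P (x, z)) * ENNReal.ofReal (Pn k (z, y)) ∂μ = ENNReal.ofReal (Pn k (z, y)) := by
          intro z
          rw [lintegral_mul_const _ (show Measurable fun x => ENNReal.ofReal (P (x, z)) by fun_prop), hPcol z, one_mul]
        simp_rw [this]; exact colk y
      refine ⟨?_, ?_, ?_, ?_⟩
      · have : Pn (k+1) = fun p : X × X => ∫ z, P (p.1, z) * Pn k (z, p.2) ∂μ := by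
          funext p; rw [show p = (p.1, p.2) by rfl]; exact hPrec k p.1 p.2
        rw [this]
        have hsm : StronglyMeasurable (fun q : (X × X) × X => P (q.1.1, q.2) * Pn k (q.2, q.1.2)) := by
          apply Measurable.stronglyMeasurable
          exact (hPmeas.comp ((measurable_fst.comp measurable_fst).prodMk measurable_snd)).mul
            (mk.comp (measurable_snd.prodMk (measurable_snd.comp measurable_fst)))
        exact (stronglyMeasurable_iff_measurable.mp (hsm.integral_prod_right'))
      · intro p
        rw [show p = (p.1, p.2) by rfl, hPrec]
        exact integral_nonneg fun z => mul_nonneg (hPpos _) (nk _)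
      · intro x
        have hae : ∀ᵐ y ∂μ, L x y < ⊤ := ae_lt_top (hmL.comp measurable_prodMk_left) (by rw [hrowL x]; exact ENNReal.one_ne_top)
        have : ∫⁻ y, ENNReal.ofReal (Pn (k+1) (x, y)) ∂μ = ∫⁻ y, L x y ∂μ := by
          refine lintegral_congr_ae ?_
          filter_upwards [hae] with y hy
          exact heq x y hy.ne
        rw [this, hrowL x]
      · intro y
        have hae : ∀ᵐ x ∂μ, L x y < ⊤ := ae_lt_top (hmL.comp (measurable_id.prodMk measurable_const)) (by rw [hcolL y]; exact ENNReal.one_ne_top)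
        have : ∫⁻ x, ENNReal.ofReal (Pn (k+1) (x, y)) ∂μ = ∫⁻ x, L x y ∂μ := by
          refine lintegral_congr_ae ?_
          filter_upwards [hae] with x hx
          exact heq x y hx.ne
        rw [this, hcolL y]

private lemma core_est {X : Type*} [MeasurableSpace X] (μ : Measure X) [IsProbabilityMeasure μ]
    (P : X × X → ℝ) (hPmeas : Measurable P) (hPpos : ∀ p, 0 ≤ P p)
    (hMarkov : ∀ x, ∫ y, P (x, y) ∂μ = 1)
    (hsymm : ∀ x y, P (x, y) = P (y, x))
    (Pn : ℕ → X × X → ℝ)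
    (hP1 : ∀ x y, Pn 1 (x, y) = P (x, y))
    (hPrec : ∀ (k : ℕ) (x y : X), Pn (k + 1) (x, y) = ∫ z, P (x, z) * Pn k (z, y) ∂μ)
    (n : ℕ) (hn : 1 ≤ n) (ε : ℝ) (hε : 0 < ε)
    (hDoeblin : ∀ x y, ε ≤ Pn n (x, y))
    (f : X → ℝ) (hfm : Measurable f) (hfi : Integrable f μ)
    (lam : ℝ) (hev : ∀ᵐ x ∂μ, lam * f x = ∫ y, P (x, y) * f y ∂μ)
    (hmean : ∫ x, f x ∂μ = 0) :
    f =ᵐ[μ] 0 ∨ |lam| ^ n ≤ 1 - ε := by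
  have pkg := kernel_pkg μ P hPmeas hPpos hMarkov hsymm Pn hP1 hPrec
  have hProw : ∀ x, ∫⁻ y, ENNReal.ofReal (P (x, y)) ∂μ = 1 := fun x =>
    lint_of_integral_one (fun y => hPpos _) ((hPmeas.comp (measurable_prodMk_left)).aestronglyMeasurable) (hMarkov x)
  have hPcol : ∀ y, ∫⁻ x, ENNReal.ofReal (P (x, y)) ∂μ = 1 := by
    intro y
    have : ∀ x, P (x, y) = P (y, x) := fun x => hsymm x y
    simp_rw [this]; exact hProw y
  set F : X → ENNReal := fun x => ENNReal.ofReal |f x| with hF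
  have hFm : Measurable F := hfm.abs.ennreal_ofReal
  set I : ENNReal := ∫⁻ x, F x ∂μ with hI
  have hIfin : I ≠ ⊤ := by
    have := hfi.hasFiniteIntegral
    rw [hasFiniteIntegral_iff_norm] at this
    simp_rw [Real.norm_eq_abs] at this
    exact this.ne
  -- a.e. finiteness of kernel-weighted integrals of |f|
  have hfinmul : ∀ k, 1 ≤ k → ∀ᵐ x ∂μ, ∫⁻ y, ENNReal.ofReal (Pn k (x, y)) * F y ∂μ < ⊤ := by
    intro k hk
    obtain ⟨mk, nk, rowk, colk⟩ := pkg k hk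
    have hmint : Measurable (fun x => ∫⁻ y, ENNReal.ofReal (Pn k (x, y)) * F y ∂μ) := by
      apply Measurable.lintegral_prod_right' (f := fun p : X × X => ENNReal.ofReal (Pn k p) * F p.2)
      exact (mk.ennreal_ofReal).mul (hFm.comp measurable_snd)
    apply ae_lt_top hmint
    have hswap : ∫⁻ x, ∫⁻ y, ENNReal.ofReal (Pn k (x, y)) * F y ∂μ ∂μ
        = ∫⁻ y, ∫⁻ x, ENNReal.ofReal (Pn k (x, y)) * F y ∂μ ∂μ := by
      apply lintegral_lintegral_swap
      exact ((mk.ennreal_ofReal).mul (hFm.comp measurable_snd)).aemeasurable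
    rw [hswap]
    have : ∀ y, ∫⁻ x, ENNReal.ofReal (Pn k (x, y)) * F y ∂μ = F y := by
      intro y
      rw [lintegral_mul_const _ (show Measurable fun x => ENNReal.ofReal (Pn k (x, y)) by fun_prop), colk y, one_mul]
    simp_rw [this]
    exact hIfin
  have hIntk : ∀ k, 1 ≤ k → ∀ᵐ x ∂μ, Integrable (fun y => Pn k (x, y) * f y) μ := by
    intro k hk
    obtain ⟨mk, nk, rowk, colk⟩ := pkg k hk
    filter_upwards [hfinmul k hk] with x hx
    refine ⟨((mk.comp measurable_prodMk_left).mul hfm).aestronglyMeasurable, ?_⟩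
    rw [hasFiniteIntegral_iff_norm]
    have : ∀ y, ENNReal.ofReal ‖Pn k (x, y) * f y‖ = ENNReal.ofReal (Pn k (x, y)) * F y := by
      intro y
      rw [Real.norm_eq_abs, abs_mul, abs_of_nonneg (nk _), ENNReal.ofReal_mul (nk _)]
    simp_rw [this]
    exact hx
  -- iteration of the eigen-equation
  have hiter : ∀ k, 1 ≤ k → ∀ᵐ x ∂μ, lam ^ k * f x = ∫ y, Pn k (x, y) * f y ∂μ := by
    intro k hk
    induction k with
    | zero => omega
    | succ k ih =>
      rcases Nat.eq_or_lt_of_le hk with hk1 | hk2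
      · have hk0 : k = 0 := by omega
        subst hk0
        filter_upwards [hev] with x hx
        rw [pow_one, hx]
        exact integral_congr_ae (Eventually.of_forall fun y => by
          show P (x, y) * f y = Pn 1 (x, y) * f y
          rw [hP1])
      · have hk' : 1 ≤ k := by omega
        obtain ⟨mk, nk, rowk, colk⟩ := pkg k hk'
        have IH := ih hk'
        -- Fubini integrability for a.e. x
        set c : X → ENNReal := fun y => ∫⁻ z, ENNReal.ofReal (Pn k (y, z)) * F z ∂μ with hc
        have hcm : Measurable c := by
          apply Measurable.lintegral_prod_right' (f := fun p : X × X => ENNReal.ofReal (Pn k p) * F p.2)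
          exact (mk.ennreal_ofReal).mul (hFm.comp measurable_snd)
        have hctot : ∫⁻ y, c y ∂μ = I := by
          rw [hc]
          have hswap : ∫⁻ y, ∫⁻ z, ENNReal.ofReal (Pn k (y, z)) * F z ∂μ ∂μ
              = ∫⁻ z, ∫⁻ y, ENNReal.ofReal (Pn k (y, z)) * F z ∂μ ∂μ :=
            lintegral_lintegral_swap ((mk.ennreal_ofReal).mul (hFm.comp measurable_snd)).aemeasurable
          rw [hswap]
          have : ∀ z, ∫⁻ y, ENNReal.ofReal (Pn k (y, z)) * F z ∂μ = F z := by
            intro z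
            rw [lintegral_mul_const _ (show Measurable fun y => ENNReal.ofReal (Pn k (y, z)) by fun_prop), colk z, one_mul]
          simp_rw [this]
          rfl
        have hD : ∀ᵐ x ∂μ, ∫⁻ y, ENNReal.ofReal (P (x, y)) * c y ∂μ < ⊤ := by
          have hm2 : Measurable (fun x => ∫⁻ y, ENNReal.ofReal (P (x, y)) * c y ∂μ) := by
            apply Measurable.lintegral_prod_right' (f := fun p : X × X => ENNReal.ofReal (P p) * c p.2)
            exact (hPmeas.ennreal_ofReal).mul (hcm.comp measurable_snd)
          apply ae_lt_top hm2
          have hswap : ∫⁻ x, ∫⁻ y, ENNReal.ofReal (P (x, y)) * c y ∂μ ∂μ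
              = ∫⁻ y, ∫⁻ x, ENNReal.ofReal (P (x, y)) * c y ∂μ ∂μ :=
            lintegral_lintegral_swap ((hPmeas.ennreal_ofReal).mul (hcm.comp measurable_snd)).aemeasurable
          rw [hswap]
          have : ∀ y, ∫⁻ x, ENNReal.ofReal (P (x, y)) * c y ∂μ = c y := by
            intro y
            rw [lintegral_mul_const _ (show Measurable fun x => ENNReal.ofReal (P (x, y)) by fun_prop), hPcol y, one_mul]
          simp_rw [this, hctot]
          exact hIfin
        have hfub : ∀ᵐ x ∂μ, Integrable (Function.uncurry fun y z => P (x, y) * (Pn k (y, z) * f z)) (μ.prod μ) := by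
          filter_upwards [hD] with x hx
          constructor
          · apply Measurable.aestronglyMeasurable
            have : Measurable (fun p : X × X => P (x, p.1) * (Pn k p * f p.2)) := by fun_prop
            exact this
          · rw [hasFiniteIntegral_iff_norm]
            have hmeq : ∀ p : X × X, ENNReal.ofReal ‖P (x, p.1) * (Pn k p * f p.2)‖
                = ENNReal.ofReal (P (x, p.1)) * (ENNReal.ofReal (Pn k p) * F p.2) := by
              intro p
              rw [Real.norm_eq_abs, abs_mul, abs_mul, abs_of_nonneg (hPpos _), abs_of_nonneg (nk _),
                ENNReal.ofReal_mul (hPpos _), ENNReal.ofReal_mul (nk _)]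
            calc ∫⁻ p : X × X, ENNReal.ofReal ‖Function.uncurry (fun y z => P (x, y) * (Pn k (y, z) * f z)) p‖ ∂(μ.prod μ)
                = ∫⁻ p : X × X, ENNReal.ofReal (P (x, p.1)) * (ENNReal.ofReal (Pn k p) * F p.2) ∂(μ.prod μ) := by
                  refine lintegral_congr fun p => ?_
                  rw [show Function.uncurry (fun y z => P (x, y) * (Pn k (y, z) * f z)) p = P (x, p.1) * (Pn k p * f p.2) by rfl]
                  exact hmeq p
              _ = ∫⁻ y, ∫⁻ z, ENNReal.ofReal (P (x, y)) * (ENNReal.ofReal (Pn k (y, z)) * F z) ∂μ ∂μ :=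
                  lintegral_prod _ (((hPmeas.comp (measurable_const.prodMk measurable_fst)).ennreal_ofReal).mul
                    ((mk.ennreal_ofReal).mul (hFm.comp measurable_snd))).aemeasurable
              _ = ∫⁻ y, ENNReal.ofReal (P (x, y)) * c y ∂μ := by
                  refine lintegral_congr fun y => ?_
                  rw [lintegral_const_mul _ (show Measurable fun z => ENNReal.ofReal (Pn k (y, z)) * F z by fun_prop)]
              _ < ⊤ := hx
        filter_upwards [hev, hfub] with x hx hfubx
        have step1 : lam ^ (k + 1) * f x = lam ^ k * ∫ y, P (x, y) * f y ∂μ := by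
          rw [← hx]; ring
        rw [step1, ← integral_const_mul]
        have step2 : ∫ y, lam ^ k * (P (x, y) * f y) ∂μ = ∫ y, P (x, y) * (lam ^ k * f y) ∂μ :=
          integral_congr_ae (Eventually.of_forall fun y => by ring)
        rw [step2]
        have step3 : ∫ y, P (x, y) * (lam ^ k * f y) ∂μ = ∫ y, P (x, y) * ∫ z, Pn k (y, z) * f z ∂μ ∂μ := by
          refine integral_congr_ae ?_
          filter_upwards [IH] with y hy
          rw [hy]
        rw [step3]
        have step4 : ∫ y, P (x, y) * ∫ z, Pn k (y, z) * f z ∂μ ∂μ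
            = ∫ y, ∫ z, P (x, y) * (Pn k (y, z) * f z) ∂μ ∂μ :=
          integral_congr_ae (Eventually.of_forall fun y => (integral_const_mul _ _).symm)
        rw [step4, integral_integral_swap hfubx]
        refine integral_congr_ae (Eventually.of_forall fun z => ?_)
        show ∫ y, P (x, y) * (Pn k (y, z) * f z) ∂μ = Pn (k + 1) (x, z) * f z
        have : ∫ y, P (x, y) * (Pn k (y, z) * f z) ∂μ = (∫ y, P (x, y) * Pn k (y, z) ∂μ) * f z := by
          rw [← integral_mul_const]
          exact integral_congr_ae (Eventually.of_forall fun y => by ring)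
        rw [this, ← hPrec k x z]
  -- endgame
  obtain ⟨mn, nn, rown, coln⟩ := pkg n hn
  rcases isEmpty_or_nonempty X with hX | hX
  · left
    have h0 : μ Set.univ = 1 := measure_univ
    rw [Set.univ_eq_empty_iff.mpr hX, measure_empty] at h0
    exact absurd h0 (by simp)
  obtain ⟨x0⟩ := hX
  have hε1 : ε ≤ 1 := by
    rw [← ENNReal.ofReal_le_one]
    calc ENNReal.ofReal ε = ∫⁻ y, ENNReal.ofReal ε ∂μ := by rw [lintegral_const, measure_univ, mul_one]
      _ ≤ ∫⁻ y, ENNReal.ofReal (Pn n (x0, y)) ∂μ :=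
        lintegral_mono fun y => ENNReal.ofReal_le_ofReal (hDoeblin x0 y)
      _ = 1 := rown x0
  by_cases hI0 : I = 0
  · left
    have := (lintegral_eq_zero_iff hFm).mp hI0
    filter_upwards [this] with x hx
    have : |f x| = 0 := by
      have := hx
      simp only [hF, Pi.zero_apply, ENNReal.ofReal_eq_zero] at this
      exact le_antisymm this (abs_nonneg _)
    simpa [abs_eq_zero] using this
  right
  set G : X → ENNReal := fun x => ∫⁻ y, (ENNReal.ofReal (Pn n (x, y)) - ENNReal.ofReal ε) * F y ∂μ with hG
  have hGle : ∀ x, G x ≤ ∫⁻ y, ENNReal.ofReal (Pn n (x, y)) * F y ∂μ :=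
    fun x => lintegral_mono fun y => mul_le_mul_left tsub_le_self _
  -- a.e. split identity
  have hsplit : ∀ᵐ x ∂μ, lam ^ n * f x = ∫ y, (Pn n (x, y) - ε) * f y ∂μ := by
    filter_upwards [hiter n hn, hIntk n hn] with x hx hintx
    rw [hx]
    have h1 : ∫ y, Pn n (x, y) * f y ∂μ = ∫ y, ((Pn n (x, y) - ε) * f y + ε * f y) ∂μ :=
      integral_congr_ae (Eventually.of_forall fun y => by ring)
    have hint2 : Integrable (fun y => (Pn n (x, y) - ε) * f y) μ := by
      have : Integrable (fun y => Pn n (x, y) * f y - ε * f y) μ := hintx.sub (hfi.const_mul ε)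
      exact this.congr (Eventually.of_forall fun y => by ring)
    rw [h1, integral_add hint2 (hfi.const_mul ε), integral_const_mul, hmean, mul_zero, add_zero]
  have hae : ∀ᵐ x ∂μ, ENNReal.ofReal (|lam| ^ n) * F x ≤ G x := by
    filter_upwards [hsplit, hfinmul n hn, hIntk n hn] with x hx hfinx hintx
    have hGfin : G x ≠ ⊤ := (lt_of_le_of_lt (hGle x) hfinx).ne
    have habs : |lam ^ n * f x| ≤ ∫ y, (Pn n (x, y) - ε) * |f y| ∂μ := by
      rw [hx]
      calc |∫ y, (Pn n (x, y) - ε) * f y ∂μ| = ‖∫ y, (Pn n (x, y) - ε) * f y ∂μ‖ :=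
            (Real.norm_eq_abs _).symm
        _ ≤ ∫ y, ‖(Pn n (x, y) - ε) * f y‖ ∂μ := norm_integral_le_integral_norm _
        _ = ∫ y, (Pn n (x, y) - ε) * |f y| ∂μ := by
            refine integral_congr_ae (Eventually.of_forall fun y => ?_)
            show ‖(Pn n (x, y) - ε) * f y‖ = (Pn n (x, y) - ε) * |f y|
            rw [Real.norm_eq_abs, abs_mul, abs_of_nonneg (sub_nonneg.mpr (hDoeblin x y))]
    have heqlint : ∫ y, (Pn n (x, y) - ε) * |f y| ∂μ = (G x).toReal := by
      rw [integral_eq_lintegral_of_nonneg_ae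
        (Eventually.of_forall fun y => mul_nonneg (sub_nonneg.mpr (hDoeblin x y)) (abs_nonneg _))
        (((mn.comp measurable_prodMk_left).sub measurable_const).mul hfm.abs).aestronglyMeasurable]
      congr 1
      refine lintegral_congr fun y => ?_
      rw [ENNReal.ofReal_mul (sub_nonneg.mpr (hDoeblin x y)), ENNReal.ofReal_sub _ hε.le]
    have : ENNReal.ofReal |lam ^ n * f x| ≤ G x := by
      calc ENNReal.ofReal |lam ^ n * f x| ≤ ENNReal.ofReal ((G x).toReal) := by
            apply ENNReal.ofReal_le_ofReal
            rw [← heqlint]; exact habs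
        _ = G x := ENNReal.ofReal_toReal hGfin
    calc ENNReal.ofReal (|lam| ^ n) * F x = ENNReal.ofReal (|lam| ^ n * |f x|) := by
          rw [ENNReal.ofReal_mul (pow_nonneg (abs_nonneg _) _)]
      _ = ENNReal.ofReal |lam ^ n * f x| := by rw [abs_mul, abs_pow]
      _ ≤ G x := this
  have hkey : ENNReal.ofReal (|lam| ^ n) * I ≤ (1 - ENNReal.ofReal ε) * I := by
    have hL : ∫⁻ x, ENNReal.ofReal (|lam| ^ n) * F x ∂μ = ENNReal.ofReal (|lam| ^ n) * I := by
      rw [lintegral_const_mul _ hFm]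
    have hR : ∫⁻ x, G x ∂μ = (1 - ENNReal.ofReal ε) * I := by
      rw [hG]
      have hswap : ∫⁻ x, ∫⁻ y, (ENNReal.ofReal (Pn n (x, y)) - ENNReal.ofReal ε) * F y ∂μ ∂μ
          = ∫⁻ y, ∫⁻ x, (ENNReal.ofReal (Pn n (x, y)) - ENNReal.ofReal ε) * F y ∂μ ∂μ :=
        lintegral_lintegral_swap (((mn.ennreal_ofReal).sub measurable_const).mul (hFm.comp measurable_snd)).aemeasurable
      rw [hswap]
      have hin : ∀ y, ∫⁻ x, (ENNReal.ofReal (Pn n (x, y)) - ENNReal.ofReal ε) * F y ∂μ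
          = (1 - ENNReal.ofReal ε) * F y := by
        intro y
        rw [lintegral_mul_const _ (show Measurable fun x => ENNReal.ofReal (Pn n (x, y)) - ENNReal.ofReal ε by fun_prop)]
        congr 1
        rw [lintegral_sub measurable_const (by rw [lintegral_const, measure_univ, mul_one]; exact ENNReal.ofReal_ne_top)
          (Eventually.of_forall fun x => ENNReal.ofReal_le_ofReal (hDoeblin x y)),
          coln y, lintegral_const, measure_univ, mul_one]
      simp_rw [hin]
      rw [lintegral_const_mul _ hFm]
    calc ENNReal.ofReal (|lam| ^ n) * I = ∫⁻ x, ENNReal.ofReal (|lam| ^ n) * F x ∂μ := hL.symm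
      _ ≤ ∫⁻ x, G x ∂μ := lintegral_mono_ae hae
      _ = (1 - ENNReal.ofReal ε) * I := hR
  have hfin : ENNReal.ofReal (|lam| ^ n) ≤ 1 - ENNReal.ofReal ε :=
    (ENNReal.mul_le_mul_iff_left hI0 hIfin).mp hkey
  have : (1 : ENNReal) - ENNReal.ofReal ε = ENNReal.ofReal (1 - ε) := by
    rw [ENNReal.ofReal_sub _ hε.le, ENNReal.ofReal_one]
  rw [this] at hfin
  exact (ENNReal.ofReal_le_ofReal_iff (by linarith)).mp hfin

/-- Doeblin condition for a symmetric compact Markov operator implies the eigenvalue 1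
is simple (eigenspace = constants) and all other eigenvalues have modulus < 1. -/
theorem stmt_7 {X : Type*} [MeasurableSpace X]
    (μ : Measure X) [IsProbabilityMeasure μ]
    (P : X × X → ℝ) (hPmeas : Measurable P) (hPpos : ∀ p, 0 ≤ P p)
    (hMarkov : ∀ x, ∫ y, P (x, y) ∂μ = 1)
    (hsymm : ∀ x y, P (x, y) = P (y, x))
    -- the n-step kernels
    (Pn : ℕ → X × X → ℝ)
    (hP1 : ∀ x y, Pn 1 (x, y) = P (x, y))
    (hPrec : ∀ (k : ℕ) (x y : X), Pn (k + 1) (x, y) = ∫ z, P (x, z) * Pn k (z, y) ∂μ)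
    -- Doeblin minorization
    (n : ℕ) (hn : 1 ≤ n) (ε : ℝ) (hε : 0 < ε)
    (hDoeblin : ∀ x y, ε ≤ Pn n (x, y))
    -- the associated operator on L²(μ)
    (A : Lp ℝ 2 μ →L[ℝ] Lp ℝ 2 μ)
    (hA : ∀ ψ : Lp ℝ 2 μ, (A ψ : X → ℝ) =ᵐ[μ] fun x => ∫ y, P (x, y) * ψ y ∂μ)
    (hAcompact : IsCompactOperator A)
    (hAselfadj : ∀ f g : Lp ℝ 2 μ, inner ℝ (A f) g = (inner ℝ f (A g) : ℝ)) :
    (∀ ψ : Lp ℝ 2 μ, A ψ = ψ → ∃ c : ℝ, (ψ : X → ℝ) =ᵐ[μ] fun _ => c) ∧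
    (∀ lam : ℝ, lam ≠ 1 → (∃ ψ : Lp ℝ 2 μ, ψ ≠ 0 ∧ A ψ = lam • ψ) → |lam| < 1) := by
  have hone_mem : MemLp (fun _ : X => (1:ℝ)) 2 μ := memLp_const 1
  set one : Lp ℝ 2 μ := hone_mem.toLp _ with hone
  have hone_coe : (one : X → ℝ) =ᵐ[μ] fun _ => 1 := hone_mem.coeFn_toLp
  have hAone : A one = one := by
    apply Lp.ext
    have h2 : ∀ x, ∫ y, P (x, y) * (one : X → ℝ) y ∂μ = 1 := by
      intro x
      have : ∫ y, P (x, y) * (one : X → ℝ) y ∂μ = ∫ y, P (x, y) * 1 ∂μ :=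
        integral_congr_ae (hone_coe.mono fun y hy => by simp only [hy])
      rw [this]
      simp_rw [mul_one]
      exact hMarkov x
    calc (A one : X → ℝ) =ᵐ[μ] fun x => ∫ y, P (x, y) * (one : X → ℝ) y ∂μ := hA one
      _ = fun _ => (1:ℝ) := funext h2
      _ =ᵐ[μ] (one : X → ℝ) := hone_coe.symm
  -- main a.e. alternative for eigenfunctions with mean zero
  have main : ∀ (ψ : Lp ℝ 2 μ) (lam : ℝ), A ψ = lam • ψ → ∫ x, (ψ : X → ℝ) x ∂μ = 0 →
      ((ψ : X → ℝ) =ᵐ[μ] 0 ∨ |lam| ^ n ≤ 1 - ε) := by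
    intro ψ lam hAψ hmean0
    have hsm := Lp.aestronglyMeasurable ψ
    set f := hsm.mk (ψ : X → ℝ) with hf
    have hfmeas : Measurable f := stronglyMeasurable_iff_measurable.mp hsm.stronglyMeasurable_mk
    have hae : (ψ : X → ℝ) =ᵐ[μ] f := hsm.ae_eq_mk
    have hfi : Integrable f μ := ((Lp.memLp ψ).integrable one_le_two).congr hae
    have hev : ∀ᵐ x ∂μ, lam * f x = ∫ y, P (x, y) * f y ∂μ := by
      have h1 := hA ψ
      have h3 : (A ψ : X → ℝ) =ᵐ[μ] fun x => lam * f x := by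
        rw [hAψ]
        exact (Lp.coeFn_smul lam ψ).trans (hae.mono fun x hx => by simp [hx])
      have h4 : ∀ x, ∫ y, P (x, y) * (ψ : X → ℝ) y ∂μ = ∫ y, P (x, y) * f y ∂μ := fun x =>
        integral_congr_ae (hae.mono fun y hy => by simp only [hy])
      filter_upwards [h1, h3] with x hx1 hx3
      rw [← hx3, hx1, h4 x]
    have hmean : ∫ x, f x ∂μ = 0 := by rw [← integral_congr_ae hae]; exact hmean0
    rcases core_est μ P hPmeas hPpos hMarkov hsymm Pn hP1 hPrec n hn ε hε hDoeblin f hfmeas hfi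
      lam hev hmean with h | h
    · left
      exact hae.trans h
    · right; exact h
  have hinner : ∀ ψ : Lp ℝ 2 μ, (inner ℝ ψ one : ℝ) = ∫ x, (ψ : X → ℝ) x ∂μ := by
    intro ψ
    rw [L2.inner_def]
    refine integral_congr_ae ?_
    filter_upwards [hone_coe] with x hx
    rw [hx]
    simp [RCLike.inner_apply]
  constructor
  · -- eigenvalue 1 has constant eigenfunctions
    intro ψ hψ
    set c : ℝ := ∫ x, (ψ : X → ℝ) x ∂μ with hc
    set φ : Lp ℝ 2 μ := ψ - c • one with hφ
    have hφeig : A φ = (1:ℝ) • φ := by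
      rw [one_smul, hφ, map_sub, A.map_smul, hAone, hψ]
    have hφcoe : (φ : X → ℝ) =ᵐ[μ] fun x => (ψ : X → ℝ) x - c := by
      filter_upwards [Lp.coeFn_sub ψ (c • one), Lp.coeFn_smul c one, hone_coe] with x hx1 hx2 hx3
      rw [hφ]
      calc ((ψ - c • one : Lp ℝ 2 μ) : X → ℝ) x = (ψ : X → ℝ) x - ((c • one : Lp ℝ 2 μ) : X → ℝ) x := hx1
        _ = (ψ : X → ℝ) x - c * (one : X → ℝ) x := by rw [hx2]; rfl
        _ = (ψ : X → ℝ) x - c := by rw [hx3]; ring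
    have hφmean : ∫ x, (φ : X → ℝ) x ∂μ = 0 := by
      rw [integral_congr_ae hφcoe,
        integral_sub ((Lp.memLp ψ).integrable one_le_two) (integrable_const c),
        integral_const, probReal_univ]
      simp [hc]
    rcases main φ 1 hφeig hφmean with h | h
    · refine ⟨c, ?_⟩
      filter_upwards [hφcoe, h] with x hx1 hx2
      have : (ψ : X → ℝ) x - c = 0 := by rw [← hx1]; exact hx2
      show (ψ : X → ℝ) x = c
      linarith
    · exfalso
      rw [abs_one, one_pow] at h
      linarith
  · -- other eigenvalues
    rintro lam hlam ⟨ψ, hψne, hψeig⟩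
    have h0 : (inner ℝ ψ one : ℝ) = 0 := by
      have h1 : (inner ℝ (A ψ) one : ℝ) = inner ℝ ψ one := by rw [hAselfadj, hAone]
      rw [hψeig, real_inner_smul_left] at h1
      have h2 : (lam - 1) * (inner ℝ ψ one : ℝ) = 0 := by linarith
      rcases mul_eq_zero.mp h2 with h3 | h3
      · exact absurd (by linarith : lam = 1) hlam
      · exact h3
    have hmean0 : ∫ x, (ψ : X → ℝ) x ∂μ = 0 := by rw [← hinner ψ]; exact h0
    rcases main ψ lam hψeig hmean0 with h | h
    · exact absurd (Lp.ext (h.trans (Lp.coeFn_zero ℝ 2 μ).symm)) hψne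
    · by_contra hcon
      push_neg at hcon
      have h1 : (1:ℝ) ≤ |lam| ^ n := by
        calc (1:ℝ) = 1 ^ n := (one_pow n).symm
          _ ≤ |lam| ^ n := pow_le_pow_left₀ zero_le_one hcon n
      linarith
end

section
/- For constants C < ∞ and A > 0, the integral ∬∬_{0<s_1<s_2<s_3<s_4<T} min(e^{−A(s_2−s_1)}, e^{−A(s_4−s_3)}) ds_1 ds_2 ds_3 ds_4 is at most C_A T² for all T ≥ 1, where C_A depends only on A. -/
open MeasureTheory Filter Topology

/-- Basic exponential integral bound. -/
lemma aux_exp_int (c b : ℝ) (hc : 0 < c) (hb : 0 ≤ b) :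
    ∫ x in (0:ℝ)..b, Real.exp (-c * (b - x)) ≤ 1 / c := by
  have h1 : ∀ x : ℝ, Real.exp (-c * (b - x)) = Real.exp (c * x) * Real.exp (-c * b) := by
    intro x; rw [← Real.exp_add]; ring_nf
  simp_rw [h1]
  rw [intervalIntegral.integral_mul_const, intervalIntegral.integral_comp_mul_left
      (fun x => Real.exp x) (ne_of_gt hc)]
  rw [integral_exp, smul_eq_mul, mul_zero, Real.exp_zero]
  have h5 : (Real.exp (c * b) - 1) * Real.exp (-c * b) = 1 - Real.exp (-c * b) := by
    rw [sub_mul, one_mul, neg_mul, ← Real.exp_add, add_neg_cancel, Real.exp_zero]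
  rw [mul_assoc, h5, one_div]
  nlinarith [Real.exp_pos (-c * b), inv_pos.mpr hc]

/-- The integral of `min(e^{-A(s₂-s₁)}, e^{-A(s₄-s₃)})` over the 4-simplex
`{0 < s₁ < s₂ < s₃ < s₄ < T}` is at most `C_A · T²` for all `T ≥ 1`. -/
theorem stmt_12 (A : ℝ) (hA : 0 < A) :
    ∃ C_A : ℝ, 0 < C_A ∧ ∀ T : ℝ, 1 ≤ T →
      (∫ s₄ in (0:ℝ)..T, ∫ s₃ in (0:ℝ)..s₄, ∫ s₂ in (0:ℝ)..s₃, ∫ s₁ in (0:ℝ)..s₂,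
        min (Real.exp (-A * (s₂ - s₁))) (Real.exp (-A * (s₄ - s₃)))) ≤ C_A * T ^ 2 := by
  have hA2 : 0 < A / 2 := by linarith
  refine ⟨4 / A ^ 2, by positivity, fun T hT => ?_⟩
  have hT0 : (0:ℝ) ≤ T := by linarith
  -- notation
  set f : ℝ → ℝ → ℝ → ℝ → ℝ := fun s₄ s₃ s₂ s₁ =>
    min (Real.exp (-A * (s₂ - s₁))) (Real.exp (-A * (s₄ - s₃))) with hf
  have hf_nonneg : ∀ s₄ s₃ s₂ s₁, 0 ≤ f s₄ s₃ s₂ s₁ := fun _ _ _ _ =>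
    le_min (Real.exp_pos _).le (Real.exp_pos _).le
  -- pointwise bound: min ≤ geometric mean
  have hpt : ∀ s₄ s₃ s₂ s₁ : ℝ, f s₄ s₃ s₂ s₁ ≤
      Real.exp (-(A/2) * (s₂ - s₁)) * Real.exp (-(A/2) * (s₄ - s₃)) := by
    intro s₄ s₃ s₂ s₁
    rw [← Real.exp_add, hf]
    rcases le_total (s₂ - s₁) (s₄ - s₃) with h | h
    · apply min_le_of_right_le
      apply Real.exp_le_exp.2; nlinarith
    · apply min_le_of_left_le
      apply Real.exp_le_exp.2; nlinarith
  -- Step A: innermost integral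
  have stepA : ∀ s₄ s₃ s₂ : ℝ, 0 ≤ s₂ →
      (∫ s₁ in (0:ℝ)..s₂, f s₄ s₃ s₂ s₁) ≤ (2 / A) * Real.exp (-(A/2) * (s₄ - s₃)) := by
    intro s₄ s₃ s₂ hs₂
    have h1 : (∫ s₁ in (0:ℝ)..s₂, f s₄ s₃ s₂ s₁) ≤
        ∫ s₁ in (0:ℝ)..s₂, Real.exp (-(A/2) * (s₂ - s₁)) * Real.exp (-(A/2) * (s₄ - s₃)) := by
      apply intervalIntegral.integral_mono_on hs₂
      · exact ((by fun_prop : Continuous fun s₁ : ℝ => f s₄ s₃ s₂ s₁)).intervalIntegrable _ _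
      · exact ((by fun_prop : Continuous fun s₁ : ℝ =>
          Real.exp (-(A/2) * (s₂ - s₁)) * Real.exp (-(A/2) * (s₄ - s₃)))).intervalIntegrable _ _
      · intro x _; exact hpt _ _ _ _
    rw [intervalIntegral.integral_mul_const] at h1
    refine h1.trans ?_
    have h2 := aux_exp_int (A/2) s₂ hA2 hs₂
    have h3 : (1 : ℝ) / (A/2) = 2 / A := by field_simp
    rw [h3] at h2
    exact mul_le_mul_of_nonneg_right h2 (Real.exp_pos _).le
  -- nonnegativity of level-1 integral
  have hI1_nonneg : ∀ s₄ s₃ s₂ : ℝ, 0 ≤ s₂ → 0 ≤ ∫ s₁ in (0:ℝ)..s₂, f s₄ s₃ s₂ s₁ := by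
    intro s₄ s₃ s₂ hs₂
    exact intervalIntegral.integral_nonneg hs₂ (fun u _ => hf_nonneg _ _ _ _)
  -- Step B: level-2 bound via constant norm bound
  have stepB : ∀ s₄ s₃ : ℝ, 0 ≤ s₃ → s₃ ≤ T →
      (∫ s₂ in (0:ℝ)..s₃, ∫ s₁ in (0:ℝ)..s₂, f s₄ s₃ s₂ s₁) ≤
        T * (2 / A) * Real.exp (-(A/2) * (s₄ - s₃)) := by
    intro s₄ s₃ hs₃ hs₃T
    have key : ‖∫ s₂ in (0:ℝ)..s₃, ∫ s₁ in (0:ℝ)..s₂, f s₄ s₃ s₂ s₁‖ ≤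
        ((2 / A) * Real.exp (-(A/2) * (s₄ - s₃))) * |s₃ - 0| := by
      apply intervalIntegral.norm_integral_le_of_norm_le_const
      intro s₂ hs₂
      rw [Set.uIoc_of_le hs₃] at hs₂
      have hs₂0 : 0 ≤ s₂ := le_of_lt hs₂.1
      rw [Real.norm_eq_abs, abs_of_nonneg (hI1_nonneg _ _ _ hs₂0)]
      exact stepA _ _ _ hs₂0
    have := (Real.le_norm_self _).trans key
    rw [sub_zero, abs_of_nonneg hs₃] at this
    refine this.trans ?_
    have he : 0 ≤ (2 / A) * Real.exp (-(A/2) * (s₄ - s₃)) := by positivity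
    calc (2 / A) * Real.exp (-(A/2) * (s₄ - s₃)) * s₃
        ≤ (2 / A) * Real.exp (-(A/2) * (s₄ - s₃)) * T := by
          exact mul_le_mul_of_nonneg_left hs₃T he
      _ = T * (2 / A) * Real.exp (-(A/2) * (s₄ - s₃)) := by ring
  -- continuity of level-2 integral in s₃ (s₄ fixed)
  have hcont : ∀ s₄ : ℝ, Continuous fun s₃ =>
      ∫ s₂ in (0:ℝ)..s₃, ∫ s₁ in (0:ℝ)..s₂, f s₄ s₃ s₂ s₁ := by
    intro s₄
    apply intervalIntegral.continuous_parametric_intervalIntegral_of_continuous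
      (f := fun s₃ s₂ => ∫ s₁ in (0:ℝ)..s₂, f s₄ s₃ s₂ s₁) (s := fun x => x) ?_ continuous_id
    apply intervalIntegral.continuous_parametric_intervalIntegral_of_continuous
      (f := fun p : ℝ × ℝ => fun s₁ => f s₄ p.1 p.2 s₁) (s := fun p : ℝ × ℝ => p.2)
    · show Continuous fun q : (ℝ × ℝ) × ℝ =>
        min (Real.exp (-A * (q.1.2 - q.2))) (Real.exp (-A * (s₄ - q.1.1)))
      fun_prop
    · exact continuous_snd
  -- Step C: level-3 bound
  have stepC : ∀ s₄ : ℝ, 0 ≤ s₄ → s₄ ≤ T →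
      (∫ s₃ in (0:ℝ)..s₄, ∫ s₂ in (0:ℝ)..s₃, ∫ s₁ in (0:ℝ)..s₂, f s₄ s₃ s₂ s₁) ≤
        4 * T / A ^ 2 := by
    intro s₄ hs₄ hs₄T
    have h1 : (∫ s₃ in (0:ℝ)..s₄, ∫ s₂ in (0:ℝ)..s₃, ∫ s₁ in (0:ℝ)..s₂, f s₄ s₃ s₂ s₁) ≤
        ∫ s₃ in (0:ℝ)..s₄, T * (2 / A) * Real.exp (-(A/2) * (s₄ - s₃)) := by
      apply intervalIntegral.integral_mono_on hs₄
      · exact (hcont s₄).intervalIntegrable _ _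
      · exact (by fun_prop : Continuous fun s₃ : ℝ =>
          T * (2 / A) * Real.exp (-(A/2) * (s₄ - s₃))).intervalIntegrable _ _
      · intro s₃ hs₃; exact stepB _ _ hs₃.1 (hs₃.2.trans hs₄T)
    refine h1.trans ?_
    have h2 : (∫ s₃ in (0:ℝ)..s₄, T * (2 / A) * Real.exp (-(A/2) * (s₄ - s₃)))
        = T * (2 / A) * ∫ s₃ in (0:ℝ)..s₄, Real.exp (-(A/2) * (s₄ - s₃)) := by
      rw [← intervalIntegral.integral_const_mul]
    rw [h2]
    have h3 := aux_exp_int (A/2) s₄ hA2 hs₄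
    have h4 : (1 : ℝ) / (A/2) = 2 / A := by field_simp
    rw [h4] at h3
    have : T * (2 / A) * (∫ s₃ in (0:ℝ)..s₄, Real.exp (-(A/2) * (s₄ - s₃)))
        ≤ T * (2 / A) * (2 / A) := by
      apply mul_le_mul_of_nonneg_left h3 (by positivity)
    refine this.trans_eq ?_
    field_simp; ring
  -- nonnegativity of level-3 integral
  have hI3_nonneg : ∀ s₄ : ℝ, 0 ≤ s₄ →
      0 ≤ ∫ s₃ in (0:ℝ)..s₄, ∫ s₂ in (0:ℝ)..s₃, ∫ s₁ in (0:ℝ)..s₂, f s₄ s₃ s₂ s₁ := by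
    intro s₄ hs₄
    apply intervalIntegral.integral_nonneg hs₄
    intro s₃ hs₃
    apply intervalIntegral.integral_nonneg hs₃.1
    intro s₂ hs₂
    exact hI1_nonneg _ _ _ hs₂.1
  -- final step
  have key : ‖∫ s₄ in (0:ℝ)..T, ∫ s₃ in (0:ℝ)..s₄, ∫ s₂ in (0:ℝ)..s₃,
      ∫ s₁ in (0:ℝ)..s₂, f s₄ s₃ s₂ s₁‖ ≤ (4 * T / A ^ 2) * |T - 0| := by
    apply intervalIntegral.norm_integral_le_of_norm_le_const
    intro s₄ hs₄
    rw [Set.uIoc_of_le hT0] at hs₄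
    rw [Real.norm_eq_abs, abs_of_nonneg (hI3_nonneg _ hs₄.1.le)]
    exact stepC _ hs₄.1.le hs₄.2
  have := (Real.le_norm_self _).trans key
  rw [sub_zero, abs_of_nonneg hT0] at this
  refine this.trans_eq ?_
  field_simp
end
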